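/- arXiv:1302.0709 — 4 statements merged into one kernel-verified Lean document; each statement's English description precedes it below -/
import Mathlib

section
/- For every c ≥ 1, the entropy integral of the Marchenko–Pastur measure π_c equals h_c = 1/2 + c·ln c; that is, ∫ x ln x dπ_c(x) = 1/2 + c ln c, where ln is the natural logarithm. -/
set_option maxHeartbeats 1000000

open MeasureTheory

/-- The density of the absolutely continuous part of the Marchenko–Pastur
distribution with parameter `c`: `√(4c - (x-1-c)²)/(2πx)` on the interval
`[1+c-2√c, 1+c+2√c]`, and `0` elsewhere. -/
noncomputable def mpDensity (c : ℝ) (x : ℝ) : ℝ :=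
  if 1 + c - 2 * Real.sqrt c ≤ x ∧ x ≤ 1 + c + 2 * Real.sqrt c then
    Real.sqrt (4 * c - (x - 1 - c) ^ 2) / (2 * Real.pi * x)
  else 0

/-- The Marchenko–Pastur measure with parameter `c`:
`π_c = max(1-c,0)·δ₀ + mpDensity c · Lebesgue`. -/
noncomputable def mpMeasure (c : ℝ) : Measure ℝ :=
  ENNReal.ofReal (max (1 - c) 0) • Measure.dirac 0 +
    volume.withDensity fun x => ENNReal.ofReal (mpDensity c x)

section AuxProof
open Real MeasureTheory intervalIntegral Filter
open scoped NNReal ENNReal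

noncomputable def Idef (r : ℝ) : ℝ := ∫ φ in (0:ℝ)..π, Real.log (1 - 2*r*Real.cos φ + r^2)

lemma pos_fac {r : ℝ} (h0 : 0 ≤ r) (h1 : r ≠ 1) (t : ℝ) :
    0 < 1 - 2*r*Real.cos t + r^2 := by
  have h2 := Real.cos_le_one t
  have h3 := Real.neg_one_le_cos t
  rcases lt_or_gt_of_ne h1 with h | h
  · nlinarith [sq_nonneg (1 - r)]
  · nlinarith [sq_nonneg (1 - r)]

lemma cont_fac {r : ℝ} (h0 : 0 ≤ r) (h1 : r ≠ 1) :
    Continuous (fun t => Real.log (1 - 2*r*Real.cos t + r^2)) := by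
  apply Continuous.log (by continuity)
  exact fun t => (pos_fac h0 h1 t).ne'

lemma Idef_dup {r : ℝ} (h0 : 0 ≤ r) (h1 : r < 1) : Idef (r^2) = 2 * Idef r := by
  have h0' : (0:ℝ) ≤ r^2 := sq_nonneg r
  have h1' : r^2 ≠ 1 := by nlinarith
  have h1'' : r ≠ 1 := fun h => by simp [h] at h1
  have key : ∀ u : ℝ, Real.log (1 - 2*r^2*Real.cos u + (r^2)^2)
      = Real.log (1 - 2*r*Real.cos (u/2) + r^2) + Real.log (1 + 2*r*Real.cos (u/2) + r^2) := by
    intro u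
    rw [← Real.log_mul (by nlinarith [pos_fac h0 h1'' (u/2)]) (by nlinarith [Real.cos_le_one (u/2), Real.neg_one_le_cos (u/2), sq_nonneg (1+r), sq_nonneg (1-r)])]
    congr 1
    have : Real.cos u = 2 * Real.cos (u/2)^2 - 1 := by
      rw [show u = 2*(u/2) by ring, Real.cos_two_mul]
      ring_nf
    rw [this]; ring
  have contm : Continuous (fun u : ℝ => Real.log (1 - 2*r*Real.cos (u/2) + r^2)) :=
    (cont_fac h0 h1'').comp (by continuity)
  have posp : ∀ t : ℝ, 0 < 1 + 2*r*Real.cos t + r^2 := by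
    intro t
    nlinarith [Real.cos_le_one t, Real.neg_one_le_cos t, sq_nonneg (1+r), sq_nonneg (1-r)]
  have contp : Continuous (fun u : ℝ => Real.log (1 + 2*r*Real.cos (u/2) + r^2)) := by
    apply Continuous.log (by continuity)
    exact fun t => (posp (t/2)).ne'
  have step1 : Idef (r^2) = (∫ u in (0:ℝ)..π, Real.log (1 - 2*r*Real.cos (u/2) + r^2))
      + ∫ u in (0:ℝ)..π, Real.log (1 + 2*r*Real.cos (u/2) + r^2) := by
    rw [Idef, intervalIntegral.integral_congr (g := fun u => Real.log (1 - 2*r*Real.cos (u/2) + r^2) + Real.log (1 + 2*r*Real.cos (u/2) + r^2)) (fun u _ => key u)]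
    exact intervalIntegral.integral_add (contm.intervalIntegrable _ _) (contp.intervalIntegrable _ _)
  have sub1 : (∫ u in (0:ℝ)..π, Real.log (1 - 2*r*Real.cos (u/2) + r^2))
      = 2 * ∫ v in (0:ℝ)..(π/2), Real.log (1 - 2*r*Real.cos v + r^2) := by
    have := intervalIntegral.integral_comp_div (a := (0:ℝ)) (b := π)
      (f := fun v => Real.log (1 - 2*r*Real.cos v + r^2)) (c := (2:ℝ)) two_ne_zero
    rw [this]; norm_num [smul_eq_mul]
  have sub2 : (∫ u in (0:ℝ)..π, Real.log (1 + 2*r*Real.cos (u/2) + r^2))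
      = 2 * ∫ v in (0:ℝ)..(π/2), Real.log (1 + 2*r*Real.cos v + r^2) := by
    have := intervalIntegral.integral_comp_div (a := (0:ℝ)) (b := π)
      (f := fun v => Real.log (1 + 2*r*Real.cos v + r^2)) (c := (2:ℝ)) two_ne_zero
    rw [this]; norm_num [smul_eq_mul]
  have sub3 : (∫ v in (0:ℝ)..(π/2), Real.log (1 + 2*r*Real.cos v + r^2))
      = ∫ w in (π/2)..π, Real.log (1 - 2*r*Real.cos w + r^2) := by
    have := intervalIntegral.integral_comp_sub_left (a := (0:ℝ)) (b := π/2)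
      (f := fun w => Real.log (1 - 2*r*Real.cos w + r^2)) π
    rw [show π - π/2 = π/2 by ring, show π - 0 = π by ring] at this
    rw [← this]
    apply intervalIntegral.integral_congr
    intro v _
    simp only [Real.cos_pi_sub]; ring_nf
  have glue : (∫ v in (0:ℝ)..(π/2), Real.log (1 - 2*r*Real.cos v + r^2))
      + ∫ w in (π/2)..π, Real.log (1 - 2*r*Real.cos w + r^2) = Idef r :=
    intervalIntegral.integral_add_adjacent_intervals
      ((cont_fac h0 h1'').intervalIntegrable _ _) ((cont_fac h0 h1'').intervalIntegrable _ _)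
  rw [step1, sub1, sub2, sub3, ← glue]; ring

lemma Idef_bound {r s : ℝ} (h0 : 0 ≤ s) (hsr : s ≤ r) (h1 : r < 1) :
    |Idef s| ≤ π * (|Real.log ((1-r)^2)| + |Real.log 4|) := by
  have h1s : s < 1 := lt_of_le_of_lt hsr h1
  have key : ∀ t ∈ Set.uIcc (0:ℝ) π, |Real.log (1 - 2*s*Real.cos t + s^2)|
      ≤ |Real.log ((1-r)^2)| + |Real.log 4| := by
    intro t _
    have hlo : (1-r)^2 ≤ 1 - 2*s*Real.cos t + s^2 := by
      nlinarith [Real.cos_le_one t, sq_nonneg (r - s), sq_nonneg (1 - s)]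
    have hhi : 1 - 2*s*Real.cos t + s^2 ≤ 4 := by
      nlinarith [Real.neg_one_le_cos t]
    have hlop : (0:ℝ) < (1-r)^2 := pow_pos (by linarith) 2
    have l1 : Real.log ((1-r)^2) ≤ Real.log (1 - 2*s*Real.cos t + s^2) :=
      Real.log_le_log hlop hlo
    have l2 : Real.log (1 - 2*s*Real.cos t + s^2) ≤ Real.log 4 :=
      Real.log_le_log (lt_of_lt_of_le hlop hlo) hhi
    rw [abs_le]
    constructor
    · calc -(|Real.log ((1-r)^2)| + |Real.log 4|) ≤ -|Real.log ((1-r)^2)| := by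
            simp [abs_nonneg]
        _ ≤ Real.log ((1-r)^2) := neg_abs_le _
        _ ≤ _ := l1
    · calc Real.log (1 - 2*s*Real.cos t + s^2) ≤ Real.log 4 := l2
        _ ≤ |Real.log 4| := le_abs_self _
        _ ≤ _ := by simp [abs_nonneg]
  have := intervalIntegral.norm_integral_le_of_norm_le_const
    (C := |Real.log ((1-r)^2)| + |Real.log 4|)
    (f := fun t => Real.log (1 - 2*s*Real.cos t + s^2)) (a := 0) (b := π) ?_
  · rw [Idef]
    calc |∫ φ in (0:ℝ)..π, Real.log (1 - 2*s*Real.cos φ + s^2)| ≤ (|Real.log ((1-r)^2)| + |Real.log 4|) * |π - 0| := this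
      _ = π * (|Real.log ((1-r)^2)| + |Real.log 4|) := by
          rw [sub_zero, abs_of_pos Real.pi_pos]; ring
  · intro t ht
    rw [Set.uIoc_of_le (le_of_lt Real.pi_pos)] at ht
    exact key t (Set.mem_uIcc.mpr (Or.inl ⟨le_of_lt ht.1, ht.2⟩))

lemma Idef_iter {r : ℝ} (h0 : 0 ≤ r) (h1 : r < 1) (n : ℕ) :
    Idef (r^(2^n)) = 2^n * Idef r := by
  induction n with
  | zero => simp
  | succ n ih =>
    have hle : r^(2^n) ≤ r := by
      rcases eq_or_lt_of_le h0 with h | h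
      · rw [← h]; simp [zero_pow (pow_pos (by norm_num : (0:ℕ) < 2) n).ne']
      · exact pow_le_of_le_one h0 (le_of_lt h1) (by positivity)
    have h0n : 0 ≤ r^(2^n) := pow_nonneg h0 _
    have h1n : r^(2^n) < 1 := lt_of_le_of_lt hle h1
    have : r^(2^(n+1)) = (r^(2^n))^2 := by rw [← pow_mul, pow_succ]
    rw [this, Idef_dup h0n h1n, ih, pow_succ]; ring

lemma Idef_zero {r : ℝ} (h0 : 0 ≤ r) (h1 : r < 1) : Idef r = 0 := by
  set C := |Real.log ((1-r)^2)| + |Real.log 4| with hC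
  have hCnn : 0 ≤ C := by positivity
  have key : ∀ n : ℕ, |Idef r| ≤ π * C * (1/2)^n := by
    intro n
    have hle : r^(2^n) ≤ r := by
      rcases eq_or_lt_of_le h0 with h | h
      · rw [← h]; simp [zero_pow (pow_pos (by norm_num : (0:ℕ) < 2) n).ne']
      · exact pow_le_of_le_one h0 (le_of_lt h1) (by positivity)
    have hb := Idef_bound (pow_nonneg h0 _) hle h1
    rw [Idef_iter h0 h1 n, abs_mul, abs_pow, abs_two] at hb
    have h2 : ((2:ℝ)^n) * |Idef r| ≤ π * C := hb
    calc |Idef r| = ((2:ℝ)^n * |Idef r|) * (1/2)^n := by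
          rw [mul_comm ((2:ℝ)^n) _, mul_assoc]
          simp [← mul_pow]
      _ ≤ π * C * (1/2)^n := by
          apply mul_le_mul_of_nonneg_right h2 (by positivity)
  have htend : Filter.Tendsto (fun n : ℕ => π * C * (1/2)^n) Filter.atTop (nhds 0) := by
    rw [show (0:ℝ) = π * C * 0 by ring]
    exact (tendsto_pow_atTop_nhds_zero_of_lt_one (by norm_num) (by norm_num)).const_mul _
  have : |Idef r| ≤ 0 := ge_of_tendsto' htend key
  have := abs_nonneg (Idef r)
  rw [abs_eq_zero.mp (le_antisymm ‹|Idef r| ≤ 0› ‹0 ≤ |Idef r|›)]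

lemma Idef_big {r : ℝ} (h1 : 1 < r) : Idef r = 2 * π * Real.log r := by
  have hr0 : 0 < r := lt_trans one_pos h1
  have hinv0 : 0 ≤ r⁻¹ := by positivity
  have hinv1 : r⁻¹ < 1 := inv_lt_one_of_one_lt₀ h1
  have key : ∀ t : ℝ, Real.log (1 - 2*r*Real.cos t + r^2)
      = Real.log (r^2) + Real.log (1 - 2*r⁻¹*Real.cos t + (r⁻¹)^2) := by
    intro t
    rw [← Real.log_mul (by positivity) (pos_fac hinv0 (ne_of_lt hinv1) t).ne']
    congr 1
    field_simp
    ring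
  have cont2 := cont_fac hinv0 (ne_of_lt hinv1)
  rw [Idef, intervalIntegral.integral_congr (g := fun t => Real.log (r^2) + Real.log (1 - 2*r⁻¹*Real.cos t + (r⁻¹)^2)) (fun t _ => key t)]
  rw [intervalIntegral.integral_add (intervalIntegrable_const) (cont2.intervalIntegrable _ _)]
  have : (∫ t in (0:ℝ)..π, Real.log (1 - 2*r⁻¹*Real.cos t + (r⁻¹)^2)) = Idef r⁻¹ := rfl
  rw [this, Idef_zero hinv0 hinv1, intervalIntegral.integral_const, Real.log_pow]
  simp [smul_eq_mul]
  ring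

lemma Klem {c : ℝ} (hc : 1 < c) :
    (∫ θ in (-(π/2))..(π/2), Real.log (1 + c + 2*Real.sqrt c*Real.sin θ)) = π * Real.log c := by
  have hc0 : (0:ℝ) < c := lt_trans one_pos hc
  have hr1 : 1 < Real.sqrt c := by
    rw [show (1:ℝ) = Real.sqrt 1 by simp]
    exact Real.sqrt_lt_sqrt (by norm_num) hc
  have key : ∀ φ : ℝ, Real.log (1 + c + 2*Real.sqrt c*Real.sin (φ - π/2))
      = Real.log (1 - 2*Real.sqrt c*Real.cos φ + (Real.sqrt c)^2) := by
    intro φ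
    rw [Real.sin_sub_pi_div_two, Real.sq_sqrt (le_of_lt hc0)]
    ring_nf
  have := intervalIntegral.integral_comp_sub_right (a := (0:ℝ)) (b := π)
    (f := fun θ => Real.log (1 + c + 2*Real.sqrt c*Real.sin θ)) (π/2)
  rw [show (0:ℝ) - π/2 = -(π/2) by ring, show π - π/2 = π/2 by ring] at this
  rw [← this, intervalIntegral.integral_congr (g := fun φ => Real.log (1 - 2*Real.sqrt c*Real.cos φ + (Real.sqrt c)^2)) (fun φ _ => key φ)]
  have : (∫ φ in (0:ℝ)..π, Real.log (1 - 2*Real.sqrt c*Real.cos φ + (Real.sqrt c)^2)) = Idef (Real.sqrt c) := rfl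
  rw [this, Idef_big hr1, Real.log_sqrt (le_of_lt hc0)]
  ring

lemma gpos {s θ : ℝ} (hs : 1 < s) : 0 < 1 + s^2 + 2*s*Real.sin θ := by
  nlinarith [Real.neg_one_le_sin θ, Real.sin_le_one θ, sq_nonneg (s-1)]

lemma ftc_aux {s : ℝ} (hs : 1 < s) :
    (∫ θ in (-(π/2))..(π/2), Real.log (1+s^2+2*s*Real.sin θ) * Real.cos (2*θ) / 2)
      = π/(4*s^2) := by
  have hs0 : 0 < s := lt_trans one_pos hs
  have hs1 : s^2 - 1 ≠ 0 := by nlinarith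
  set γ : ℝ := 1/2 - (1+s^2)^2/(8*s^2) with hγ
  set rem : ℝ := (1+s^2)*(s^2-1)^2/(8*s^2) * (2/(s^2-1)) with hrem
  set P : ℝ → ℝ := fun θ =>
    Real.log (1+s^2+2*s*Real.sin θ) * Real.sin (2*θ)/4
    + (θ - Real.sin θ * Real.cos θ)/4
    + (1+s^2)/(4*s) * Real.cos θ
    - γ * θ
    - rem * Real.arctan (((1+s^2)*Real.tan (θ/2) + 2*s)/(s^2-1)) with hP
  have hderiv : ∀ θ ∈ Set.uIcc (-(π/2)) (π/2),
      HasDerivAt P (Real.log (1+s^2+2*s*Real.sin θ) * Real.cos (2*θ) / 2) θ := by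
    intro θ hθ
    rw [Set.uIcc_of_le (by linarith [Real.pi_pos] : -(π/2) ≤ π/2)] at hθ
    have hcos2 : 0 < Real.cos (θ/2) := by
      apply Real.cos_pos_of_mem_Ioo
      constructor <;> [linarith [hθ.1, Real.pi_pos]; linarith [hθ.2, Real.pi_pos]]
    have hg : 0 < 1 + s^2 + 2*s*Real.sin θ := gpos hs
    -- d/dθ of log g * sin 2θ / 4
    have hgd : HasDerivAt (fun θ => 1+s^2+2*s*Real.sin θ) (2*s*Real.cos θ) θ := by
      have := ((Real.hasDerivAt_sin θ).const_mul (2*s)).const_add (1+s^2)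
      simpa using this
    have h1 : HasDerivAt (fun θ => Real.log (1+s^2+2*s*Real.sin θ) * Real.sin (2*θ)/4)
        ((2*s*Real.cos θ/(1+s^2+2*s*Real.sin θ)) * Real.sin (2*θ)/4
          + Real.log (1+s^2+2*s*Real.sin θ) * (Real.cos (2*θ)*2)/4) θ := by
      have hlog := hgd.log hg.ne'
      have hsin2 : HasDerivAt (fun θ : ℝ => Real.sin (2*θ)) (Real.cos (2*θ)*2) θ := by
        simpa using ((hasDerivAt_id θ).const_mul 2).sin
      have := (hlog.mul hsin2).div_const 4
      refine this.congr_deriv ?_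
      ring
    have h2 : HasDerivAt (fun θ => (θ - Real.sin θ * Real.cos θ)/4)
        ((1 - (Real.cos θ * Real.cos θ + Real.sin θ * (-Real.sin θ)))/4) θ :=
      ((hasDerivAt_id θ).sub ((Real.hasDerivAt_sin θ).mul (Real.hasDerivAt_cos θ))).div_const 4
    have h3 : HasDerivAt (fun θ => (1+s^2)/(4*s) * Real.cos θ)
        ((1+s^2)/(4*s) * (-Real.sin θ)) θ := by
      simpa [mul_comm] using (Real.hasDerivAt_cos θ).const_mul ((1+s^2)/(4*s))
    have h4 : HasDerivAt (fun θ : ℝ => γ * θ) γ θ := by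
      simpa using (hasDerivAt_id θ).const_mul γ
    have htan : HasDerivAt (fun θ : ℝ => Real.tan (θ/2)) (1/Real.cos (θ/2)^2 * (1/2)) θ := by
      have h12 : HasDerivAt (fun θ : ℝ => θ/2) (1/2) θ := by
        simpa using (hasDerivAt_id θ).div_const 2
      exact (Real.hasDerivAt_tan hcos2.ne').comp θ h12
    have hu : HasDerivAt (fun θ => ((1+s^2)*Real.tan (θ/2) + 2*s)/(s^2-1))
        (((1+s^2) * (1/Real.cos (θ/2)^2 * (1/2)))/(s^2-1)) θ :=
      ((htan.const_mul (1+s^2)).add_const (2*s)).div_const (s^2-1)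
    have h5 : HasDerivAt (fun θ => rem * Real.arctan (((1+s^2)*Real.tan (θ/2) + 2*s)/(s^2-1)))
        (rem * (1 / (1 + (((1+s^2)*Real.tan (θ/2) + 2*s)/(s^2-1))^2)
          * (((1+s^2) * (1/Real.cos (θ/2)^2 * (1/2)))/(s^2-1)))) θ :=
      (hu.arctan).const_mul rem
    have htot := (((h1.add h2).add h3).sub h4).sub h5
    refine htot.congr_deriv ?_
    -- now the algebraic identity
    set st := Real.sin (θ/2)
    set ct := Real.cos (θ/2)
    have hpy : st^2 + ct^2 = 1 := Real.sin_sq_add_cos_sq (θ/2)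
    have hsinθ : Real.sin θ = 2*st*ct := by
      rw [show θ = 2*(θ/2) by ring, Real.sin_two_mul]
    have hcosθ : Real.cos θ = ct^2 - st^2 := by
      rw [show θ = 2*(θ/2) by ring, Real.cos_two_mul]
      nlinarith [hpy]
    have htaneq : Real.tan (θ/2) = st/ct := Real.tan_eq_sin_div_cos (θ/2)
    have hsin2θ : Real.sin (2*θ) = 2*Real.sin θ*Real.cos θ := Real.sin_two_mul θ
    have hcos2θ : Real.cos (2*θ) = 2*Real.cos θ^2 - 1 := Real.cos_two_mul θ
    have hgne : 1 + s^2 + 2*s*Real.sin θ ≠ 0 := hg.ne'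
    have hune : (1:ℝ) + (((1+s^2)*Real.tan (θ/2) + 2*s)/(s^2-1))^2 ≠ 0 := by positivity
    have key : (1+s^2) * (1+s^2+2*s*Real.sin θ)
        = ct^2*(s^2-1)^2 + ((1+s^2)*st + 2*s*ct)^2 := by
      linear_combination (-(1+s^2)^2) * hpy + (2*s*(1+s^2)) * hsinθ
    have hgne : 1 + s^2 + 2*s*Real.sin θ ≠ 0 := hg.ne'
    have harc : 1 / (1 + (((1+s^2)*Real.tan (θ/2) + 2*s)/(s^2-1))^2)
        * ((1+s^2) * (1/ct^2*(1/2))/(s^2-1)) = (s^2-1)/(2*(1+s^2+2*s*Real.sin θ)) := by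
      rw [htaneq]
      field_simp
      rw [eq_div_iff (by nlinarith [hg])]
      linear_combination key
    rw [hγ, hrem, hsin2θ, hcos2θ, harc]
    field_simp
    linear_combination (64*s^3*Real.sin θ - 16*s^2*(1+s^2+2*s*Real.sin θ)) * (Real.sin_sq_add_cos_sq θ)
  have hcont : Continuous (fun θ => Real.log (1+s^2+2*s*Real.sin θ) * Real.cos (2*θ) / 2) := by
    apply Continuous.div_const
    apply Continuous.mul
    · exact Continuous.log (continuous_const.add (continuous_const.mul Real.continuous_sin)) (fun θ => (gpos hs).ne')
    · exact Real.continuous_cos.comp (continuous_const.mul continuous_id)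
  rw [intervalIntegral.integral_eq_sub_of_hasDerivAt hderiv (hcont.intervalIntegrable _ _)]
  have hs1' : s - 1 ≠ 0 := by nlinarith
  have hs1'' : s + 1 ≠ 0 := by nlinarith
  have b1 : P (π/2) = π/8 - γ*(π/2) - rem * Real.arctan ((s+1)/(s-1)) := by
    simp only [hP]
    rw [show (2:ℝ)*(π/2) = π by ring, Real.sin_pi, Real.sin_pi_div_two, Real.cos_pi_div_two,
      show (π/2)/2 = π/4 by ring,
      show ((1+s^2)*Real.tan (π/4) + 2*s)/(s^2-1) = (s+1)/(s-1) by
        rw [Real.tan_pi_div_four]; field_simp; ring]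
    ring
  have b2 : P (-(π/2)) = -(π/8) + γ*(π/2) - rem * Real.arctan (-((s-1)/(s+1))) := by
    simp only [hP]
    have e1 : Real.sin (2*(-(π/2))) = 0 := by
      rw [show (2:ℝ)*(-(π/2)) = -π by ring]; simp
    have e2 : Real.sin (-(π/2)) = -1 := by simp
    have e3 : Real.cos (-(π/2)) = 0 := by simp
    have e4 : Real.tan (-(π/2)/2) = -1 := by
      rw [show (-(π/2))/2 = -(π/4) by ring, Real.tan_neg, Real.tan_pi_div_four]
    rw [e1, e2, e3, e4,
      show ((1+s^2)*(-1:ℝ) + 2*s)/(s^2-1) = -((s-1)/(s+1)) by field_simp; ring]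
    ring
  rw [b1, b2, Real.arctan_neg]
  have hv : (0:ℝ) < (s+1)/(s-1) := by
    apply div_pos <;> linarith
  have hinv : Real.arctan ((s-1)/(s+1)) = π/2 - Real.arctan ((s+1)/(s-1)) := by
    rw [show (s-1)/(s+1) = ((s+1)/(s-1))⁻¹ by rw [inv_div], Real.arctan_inv_of_pos hv]
  rw [hinv, hγ, hrem]
  have hs2 : s^2 ≠ 0 := by positivity
  field_simp
  ring



lemma Klem' {s : ℝ} (hs : 1 < s) :
    (∫ θ in (-(π/2))..(π/2), Real.log (1 + s^2 + 2*s*Real.sin θ)) = π * Real.log (s^2) := by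
  have h1 : 1 < s^2 := by nlinarith
  have := Klem h1
  rwa [Real.sqrt_sq (by linarith)] at this

lemma partB {c : ℝ} (hc : 1 < c) :
    (∫ x in (1+c-2*Real.sqrt c)..(1+c+2*Real.sqrt c),
      Real.log x * Real.sqrt (4*c - (x-1-c)^2) / (2*π)) = 1/2 + c * Real.log c := by
  have hs0 : 0 ≤ Real.sqrt c := Real.sqrt_nonneg c
  set s := Real.sqrt c with hsdef
  have hs2 : c = s^2 := (Real.sq_sqrt (by linarith)).symm
  clear_value s
  subst hs2
  have hs1 : 1 < s := by nlinarith
  have hsp : 0 < s := by linarith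
  set g : ℝ → ℝ := fun θ => 1 + s^2 + 2*s*Real.sin θ with hgdef
  set F : ℝ → ℝ := fun x => Real.log x * Real.sqrt (4*s^2 - (x-1-s^2)^2) / (2*π) with hFdef
  have hg1 : ∀ θ ∈ Set.uIcc (-(π/2)) (π/2), HasDerivAt g (2*s*Real.cos θ) θ := by
    intro θ _
    have := ((Real.hasDerivAt_sin θ).const_mul (2*s)).const_add (1+s^2)
    simpa [hgdef] using this
  have hg2 : ContinuousOn (fun θ => 2*s*Real.cos θ) (Set.uIcc (-(π/2)) (π/2)) :=
    (continuous_const.mul Real.continuous_cos).continuousOn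
  have himg : ∀ y ∈ g '' Set.uIcc (-(π/2)) (π/2), y ≠ 0 := by
    rintro y ⟨θ, _, rfl⟩
    have := Real.neg_one_le_sin θ
    simp only [hgdef]
    nlinarith
  have hg3 : ContinuousOn F (g '' Set.uIcc (-(π/2)) (π/2)) := by
    apply ContinuousOn.div_const
    apply ContinuousOn.mul
    · exact Real.continuousOn_log.mono (fun y hy => himg y hy)
    · exact (Real.continuous_sqrt.comp (by fun_prop)).continuousOn
  have hsub := intervalIntegral.integral_comp_smul_deriv' hg1 hg2 hg3
  have hga : g (-(π/2)) = 1 + s^2 - 2*s := by simp [hgdef]; ring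
  have hgb : g (π/2) = 1 + s^2 + 2*s := by simp [hgdef]
  rw [hga, hgb] at hsub
  rw [← hsub]
  have hpw : ∀ θ ∈ Set.uIcc (-(π/2)) (π/2),
      (2*s*Real.cos θ) • (F ∘ g) θ = (2*s^2/π) * (Real.log (g θ) * Real.cos θ ^ 2) := by
    intro θ hθ
    rw [Set.uIcc_of_le (by linarith [Real.pi_pos] : -(π/2) ≤ π/2)] at hθ
    have hcosnn : 0 ≤ Real.cos θ := Real.cos_nonneg_of_mem_Icc ⟨hθ.1, hθ.2⟩
    have hsq : 4*s^2 - (g θ - 1 - s^2)^2 = (2*s*Real.cos θ)^2 := by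
      simp only [hgdef]
      linear_combination (-(4*s^2)) * (Real.sin_sq_add_cos_sq θ)
    simp only [hFdef, Function.comp, smul_eq_mul]
    rw [hsq, Real.sqrt_sq (by positivity)]
    field_simp
  rw [intervalIntegral.integral_congr hpw]
  rw [intervalIntegral.integral_const_mul]
  have hsplit : ∀ θ ∈ Set.uIcc (-(π/2)) (π/2),
      Real.log (g θ) * Real.cos θ ^ 2
      = Real.log (1+s^2+2*s*Real.sin θ) * (1/2)
        + Real.log (1+s^2+2*s*Real.sin θ) * Real.cos (2*θ) / 2 := by
    intro θ _
    rw [Real.cos_sq θ]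
    simp only [hgdef]
    ring
  rw [intervalIntegral.integral_congr hsplit]
  have hL : Continuous (fun θ : ℝ => Real.log (1+s^2+2*s*Real.sin θ)) :=
    Continuous.log (continuous_const.add (continuous_const.mul Real.continuous_sin))
      (fun θ => (gpos hs1).ne')
  have hi1 : IntervalIntegrable (fun θ : ℝ => Real.log (1+s^2+2*s*Real.sin θ) * (1/2))
      volume (-(π/2)) (π/2) := (hL.mul continuous_const).intervalIntegrable _ _
  have hi2 : IntervalIntegrable (fun θ : ℝ => Real.log (1+s^2+2*s*Real.sin θ) * Real.cos (2*θ) / 2)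
      volume (-(π/2)) (π/2) :=
    ((hL.mul (Real.continuous_cos.comp (continuous_const.mul continuous_id))).div_const 2).intervalIntegrable _ _
  rw [intervalIntegral.integral_add hi1 hi2, intervalIntegral.integral_mul_const, Klem' hs1, ftc_aux hs1]
  have hπ : π ≠ 0 := Real.pi_ne_zero
  field_simp
  ring

noncomputable def mpAux (c : ℝ) (x : ℝ) : ℝ :=
  Real.log x * Real.sqrt (4 * c - (x - 1 - c) ^ 2) / (2 * Real.pi)

lemma mpDensity_nonneg {c : ℝ} (hc : 1 ≤ c) (x : ℝ) : 0 ≤ mpDensity c x := by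
  rw [mpDensity]
  split_ifs with h
  · have h1 : 0 ≤ 1 + c - 2 * Real.sqrt c := by
      nlinarith [Real.sq_sqrt (by linarith : (0:ℝ) ≤ c), Real.sqrt_nonneg c]
    have hx : 0 ≤ x := le_trans h1 h.1
    positivity
  · exact le_refl 0

lemma mpDensity_meas (c : ℝ) : Measurable (mpDensity c) := by
  unfold mpDensity
  apply Measurable.ite
  · exact measurableSet_Icc (a := 1 + c - 2*Real.sqrt c) (b := 1 + c + 2*Real.sqrt c)
  · fun_prop
  · fun_prop

lemma mpAux_meas (c : ℝ) : Measurable (mpAux c) := by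
  unfold mpAux
  apply Measurable.div_const
  exact Real.measurable_log.mul (Real.continuous_sqrt.measurable.comp (by fun_prop))

lemma key_pointwise {c : ℝ} (hc : 1 ≤ c) (x : ℝ) :
    mpDensity c x * (x * Real.log x) = mpAux c x := by
  have hc0 : (0:ℝ) ≤ c := by linarith
  have hsq : Real.sqrt c ^ 2 = c := Real.sq_sqrt hc0
  rw [mpDensity, mpAux]
  split_ifs with h
  · rcases eq_or_ne x 0 with rfl | hx
    · have h0 : Real.sqrt (4*c - (0 - 1 - c)^2) = 0 :=
        Real.sqrt_eq_zero'.mpr (by nlinarith)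
      rw [h0]
      simp
    · field_simp
  · push_neg at h
    have hQ : 4*c - (x-1-c)^2 ≤ 0 := by
      rcases lt_or_ge x (1 + c - 2*Real.sqrt c) with h1 | h1
      · nlinarith [Real.sqrt_nonneg c]
      · have h2 := h h1
        nlinarith [Real.sqrt_nonneg c]
    rw [Real.sqrt_eq_zero'.mpr hQ]
    simp

lemma partA {c : ℝ} (hc : 1 ≤ c) :
    ∫ x, x * Real.log x ∂(mpMeasure c) = ∫ x, mpAux c x := by
  have h0 : ENNReal.ofReal (max (1 - c) 0) = 0 := by
    rw [max_eq_right (by linarith)]; simp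
  rw [mpMeasure, h0, zero_smul, zero_add]
  rw [show (fun x => ENNReal.ofReal (mpDensity c x))
      = (fun x => (((mpDensity c x).toNNReal : ℝ≥0) : ℝ≥0∞)) from rfl,
    integral_withDensity_eq_integral_smul ((mpDensity_meas c).real_toNNReal)]
  apply MeasureTheory.integral_congr_ae
  apply Eventually.of_forall
  intro x
  show (mpDensity c x).toNNReal • (x * Real.log x) = mpAux c x
  rw [NNReal.smul_def, Real.coe_toNNReal _ (mpDensity_nonneg hc x)]
  exact key_pointwise hc x

lemma partA2 {c : ℝ} (hc : 1 ≤ c) :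
    ∫ x, mpAux c x
      = ∫ x in (1+c-2*Real.sqrt c)..(1+c+2*Real.sqrt c), mpAux c x := by
  have hab : 1+c-2*Real.sqrt c ≤ 1+c+2*Real.sqrt c := by linarith [Real.sqrt_nonneg c]
  have hsq := Real.sq_sqrt (show (0:ℝ) ≤ c by linarith)
  have hzero : ∀ x ∉ Set.Ioc (1+c-2*Real.sqrt c) (1+c+2*Real.sqrt c), mpAux c x = 0 := by
    intro x hx
    rw [Set.mem_Ioc, not_and_or, not_lt, not_le] at hx
    unfold mpAux
    have hQ : 4*c - (x-1-c)^2 ≤ 0 := by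
      rcases hx with h1 | h1
      · nlinarith [Real.sqrt_nonneg c]
      · nlinarith [Real.sqrt_nonneg c]
    rw [Real.sqrt_eq_zero'.mpr hQ]
    simp
  have hsupp : Function.support (mpAux c) ⊆ Set.Ioc (1+c-2*Real.sqrt c) (1+c+2*Real.sqrt c) := by
    intro x hx
    by_contra hmem
    exact hx (hzero x hmem)
  calc ∫ x, mpAux c x
      = ∫ x, (Set.Ioc (1+c-2*Real.sqrt c) (1+c+2*Real.sqrt c)).indicator (mpAux c) x := by
        rw [Set.indicator_eq_self.mpr hsupp]
    _ = ∫ x in Set.Ioc (1+c-2*Real.sqrt c) (1+c+2*Real.sqrt c), mpAux c x :=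
        integral_indicator measurableSet_Ioc
    _ = _ := (intervalIntegral.integral_of_le hab).symm

lemma boundInt : Integrable ((Set.Ioc (0:ℝ) 9).indicator (fun x => |Real.log x| * (3/(2*π)))) volume := by
  rw [integrable_indicator_iff measurableSet_Ioc]
  apply Integrable.mul_const
  have hun : Set.Ioc (0:ℝ) 9 = Set.Ioc 0 1 ∪ Set.Ioc 1 9 := by
    rw [Set.Ioc_union_Ioc_eq_Ioc (by norm_num) (by norm_num)]
  rw [hun]
  apply IntegrableOn.union
  · apply Integrable.mono' (g := fun x => 2 * x ^ (-(1/2) : ℝ))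
    · exact ((intervalIntegral.intervalIntegrable_rpow' (a := 0) (b := 1) (by norm_num)).1).const_mul 2
    · exact (Real.measurable_log.abs).aestronglyMeasurable
    · rw [ae_restrict_iff' measurableSet_Ioc]
      apply Eventually.of_forall
      intro x hx
      have hx0 : 0 < x := hx.1
      have hy : 0 < x ^ (-(1/2):ℝ) := Real.rpow_pos_of_pos hx0 _
      have hlog : Real.log (x ^ (-(1/2):ℝ)) = -(1/2) * Real.log x := Real.log_rpow hx0 _
      have hle := Real.log_le_sub_one_of_pos hy
      rw [hlog] at hle
      rw [Real.norm_eq_abs, abs_abs, abs_of_nonpos (Real.log_nonpos hx0.le hx.2)]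
      linarith
  · have hcont : ContinuousOn (fun x => |Real.log x|) (Set.Icc (1:ℝ) 9) := by
      apply ContinuousOn.abs
      apply Real.continuousOn_log.mono
      intro x hx
      exact ne_of_gt (lt_of_lt_of_le one_pos hx.1)
    exact hcont.integrableOn_Icc.mono_set Set.Ioc_subset_Icc_self

lemma contM : ContinuousAt (fun c => ∫ x, mpAux c x) 1 := by
  apply continuousAt_of_dominated
    (bound := (Set.Ioc (0:ℝ) 9).indicator (fun x => |Real.log x| * (3/(2*π))))
  · exact Eventually.of_forall (fun c => (mpAux_meas c).aestronglyMeasurable)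
  · filter_upwards [Ioo_mem_nhds (by norm_num : (1:ℝ)/2 < 1) (by norm_num : (1:ℝ) < 2)] with c hc
    apply Eventually.of_forall
    intro x
    by_cases hx : x ∈ Set.Ioc (0:ℝ) 9
    · rw [Set.indicator_of_mem hx]
      unfold mpAux
      have h1 : |Real.log x * Real.sqrt (4*c-(x-1-c)^2) / (2*π)|
          = |Real.log x| * Real.sqrt (4*c-(x-1-c)^2) / (2*π) := by
        rw [abs_div, abs_mul, abs_of_nonneg (Real.sqrt_nonneg _),
          abs_of_pos (by positivity : (0:ℝ) < 2*π)]
      rw [Real.norm_eq_abs, h1]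
      have h2 : Real.sqrt (4*c-(x-1-c)^2) ≤ 3 := by
        have h9 : 4*c-(x-1-c)^2 ≤ 9 := by nlinarith [hc.2, sq_nonneg (x-1-c)]
        calc Real.sqrt (4*c-(x-1-c)^2) ≤ Real.sqrt 9 := Real.sqrt_le_sqrt h9
          _ = 3 := by
            rw [show (9:ℝ) = 3^2 by norm_num, Real.sqrt_sq (by norm_num)]
      rw [mul_div_assoc]
      gcongr
    · rw [Set.indicator_of_notMem hx]
      have hz : mpAux c x = 0 := by
        unfold mpAux
        rw [Set.mem_Ioc, not_and_or, not_lt, not_le] at hx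
        have hQ : 4*c-(x-1-c)^2 ≤ 0 := by
          rcases hx with h1 | h1
          · nlinarith [sq_nonneg (1-c), sq_nonneg x,
              mul_nonneg (neg_nonneg.mpr h1) (show (0:ℝ) ≤ 1+c by linarith [hc.1])]
          · nlinarith [hc.2, sq_nonneg (x-1-c-6)]
        rw [Real.sqrt_eq_zero'.mpr hQ]
        simp
      rw [hz]
      simp
  · exact boundInt
  · apply Eventually.of_forall
    intro x
    unfold mpAux
    fun_prop

end AuxProof

section FinalProof
open Real MeasureTheory Filter
open scoped NNReal ENNReal

/-- For every `c ≥ 1`, the entropy integral of the Marchenko–Pastur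
measure `π_c` equals `h_c = 1/2 + c ln c`. -/
theorem mpMeasure_entropy_integral_ge_one (c : ℝ) (hc : 1 ≤ c) :
    ∫ x, x * Real.log x ∂(mpMeasure c) = 1 / 2 + c * Real.log c := by
  rw [partA hc]
  rcases eq_or_lt_of_le hc with h1 | h1
  · subst h1
    have t1 : Tendsto (fun d => ∫ x, mpAux d x) (nhdsWithin (1:ℝ) (Set.Ioi 1))
        (nhds (∫ x, mpAux 1 x)) :=
      contM.tendsto.mono_left nhdsWithin_le_nhds
    have hev : ∀ᶠ d in nhdsWithin (1:ℝ) (Set.Ioi 1),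
        (∫ x, mpAux d x) = 1/2 + d * Real.log d := by
      filter_upwards [self_mem_nhdsWithin] with d hd
      have hd1 : (1:ℝ) < d := hd
      rw [partA2 hd1.le]
      exact partB hd1
    have t2 : Tendsto (fun d : ℝ => 1/2 + d * Real.log d) (nhdsWithin (1:ℝ) (Set.Ioi 1))
        (nhds (1/2 + 1 * Real.log 1)) := by
      apply Filter.Tendsto.mono_left _ nhdsWithin_le_nhds
      exact (continuousAt_const.add (continuousAt_id.mul (Real.continuousAt_log (by norm_num)))).tendsto
    have := tendsto_nhds_unique (t1.congr' hev) t2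
    simpa using this
  · rw [partA2 h1.le]
    exact partB h1

end FinalProof
end

section
/- For every c with 0 < c < 1, the entropy integral of the Marchenko–Pastur measure π_c equals h_c = c²/2; that is, ∫ x ln x dπ_c(x) = c²/2, where ln is the natural logarithm. -/
open MeasureTheory

open Real
open scoped NNReal ENNReal

lemma MP.integral_cos_mul (k : ℝ) (hk : k ≠ 0) :
    ∫ θ in (0:ℝ)..π, Real.cos (k * θ) = Real.sin (k * π) / k := by
  have hd : ∀ θ ∈ Set.uIcc (0:ℝ) π, HasDerivAt (fun t => Real.sin (k * t) / k)
      (Real.cos (k * θ)) θ := by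
    intro θ _
    have h1 : HasDerivAt (fun t : ℝ => k * t) k θ := by
      simpa using (hasDerivAt_id θ).const_mul k
    have h2 := (Real.hasDerivAt_sin (k * θ)).comp θ h1
    have h3 := h2.div_const k
    have : Real.cos (k * θ) * k / k = Real.cos (k * θ) := by field_simp
    simpa [this] using h3
  rw [intervalIntegral.integral_eq_sub_of_hasDerivAt hd
    ((Real.continuous_cos.comp (continuous_const.mul continuous_id)).intervalIntegrable 0 π)]
  simp

lemma MP.integral_cos_int (m : ℤ) (hm : m ≠ 0) :
    ∫ θ in (0:ℝ)..π, Real.cos ((m : ℝ) * θ) = 0 := by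
  rw [MP.integral_cos_mul _ (by exact_mod_cast hm), Real.sin_int_mul_pi, zero_div]


lemma MP.integral_cos_eq_zero {k : ℝ} (m : ℤ) (hk : k = (m:ℝ)) (hm : m ≠ 0) :
    ∫ θ in (0:ℝ)..π, Real.cos (k * θ) = 0 := by
  subst hk; exact MP.integral_cos_int m hm

lemma MP.integral_sin_sq_cos (n : ℕ) :
    ∫ θ in (0:ℝ)..π, Real.sin θ ^ 2 * Real.cos ((n : ℝ) * θ) =
      if n = 0 then π / 2 else if n = 2 then -(π / 4) else 0 := by
  have hident : ∀ θ : ℝ, Real.sin θ ^ 2 * Real.cos ((n:ℝ) * θ) =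
      (1/2) * Real.cos ((n:ℝ) * θ) - (1/4) * Real.cos (((n:ℝ) + 2) * θ)
        - (1/4) * Real.cos (((n:ℝ) - 2) * θ) := by
    intro θ
    have e1 : ((n:ℝ) + 2) * θ = (n:ℝ) * θ + 2 * θ := by ring
    have e2 : ((n:ℝ) - 2) * θ = (n:ℝ) * θ - 2 * θ := by ring
    rw [e1, e2, Real.cos_add, Real.cos_sub, Real.cos_two_mul, Real.sin_two_mul]
    have hs : Real.sin θ ^ 2 = 1 - Real.cos θ ^ 2 := by
      have := Real.sin_sq_add_cos_sq θ; linarith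
    rw [hs]; ring
  have ic : ∀ m : ℝ, IntervalIntegrable (fun θ => Real.cos (m * θ)) volume 0 π := fun m =>
    (Real.continuous_cos.comp (continuous_const.mul continuous_id)).intervalIntegrable 0 π
  rw [intervalIntegral.integral_congr (fun θ _ => hident θ),
    intervalIntegral.integral_sub (((ic _).const_mul _).sub ((ic _).const_mul _))
      ((ic _).const_mul _),
    intervalIntegral.integral_sub ((ic _).const_mul _) ((ic _).const_mul _),
    intervalIntegral.integral_const_mul, intervalIntegral.integral_const_mul,
    intervalIntegral.integral_const_mul]
  by_cases h0 : n = 0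
  · subst h0
    have t1 : ∫ θ in (0:ℝ)..π, Real.cos (((0:ℕ):ℝ) * θ) = π := by
      norm_num
    have t2 : ∫ θ in (0:ℝ)..π, Real.cos ((((0:ℕ):ℝ) + 2) * θ) = 0 := by
      exact MP.integral_cos_eq_zero 2 (by norm_num) (by norm_num)
    have t3 : ∫ θ in (0:ℝ)..π, Real.cos ((((0:ℕ):ℝ) - 2) * θ) = 0 := by
      exact MP.integral_cos_eq_zero (-2) (by norm_num) (by norm_num)
    rw [t1, t2, t3]; norm_num; linarith [Real.pi_pos]
  by_cases h2 : n = 2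
  · subst h2
    have t1 : ∫ θ in (0:ℝ)..π, Real.cos (((2:ℕ):ℝ) * θ) = 0 := by
      exact MP.integral_cos_eq_zero 2 (by norm_num) (by norm_num)
    have t2 : ∫ θ in (0:ℝ)..π, Real.cos ((((2:ℕ):ℝ) + 2) * θ) = 0 := by
      exact MP.integral_cos_eq_zero 4 (by norm_num) (by norm_num)
    have t3 : ∫ θ in (0:ℝ)..π, Real.cos ((((2:ℕ):ℝ) - 2) * θ) = π := by
      norm_num
    rw [t1, t2, t3]; norm_num; linarith [Real.pi_pos]
  · have t1 : ∫ θ in (0:ℝ)..π, Real.cos (((n:ℕ):ℝ) * θ) = 0 := by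
      exact MP.integral_cos_eq_zero (n:ℤ) (by push_cast; ring) (by exact_mod_cast h0)
    have t2 : ∫ θ in (0:ℝ)..π, Real.cos ((((n:ℕ):ℝ) + 2) * θ) = 0 := by
      exact MP.integral_cos_eq_zero ((n:ℤ) + 2) (by push_cast; ring) (by positivity)
    have t3 : ∫ θ in (0:ℝ)..π, Real.cos ((((n:ℕ):ℝ) - 2) * θ) = 0 := by
      exact MP.integral_cos_eq_zero ((n:ℤ) - 2) (by push_cast; ring) (by omega)
    rw [t1, t2, t3]
    simp [h0, h2]

lemma MP.hasSum_log_expr {q : ℝ} (hq0 : 0 ≤ q) (hq1 : q < 1) (θ : ℝ) :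
    HasSum (fun n : ℕ => -2 * q ^ n * Real.cos ((n : ℝ) * θ) / n)
      (Real.log (1 - 2 * q * Real.cos θ + q ^ 2)) := by
  set z : ℂ := (q : ℂ) * Complex.exp (θ * Complex.I) with hz
  have hznorm : ‖z‖ < 1 := by
    rw [hz, norm_mul, Complex.norm_exp_ofReal_mul_I, mul_one, Complex.norm_real,
      Real.norm_eq_abs, _root_.abs_of_nonneg hq0]
    exact hq1
  have H := Complex.hasSum_taylorSeries_neg_log hznorm
  have Hre := Complex.reCLM.hasSum H
  have hterm : ∀ n : ℕ, Complex.reCLM (z ^ n / n) = q ^ n * Real.cos ((n:ℝ) * θ) / n := by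
    intro n
    have hzn : z ^ n / (n : ℂ) =
        ((q ^ n / n : ℝ) : ℂ) * Complex.exp ((((n:ℝ) * θ) : ℝ) * Complex.I) := by
      rw [hz, mul_pow, ← Complex.exp_nat_mul]
      push_cast
      ring
    simp only [Complex.reCLM_apply, hzn, Complex.re_ofReal_mul,
      Complex.exp_ofReal_mul_I_re]
    ring
  have hval : Complex.reCLM (-Complex.log (1 - z)) =
      -(1/2) * Real.log (1 - 2 * q * Real.cos θ + q ^ 2) := by
    have hnsq : Complex.normSq (1 - z) = 1 - 2 * q * Real.cos θ + q ^ 2 := by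
      have h1 : (1 - z).re = 1 - q * Real.cos θ := by
        simp [hz, Complex.exp_ofReal_mul_I_re]
      have h2 : (1 - z).im = -(q * Real.sin θ) := by
        simp [hz, Complex.exp_ofReal_mul_I_im]
      rw [Complex.normSq_apply, h1, h2]
      have := Real.sin_sq_add_cos_sq θ
      nlinarith [this]
    simp only [Complex.reCLM_apply, Complex.neg_re, Complex.log_re]
    rw [Complex.norm_def, hnsq, Real.log_sqrt]
    · ring
    · nlinarith [Real.sin_sq_add_cos_sq θ, sq_nonneg (1 - q * Real.cos θ),
        sq_nonneg (q * Real.sin θ)]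
  rw [funext hterm, hval] at Hre
  have := Hre.mul_left (-2)
  convert this using 1
  · rfl
  · funext n; ring
  · ring

lemma MP.integral_sin_sq_log {q : ℝ} (hq0 : 0 ≤ q) (hq1 : q < 1) :
    ∫ θ in (0:ℝ)..π, Real.sin θ ^ 2 * Real.log (1 - 2 * q * Real.cos θ + q ^ 2)
      = π * q ^ 2 / 4 := by
  have hple : (0:ℝ) ≤ π := Real.pi_pos.le
  set μ := volume.restrict (Set.Ioc (0:ℝ) π) with hμ
  set F : ℕ → ℝ → ℝ :=
    fun n θ => Real.sin θ ^ 2 * (-2 * q ^ n * Real.cos ((n:ℝ) * θ) / n) with hF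
  have hFc : ∀ n, Continuous (F n) := by
    intro n
    apply Continuous.mul
    · exact (Real.continuous_sin.pow 2)
    · exact ((continuous_const.mul (Real.continuous_cos.comp
        (continuous_const.mul continuous_id))).div_const _)
  have hFint : ∀ n, Integrable (F n) μ := fun n => (hFc n).integrableOn_Ioc
  have hbound : ∀ n θ, ‖F n θ‖ ≤ 2 * q ^ n := by
    intro n θ
    rcases Nat.eq_zero_or_pos n with rfl | hn
    · simp [hF]
    · have h1 : |Real.sin θ ^ 2| ≤ 1 := by
        rw [abs_pow]
        exact pow_le_one₀ (abs_nonneg _) (Real.abs_sin_le_one θ)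
      have h2 : |(-2 * q ^ n * Real.cos ((n:ℝ) * θ) / n)| ≤ 2 * q ^ n := by
        rw [abs_div, abs_mul, abs_mul]
        have hq : |q ^ n| = q ^ n := abs_of_nonneg (by positivity)
        have hcos := Real.abs_cos_le_one ((n:ℝ) * θ)
        have hnn : (1:ℝ) ≤ |(n:ℝ)| := by
          rw [Nat.abs_cast]; exact_mod_cast hn
        calc |(-2:ℝ)| * |q ^ n| * |Real.cos ((n:ℝ) * θ)| / |(n:ℝ)|
            ≤ 2 * q ^ n * 1 / 1 := by
              apply div_le_div₀ (by positivity) _ one_pos hnn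
              rw [hq]
              have : |(-2:ℝ)| = 2 := by norm_num
              rw [this]
              exact mul_le_mul_of_nonneg_left hcos (by positivity)
          _ = 2 * q ^ n := by ring
      calc ‖F n θ‖ = |Real.sin θ ^ 2| * |(-2 * q ^ n * Real.cos ((n:ℝ) * θ) / n)| := by
            rw [hF]; exact abs_mul _ _
        _ ≤ 1 * (2 * q ^ n) := mul_le_mul h1 h2 (abs_nonneg _) one_pos.le
        _ = 2 * q ^ n := one_mul _
  have hμuniv : (μ Set.univ).toReal = π := by
    rw [hμ, Measure.restrict_apply_univ, Real.volume_Ioc]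
    simp [hple]
  have hsummable : Summable fun n => ∫ θ, ‖F n θ‖ ∂μ := by
    apply Summable.of_nonneg_of_le
      (fun n => integral_nonneg fun θ => norm_nonneg _)
      (fun n => ?_) (((summable_geometric_of_lt_one hq0 hq1).mul_left (π * 2)))
    calc ∫ θ, ‖F n θ‖ ∂μ ≤ ∫ _θ, 2 * q ^ n ∂μ := by
          apply integral_mono (hFint n).norm (integrable_const _)
          intro θ; exact hbound n θ
      _ = π * 2 * q ^ n := by
          rw [integral_const, measureReal_def, hμuniv, smul_eq_mul]; ring
  have key := hasSum_integral_of_summable_integral_norm hFint hsummable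
  have htsum : ∀ θ, ∑' n, F n θ =
      Real.sin θ ^ 2 * Real.log (1 - 2 * q * Real.cos θ + q ^ 2) :=
    fun θ => ((MP.hasSum_log_expr hq0 hq1 θ).mul_left (Real.sin θ ^ 2)).tsum_eq
  have hFn : ∀ n : ℕ, (∫ θ, F n θ ∂μ) =
      (-2 * q ^ n / n) * (if n = 0 then π / 2 else if n = 2 then -(π / 4) else 0) := by
    intro n
    have he : ∀ θ, F n θ = (-2 * q ^ n / n) * (Real.sin θ ^ 2 * Real.cos ((n:ℝ) * θ)) := by
      intro θ; rw [hF]; ring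
    calc (∫ θ, F n θ ∂μ)
        = ∫ θ, (-2 * q ^ n / n) * (Real.sin θ ^ 2 * Real.cos ((n:ℝ) * θ)) ∂μ := by
          simp_rw [he]
      _ = (-2 * q ^ n / n) * ∫ θ, Real.sin θ ^ 2 * Real.cos ((n:ℝ) * θ) ∂μ :=
          integral_const_mul _ _
      _ = (-2 * q ^ n / n) *
            (if n = 0 then π / 2 else if n = 2 then -(π / 4) else 0) := by
          rw [hμ, ← intervalIntegral.integral_of_le hple, MP.integral_sin_sq_cos]
  have hgeq : (fun n : ℕ => ∫ θ, F n θ ∂μ) =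
      fun n : ℕ => if n = 2 then π * q ^ 2 / 4 else 0 := by
    funext n
    rw [hFn]
    rcases Nat.eq_zero_or_pos n with rfl | hn
    · norm_num
    by_cases h2 : n = 2
    · subst h2; norm_num; ring
    · have h0 : n ≠ 0 := by omega
      simp [h0, h2]
  rw [hgeq] at key
  have key2 : HasSum (fun n : ℕ => if n = 2 then π * q ^ 2 / 4 else 0) (π * q ^ 2 / 4) :=
    hasSum_ite_eq 2 _
  have := key2.unique key
  rw [intervalIntegral.integral_of_le hple, ← hμ]
  refine Eq.trans ?_ this.symm
  congr 1
  funext θ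
  exact (htsum θ).symm

lemma MP.key_integral {c : ℝ} (hc0 : 0 < c) (hc1 : c < 1) :
    ∫ x in (1 + c - 2 * Real.sqrt c)..(1 + c + 2 * Real.sqrt c),
        Real.log x * Real.sqrt (4 * c - (x - 1 - c) ^ 2) = π * c ^ 2 := by
  have hq0 : 0 < Real.sqrt c := Real.sqrt_pos.mpr hc0
  set q : ℝ := Real.sqrt c with hqdef
  have hqsq : q ^ 2 = c := Real.sq_sqrt hc0.le
  have hq1 : q < 1 := by
    rw [hqdef]; exact (Real.sqrt_lt' one_pos).mpr (by simpa using hc1)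
  set f : ℝ → ℝ := fun θ => 1 + c - 2 * q * Real.cos θ with hfdef
  set G : ℝ → ℝ := fun x => Real.log x * Real.sqrt (4 * c - (x - 1 - c) ^ 2) with hGdef
  have hderiv : ∀ θ ∈ Set.uIcc (0:ℝ) π, HasDerivAt f (2 * q * Real.sin θ) θ := by
    intro θ _
    have h1 : HasDerivAt (fun t : ℝ => Real.cos t) (-Real.sin θ) θ := Real.hasDerivAt_cos θ
    have h2 := (h1.const_mul (2 * q)).const_sub (1 + c)
    simpa [hfdef, mul_comm, mul_assoc, mul_left_comm] using h2
  have hcont : ContinuousOn (fun θ => 2 * q * Real.sin θ) (Set.uIcc 0 π) :=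
    (continuous_const.mul Real.continuous_sin).continuousOn
  have himg : ∀ x ∈ f '' Set.uIcc 0 π, 0 < x := by
    rintro x ⟨θ, _, rfl⟩
    have hcos : Real.cos θ ≤ 1 := Real.cos_le_one θ
    have : (1 - q)^2 ≤ 1 + c - 2 * q * Real.cos θ := by nlinarith
    have hq1' : 1 - q ≠ 0 := by intro h; nlinarith
    have hne : (0:ℝ) < (1 - q)^2 := by positivity
    calc (0:ℝ) < (1-q)^2 := hne
      _ ≤ f θ := this
  have hGcont : ContinuousOn G (f '' Set.uIcc 0 π) := by
    apply ContinuousOn.mul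
    · exact Real.continuousOn_log.mono (fun x hx => ne_of_gt (himg x hx))
    · exact (Real.continuous_sqrt.comp (by continuity)).continuousOn
  have hsub := intervalIntegral.integral_comp_smul_deriv' hderiv hcont hGcont
  have hf0 : f 0 = 1 + c - 2 * q := by simp [hfdef]
  have hfπ : f π = 1 + c + 2 * q := by simp [hfdef]
  rw [hf0, hfπ] at hsub
  rw [hqdef] at hsub ⊢
  rw [← hsub]
  have hLHS : ∀ θ ∈ Set.uIcc (0:ℝ) π, (2 * q * Real.sin θ) • ((G ∘ f) θ) =
      4 * c * (Real.sin θ ^ 2 * Real.log (1 - 2 * q * Real.cos θ + q ^ 2)) := by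
    intro θ hθ
    rw [Set.uIcc_of_le Real.pi_pos.le] at hθ
    have hsin : 0 ≤ Real.sin θ := Real.sin_nonneg_of_nonneg_of_le_pi hθ.1 hθ.2
    have h1 : f θ - 1 - c = -(2 * q * Real.cos θ) := by rw [hfdef]; ring
    have h2 : 4 * c - (f θ - 1 - c) ^ 2 = (2 * q * Real.sin θ) ^ 2 := by
      rw [h1]
      have := Real.sin_sq_add_cos_sq θ
      nlinarith
    have h3 : Real.sqrt (4 * c - (f θ - 1 - c) ^ 2) = 2 * q * Real.sin θ := by
      rw [h2, Real.sqrt_sq (by positivity)]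
    have h4 : f θ = 1 - 2 * q * Real.cos θ + q ^ 2 := by rw [hfdef, hqsq]; ring
    have h5 : (G ∘ f) θ = Real.log (1 - 2 * q * Real.cos θ + q ^ 2) * (2 * q * Real.sin θ) := by
      simp only [Function.comp_apply, hGdef]
      rw [h3, h4]
    rw [smul_eq_mul, h5, ← hqsq]
    ring
  rw [intervalIntegral.integral_congr hLHS, intervalIntegral.integral_const_mul,
    MP.integral_sin_sq_log hq0.le hq1, hqsq]
  ring

/-- For every `0 < c < 1`, the entropy integral of the
Marchenko–Pastur measure `π_c` equals `h_c = c²/2`. -/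
theorem mpMeasure_entropy_integral_lt_one (c : ℝ) (hc0 : 0 < c) (hc1 : c < 1) :
    ∫ x, x * Real.log x ∂(mpMeasure c) = c ^ 2 / 2 := by
  have hq0 : 0 < Real.sqrt c := Real.sqrt_pos.mpr hc0
  have hqsq : Real.sqrt c ^ 2 = c := Real.sq_sqrt hc0.le
  have hq1 : Real.sqrt c < 1 := (Real.sqrt_lt' one_pos).mpr (by simpa using hc1)
  set a : ℝ := 1 + c - 2 * Real.sqrt c with hadef
  set b : ℝ := 1 + c + 2 * Real.sqrt c with hbdef
  have ha : 0 < a := by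
    have : a = (1 - Real.sqrt c)^2 := by rw [hadef]; nlinarith [hqsq]
    rw [this]
    have : 1 - Real.sqrt c ≠ 0 := by intro h; nlinarith
    positivity
  have hab : a ≤ b := by rw [hadef, hbdef]; nlinarith
  -- nonnegativity of density
  have hd_nonneg : ∀ x, 0 ≤ mpDensity c x := by
    intro x
    unfold mpDensity
    split_ifs with h
    · have hx : 0 < x := lt_of_lt_of_le ha h.1
      positivity
    · exact le_refl _

  set G : ℝ → ℝ := fun x => Real.log x * (Real.sqrt (4*c - (x-1-c)^2) / (2*π)) with hGdef
  have hkey : ∀ x, mpDensity c x * (x * Real.log x) = Set.indicator (Set.Icc a b) G x := by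
    intro x
    unfold mpDensity
    by_cases h : x ∈ Set.Icc a b
    · have hx : 0 < x := lt_of_lt_of_le ha h.1
      rw [Set.indicator_of_mem h, if_pos (⟨h.1, h.2⟩ : 1 + c - 2 * Real.sqrt c ≤ x ∧ x ≤ 1 + c + 2 * Real.sqrt c)]
      rw [hGdef]
      have hπ : (π:ℝ) ≠ 0 := Real.pi_ne_zero
      field_simp
    · rw [Set.indicator_of_notMem h, if_neg, zero_mul]
      intro hcond
      exact h ⟨hcond.1, hcond.2⟩
  have hmd : Measurable (mpDensity c) := by
    unfold mpDensity
    refine Measurable.ite ?_ ?_ measurable_const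
    · exact measurableSet_Icc
    · exact (Real.continuous_sqrt.comp (by continuity)).measurable.div
        ((continuous_const.mul continuous_id)).measurable
  have hGint : IntegrableOn G (Set.Icc a b) := by
    apply ContinuousOn.integrableOn_Icc
    apply ContinuousOn.mul
    · exact Real.continuousOn_log.mono (fun x hx => ne_of_gt (lt_of_lt_of_le ha hx.1))
    · exact ((Real.continuous_sqrt.comp (by continuity)).div_const _).continuousOn
  have hfd : Integrable (fun x : ℝ => x * Real.log x) (Measure.dirac (0:ℝ)) := by
    refine ⟨Real.continuous_mul_log.aestronglyMeasurable, ?_⟩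
    show ∫⁻ x, ‖x * Real.log x‖₊ ∂(Measure.dirac (0:ℝ)) < ⊤
    rw [lintegral_dirac]
    exact ENNReal.coe_lt_top
  have h1 : Integrable (fun x : ℝ => x * Real.log x)
      (ENNReal.ofReal (max (1 - c) 0) • Measure.dirac 0) :=
    hfd.smul_measure ENNReal.ofReal_ne_top
  have h2 : Integrable (fun x : ℝ => x * Real.log x)
      (volume.withDensity fun x => ENNReal.ofReal (mpDensity c x)) := by
    have hmd' : Measurable fun x => ENNReal.ofReal (mpDensity c x) :=
      ENNReal.measurable_ofReal.comp hmd
    rw [integrable_withDensity_iff hmd' (ae_of_all _ fun x => ENNReal.ofReal_lt_top)]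
    have hindid : (fun x => (x * Real.log x) * (ENNReal.ofReal (mpDensity c x)).toReal)
        = Set.indicator (Set.Icc a b) G := by
      funext x
      rw [ENNReal.toReal_ofReal (hd_nonneg x), mul_comm]
      exact hkey x
    rw [hindid]
    exact hGint.integrable_indicator measurableSet_Icc
  rw [mpMeasure, integral_add_measure h1 h2]
  have hz : ∫ x, x * Real.log x ∂(ENNReal.ofReal (max (1-c) 0) • Measure.dirac 0) = 0 := by
    rw [integral_smul_measure, integral_dirac]
    simp
  rw [hz, zero_add]
  have hcoe : (fun x => ENNReal.ofReal (mpDensity c x))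
      = fun x => (((mpDensity c x).toNNReal : ℝ≥0) : ℝ≥0∞) := rfl
  rw [hcoe, integral_withDensity_eq_integral_smul (show Measurable fun x => (mpDensity c x).toNNReal from measurable_real_toNNReal.comp hmd) _]
  have hsmul : (fun x => ((mpDensity c x).toNNReal) • (x * Real.log x))
      = Set.indicator (Set.Icc a b) G := by
    funext x
    have hco : ((mpDensity c x).toNNReal : ℝ) = mpDensity c x :=
      Real.coe_toNNReal _ (hd_nonneg x)
    rw [NNReal.smul_def, hco, smul_eq_mul]
    exact hkey x
  rw [hsmul, integral_indicator measurableSet_Icc, integral_Icc_eq_integral_Ioc,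
    ← intervalIntegral.integral_of_le hab]
  have hGeq : ∀ x ∈ Set.uIcc a b, G x
      = (Real.log x * Real.sqrt (4 * c - (x - 1 - c) ^ 2)) / (2 * π) := by
    intro x _; rw [hGdef]; ring
  rw [intervalIntegral.integral_congr hGeq, intervalIntegral.integral_div, hadef, hbdef,
    MP.key_integral hc0 hc1]
  have hπ : (π:ℝ) ≠ 0 := Real.pi_ne_zero
  field_simp
end

section
/- Let Γ be a finite multigraph in which each edge e carries a dimension n_e ≥ 1, and let the vertex set V be partitioned as V = W ⊔ W^c. Let S be the set of half-edges attached to vertices of W (an adapted partition). Then for every choice of dimensions n_e, every choice of unitaries U_v at the vertices, the marginal ρ_S of the associated graph state satisfies exactly H(ρ_S) = Σ_{e ∈ ∂} ln n_e, where ∂ is the set of edges having one endpoint in W and the other in W^c. In particular, if n_e = N for all edges, H(ρ_S) = |∂|·ln N. -/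
/-- A finite multigraph: finite vertex and edge types, each edge has an
ordered pair of (possibly equal) endpoints. -/
structure Multigraph where
  V : Type
  E : Type
  [fintV : Fintype V]
  [fintE : Fintype E]
  [decV : DecidableEq V]
  [decE : DecidableEq E]
  ends : E → V × V

attribute [instance] Multigraph.fintV Multigraph.fintE Multigraph.decV Multigraph.decE

namespace Multigraph

variable (G : Multigraph)

/-- A half-edge of `G`: each edge `e` contributes the two half-edges
`(e, false)` (at the first endpoint) and `(e, true)` (at the second endpoint). -/
abbrev Half := G.E × Bool

/-- The vertex at which a half-edge sits. -/
def vertexOf (h : G.Half) : G.V := if h.2 then (G.ends h.1).2 else (G.ends h.1).1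

/-- The degree of a vertex: the number of half-edges at it (loops count twice). -/
def deg (v : G.V) : ℕ := (Finset.univ.filter fun h : G.Half => G.vertexOf h = v).card

/-- A marking `M` (a set of half-edges) is compatible with the counting function `s`
if it contains exactly `s v` half-edges at each vertex `v`. -/
def Compatible (s : G.V → ℕ) (M : Finset G.Half) : Prop :=
  ∀ v : G.V, (M.filter fun h : G.Half => G.vertexOf h = v).card = s v

/-- The number of crossings of a marking `M`: the number of edges having exactly one
of their two half-edges in `M`. -/
def cr (M : Finset G.Half) : ℕ :=
  (Finset.univ.filter fun e : G.E =>
    ((e, false) ∈ M ∧ (e, true) ∉ M) ∨ ((e, false) ∉ M ∧ (e, true) ∈ M)).card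

/-- The area `|∂S|` of the pair `(G, s)`: the maximum number of crossings over
all markings compatible with `s`. -/
noncomputable def area (s : G.V → ℕ) : ℕ :=
  sSup {k : ℕ | ∃ M : Finset G.Half, G.Compatible s M ∧ G.cr M = k}

/-- Nodes of the network `N_{Γ,s}`: the vertices of `G` together with a
source (`Sum.inr true`) and a sink (`Sum.inr false`). -/
abbrev Node := G.V ⊕ Bool

/-- The source of the network. -/
def source : G.Node := Sum.inr true

/-- The sink of the network. -/
def sink : G.Node := Sum.inr false

/-- The number of edges of `G` joining `v` and `w`. -/
def edgesBetween (v w : G.V) : ℕ :=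
  (Finset.univ.filter fun e : G.E => G.ends e = (v, w) ∨ G.ends e = (w, v)).card

/-- The capacities of the network `N_{Γ,s}`: `t v = deg v - s v` from the source to `v`,
`s v` from `v` to the sink, the number of edges between `v` and `w` for distinct
vertices `v, w`, and `0` otherwise. -/
def cap (s : G.V → ℕ) : G.Node → G.Node → ℕ
  | Sum.inr true, Sum.inl v => G.deg v - s v
  | Sum.inl v, Sum.inr false => s v
  | Sum.inl v, Sum.inl w => if v = w then 0 else G.edgesBetween v w
  | _, _ => 0

/-- A flow in the network `N_{Γ,s}`: dominated by the capacities, and the inflow equals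
the outflow at every node of `V`. -/
def IsFlow (s : G.V → ℕ) (f : G.Node → G.Node → ℕ) : Prop :=
  (∀ x y : G.Node, f x y ≤ G.cap s x y) ∧
    ∀ v : G.V, (∑ x : G.Node, f x (Sum.inl v)) = ∑ x : G.Node, f (Sum.inl v) x

/-- The value of a flow: the total flow out of the source. -/
def flowValue (f : G.Node → G.Node → ℕ) : ℕ := ∑ x : G.Node, f G.source x

/-- The maximal flow value `X_{Γ,s}` of the network `N_{Γ,s}`. -/
noncomputable def maxFlow (s : G.V → ℕ) : ℕ :=
  sSup {k : ℕ | ∃ f : G.Node → G.Node → ℕ, G.IsFlow s f ∧ G.flowValue f = k}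


end Multigraph

open MeasureTheory

/-- Borel-type measurable space on matrices (entrywise product σ-algebra). -/
instance matrixMeasurableSpace {m n α : Type*} [MeasurableSpace α] :
    MeasurableSpace (Matrix m n α) :=
  inferInstanceAs (MeasurableSpace (m → n → α))

/-- The von Neumann entropy `H(ρ) = -∑ λᵢ ln λᵢ` of a (Hermitian) matrix, the sum
running over the eigenvalues, with the conventions `0 ln 0 = 0` (via `Real.log 0 = 0`)
and junk value `0` for non-Hermitian matrices. -/
noncomputable def vnEntropy {ι : Type*} [Fintype ι] [DecidableEq ι]
    (ρ : Matrix ι ι ℂ) : ℝ :=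
  if h : ρ.IsHermitian then -∑ i, h.eigenvalues i * Real.log (h.eigenvalues i) else 0

/-- The Rényi entropy `H_q(ρ) = (1-q)⁻¹ ln Tr(ρ^q)` of a (Hermitian) matrix, where
`Tr(ρ^q) = ∑_{λᵢ ≠ 0} λᵢ^q` is computed by functional calculus on the nonzero
eigenvalues (so that `q = 0` recovers the rank); junk value `0` for non-Hermitian
matrices. -/
noncomputable def renyiEntropy {ι : Type*} [Fintype ι] [DecidableEq ι]
    (q : ℝ) (ρ : Matrix ι ι ℂ) : ℝ :=
  if h : ρ.IsHermitian then
    (1 - q)⁻¹ * Real.log (∑ i, if h.eigenvalues i = 0 then 0 else h.eigenvalues i ^ q)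
  else 0

namespace Multigraph

variable (G : Multigraph)

/-- The index set of the total Hilbert space of the graph state: each half-edge of
the edge `e` carries the space `ℂ^{n e}`. -/
abbrev HIdx (n : G.E → ℕ) := (h : G.Half) → Fin (n h.1)

/-- The index set of the Hilbert space attached to the vertex `v`: the tensor product
of the factors of the half-edges at `v`. -/
abbrev VIdx (n : G.E → ℕ) (v : G.V) :=
  (h : {h : G.Half // G.vertexOf h = v}) → Fin (n h.1.1)

/-- The graph state vector `|Ψ⟩ = (⊗_v U_v)(⊗_e |Φ⁺_e⟩)`, where
`|Φ⁺_e⟩ = (n e)^{-1/2} ∑ᵢ |i⟩⊗|i⟩` is the maximally entangled state on the two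
half-edges of `e`, and `U_v` is a matrix acting on the factors at the vertex `v`. -/
noncomputable def gvec (n : G.E → ℕ) (U : ∀ v : G.V, Matrix (G.VIdx n v) (G.VIdx n v) ℂ) :
    G.HIdx n → ℂ :=
  fun x => ∑ y : G.HIdx n,
    (∏ v : G.V, U v (fun h => x h.1) (fun h => y h.1)) *
      ∏ e : G.E, (if y (e, false) = y (e, true) then ((Real.sqrt (n e) : ℝ) : ℂ)⁻¹ else 0)

/-- Glue an assignment on the half-edges in `S` and one on the half-edges outside `S`
to an assignment on all half-edges. -/
def glue (n : G.E → ℕ) (S : Finset G.Half)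
    (a : (h : {h : G.Half // h ∈ S}) → Fin (n h.1.1))
    (b : (h : {h : G.Half // h ∉ S}) → Fin (n h.1.1)) : G.HIdx n :=
  fun h => if hh : h ∈ S then a ⟨h, hh⟩ else b ⟨h, hh⟩

/-- The marginal `ρ_S = Tr_T |Ψ⟩⟨Ψ|` of the graph state, obtained by the partial
trace over the half-edges outside `S`. -/
noncomputable def gmarg (n : G.E → ℕ) (S : Finset G.Half)
    (U : ∀ v : G.V, Matrix (G.VIdx n v) (G.VIdx n v) ℂ) :
    Matrix ((h : {h : G.Half // h ∈ S}) → Fin (n h.1.1))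
      ((h : {h : G.Half // h ∈ S}) → Fin (n h.1.1)) ℂ :=
  Matrix.of fun a a' =>
    ∑ b : (h : {h : G.Half // h ∉ S}) → Fin (n h.1.1),
      G.gvec n U (G.glue n S a b) * star (G.gvec n U (G.glue n S a' b))

/-- The counting function of a set `S` of half-edges: `s v` is the number of
half-edges of `S` at the vertex `v`. -/
def countOf (S : Finset G.Half) : G.V → ℕ :=
  fun v => (S.filter fun h : G.Half => G.vertexOf h = v).card

end Multigraph

section AreaLawAux
open scoped Matrix
open Finset
variable (G : Multigraph) (n : G.E → ℕ) (W : Finset G.V)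

private def alFiberEquiv {D I : Type*} (β : D → Type*) (κ : D → I) :
    ((d : D) → β d) ≃ ((i : I) → (h : {d : D // κ d = i}) → β h.1) where
  toFun b i h := b h.1
  invFun F d := F (κ d) ⟨d, rfl⟩
  left_inv b := rfl
  right_inv F := by
    funext i h
    obtain ⟨d, hd⟩ := h
    subst hd
    rfl

private lemma alSumProdFiber {D I : Type*} [Fintype D] [DecidableEq D] [Fintype I] [DecidableEq I]
    {β : D → Type*} [∀ d, Fintype (β d)] [∀ d, DecidableEq (β d)] (κ : D → I)
    (g : (i : I) → ((h : {d : D // κ d = i}) → β h.1) → ℂ) :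
    (∑ b : (d : D) → β d, ∏ i : I, g i fun h => b h.1) =
      ∏ i : I, ∑ z : ((h : {d : D // κ d = i}) → β h.1), g i z := by
  rw [Fintype.prod_sum]
  exact Fintype.sum_equiv (alFiberEquiv β κ) _ _ (fun b => rfl)

lemma al_vertexOf_false (e : G.E) : G.vertexOf (e, false) = (G.ends e).1 := rfl
lemma al_vertexOf_true (e : G.E) : G.vertexOf (e, true) = (G.ends e).2 := rfl

abbrev alS : Finset G.Half := Finset.univ.filter fun h : G.Half => G.vertexOf h ∈ W

lemma mem_alS {h : G.Half} : h ∈ alS G W ↔ G.vertexOf h ∈ W := by simp [alS]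

abbrev alSIdx := (h : {h : G.Half // h ∈ alS G W}) → Fin (n h.1.1)
abbrev alTIdx := (h : {h : G.Half // h ∉ alS G W}) → Fin (n h.1.1)

def alSplit : alSIdx G n W × alTIdx G n W ≃ G.HIdx n where
  toFun p := G.glue n (alS G W) p.1 p.2
  invFun x := (fun h => x h.1, fun h => x h.1)
  left_inv p := by
    obtain ⟨a, b⟩ := p
    refine Prod.ext ?_ ?_ <;> funext h
    · exact dif_pos h.2
    · exact dif_neg h.2
  right_inv x := by
    funext h
    by_cases hh : h ∈ alS G W
    · exact dif_pos hh
    · exact dif_neg hh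

def alVertEquiv (P : G.Half → Prop) (v : G.V) (hall : ∀ h : G.Half, G.vertexOf h = v → P h) :
    ((f : {d : {h : G.Half // P h} // G.vertexOf d.1 = v}) → Fin (n f.1.1.1)) ≃ G.VIdx n v where
  toFun z h := z ⟨⟨h.1, hall h.1 h.2⟩, h.2⟩
  invFun u f := u ⟨f.1.1, f.2⟩
  left_inv z := rfl
  right_inv u := rfl

lemma alVertEmpty (P : G.Half → Prop) (v : G.V) (hnone : ∀ h : G.Half, G.vertexOf h = v → ¬ P h) :
    IsEmpty {d : {h : G.Half // P h} // G.vertexOf d.1 = v} :=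
  ⟨fun f => hnone f.1.1 f.2 f.1.2⟩

def alEp (P : G.Half → Prop) (e : G.E) (b : Bool) (hb : P (e, b)) :
    {d : {h : G.Half // P h} // d.1.1 = e} := ⟨⟨(e, b), hb⟩, rfl⟩

def alEdgeEquiv2 (P : G.Half → Prop) (e : G.E) (h0 : P (e, false)) (h1 : P (e, true)) :
    ((f : {d : {h : G.Half // P h} // d.1.1 = e}) → Fin (n f.1.1.1)) ≃ (Fin (n e) × Fin (n e)) where
  toFun z := (z (alEp G P e false h0), z (alEp G P e true h1))
  invFun u f := Fin.cast (congrArg n f.2).symm (cond f.1.1.2 u.2 u.1)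
  left_inv z := by
    funext f
    obtain ⟨⟨⟨e', b⟩, hP⟩, he⟩ := f
    dsimp only at he
    subst he
    cases b <;> rfl
  right_inv u := rfl

def alEdgeEquivF (P : G.Half → Prop) (e : G.E) (h0 : P (e, false)) (h1 : ¬ P (e, true)) :
    ((f : {d : {h : G.Half // P h} // d.1.1 = e}) → Fin (n f.1.1.1)) ≃ Fin (n e) where
  toFun z := z (alEp G P e false h0)
  invFun u f := Fin.cast (congrArg n f.2).symm u
  left_inv z := by
    funext f
    obtain ⟨⟨⟨e', b⟩, hP⟩, he⟩ := f
    dsimp only at he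
    subst he
    cases b
    · rfl
    · exact absurd hP h1
  right_inv u := rfl

def alEdgeEquivT (P : G.Half → Prop) (e : G.E) (h0 : ¬ P (e, false)) (h1 : P (e, true)) :
    ((f : {d : {h : G.Half // P h} // d.1.1 = e}) → Fin (n f.1.1.1)) ≃ Fin (n e) where
  toFun z := z (alEp G P e true h1)
  invFun u f := Fin.cast (congrArg n f.2).symm u
  left_inv z := by
    funext f
    obtain ⟨⟨⟨e', b⟩, hP⟩, he⟩ := f
    dsimp only at he
    subst he
    cases b
    · exact absurd hP h0
    · rfl
  right_inv u := rfl

lemma alEdgeEmpty (P : G.Half → Prop) (e : G.E) (h0 : ¬ P (e, false)) (h1 : ¬ P (e, true)) :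
    IsEmpty {d : {h : G.Half // P h} // d.1.1 = e} := by
  refine ⟨fun f => ?_⟩
  obtain ⟨⟨⟨e', b⟩, hP⟩, he⟩ := f
  dsimp only at he
  subst he
  cases b
  · exact h0 hP
  · exact h1 hP



private lemma alPair1 {m : ℕ} (a b : Fin m) (x y : ℂ) :
    (∑ t : Fin m, (if a = t then x else 0) * (if b = t then y else 0)) = if a = b then x * y else 0 := by
  simp only [ite_mul, zero_mul, mul_ite, mul_zero]
  rw [Finset.sum_ite_eq]
  simp [eq_comm]

private lemma alPair2 {m : ℕ} (a b : Fin m) (x y : ℂ) :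
    (∑ t : Fin m, (if t = a then x else 0) * (if t = b then y else 0)) = if a = b then x * y else 0 := by
  simp only [ite_mul, zero_mul, mul_ite, mul_zero]
  rw [Finset.sum_ite_eq']
  simp [eq_comm]

private lemma alDiag {m : ℕ} (x : ℂ) :
    (∑ p : Fin m × Fin m, if p.1 = p.2 then x else 0) = (m : ℂ) * x := by
  rw [Fintype.sum_prod_type]
  simp [Finset.sum_ite_eq]

private lemma alUniSum {ι : Type*} [Fintype ι] [DecidableEq ι] (Uv : Matrix ι ι ℂ)
    (hUv : Uv ∈ Matrix.unitaryGroup ι ℂ) (w w' : ι) :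
    ∑ u : ι, Uv u w * star (Uv u w') = if w' = w then 1 else 0 := by
  have h2 := congrFun (congrFun (hUv.1 : star Uv * Uv = 1) w') w
  simpa [Matrix.mul_apply, Matrix.star_apply, Matrix.one_apply, mul_comm] using h2

private lemma alUniSum' {ι : Type*} [Fintype ι] [DecidableEq ι] (Uv : Matrix ι ι ℂ)
    (hUv : Uv ∈ Matrix.unitaryGroup ι ℂ) (w w' : ι) :
    ∑ u : ι, star (Uv u w) * Uv u w' = if w = w' then 1 else 0 := by
  have h2 := congrFun (congrFun (hUv.1 : star Uv * Uv = 1) w) w'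
  simpa [Matrix.mul_apply, Matrix.star_apply, Matrix.one_apply] using h2

noncomputable def alPhi (y : G.HIdx n) : ℂ :=
  ∏ e : G.E, (if y (e, false) = y (e, true) then ((Real.sqrt (n e) : ℝ) : ℂ)⁻¹ else 0)

noncomputable def alRe (e : G.E) : ℂ := ((Real.sqrt (n e) : ℝ) : ℂ)⁻¹

lemma alStarRe (e : G.E) : star (alRe G n e) = alRe G n e := by simp [alRe]

lemma alReSq (e : G.E) : alRe G n e * alRe G n e = ((n e : ℂ))⁻¹ := by
  rw [alRe, ← mul_inv, ← Complex.ofReal_mul, Real.mul_self_sqrt (by positivity)]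
  simp

def alBd (e : G.E) : Prop :=
  ((G.ends e).1 ∈ W ∧ (G.ends e).2 ∉ W) ∨ ((G.ends e).1 ∉ W ∧ (G.ends e).2 ∈ W)

instance (e : G.E) : Decidable (alBd G W e) := by unfold alBd; infer_instance

lemma mem_alS_false (e : G.E) : ((e, false) ∈ alS G W) ↔ (G.ends e).1 ∈ W := by
  rw [mem_alS, al_vertexOf_false]

lemma mem_alS_true (e : G.E) : ((e, true) ∈ alS G W) ↔ (G.ends e).2 ∈ W := by
  rw [mem_alS, al_vertexOf_true]

abbrev alEFS (e : G.E) := (f : {d : {h : G.Half // h ∈ alS G W} // d.1.1 = e}) → Fin (n f.1.1.1)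
abbrev alEFT (e : G.E) := (f : {d : {h : G.Half // h ∉ alS G W} // d.1.1 = e}) → Fin (n f.1.1.1)

def alRest (c : alSIdx G n W) (e : G.E) : alEFS G n W e := fun f => c f.1

noncomputable def alMF (e : G.E) (u u' : alEFS G n W e) : ℂ :=
  if h0 : (e, false) ∈ alS G W then
    if h1 : (e, true) ∈ alS G W then
      (@ite _ (u (alEp G _ e false h0) = u (alEp G _ e true h1)) (instDecidableEqFin _ _ _) (alRe G n e) 0) *
        star (@ite _ (u' (alEp G _ e false h0) = u' (alEp G _ e true h1)) (instDecidableEqFin _ _ _) (alRe G n e) 0)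
    else (if u (alEp G _ e false h0) = u' (alEp G _ e false h0) then ((n e : ℂ))⁻¹ else 0)
  else
    if h1 : (e, true) ∈ alS G W then
      (if u (alEp G _ e true h1) = u' (alEp G _ e true h1) then ((n e : ℂ))⁻¹ else 0)
    else 1

lemma alMF_bb (e : G.E) (h0 : (e, false) ∈ alS G W) (h1 : (e, true) ∈ alS G W)
    (u u' : alEFS G n W e) :
    alMF G n W e u u' =
      (@ite _ (u (alEp G _ e false h0) = u (alEp G _ e true h1)) (instDecidableEqFin _ _ _) (alRe G n e) 0) *
        star (@ite _ (u' (alEp G _ e false h0) = u' (alEp G _ e true h1)) (instDecidableEqFin _ _ _) (alRe G n e) 0) := by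
  unfold alMF; rw [dif_pos h0, dif_pos h1]

lemma alMF_bt (e : G.E) (h0 : (e, false) ∈ alS G W) (h1 : (e, true) ∉ alS G W)
    (u u' : alEFS G n W e) :
    alMF G n W e u u' =
      (if u (alEp G _ e false h0) = u' (alEp G _ e false h0) then ((n e : ℂ))⁻¹ else 0) := by
  unfold alMF; rw [dif_pos h0, dif_neg h1]

lemma alMF_tb (e : G.E) (h0 : (e, false) ∉ alS G W) (h1 : (e, true) ∈ alS G W)
    (u u' : alEFS G n W e) :
    alMF G n W e u u' =
      (if u (alEp G _ e true h1) = u' (alEp G _ e true h1) then ((n e : ℂ))⁻¹ else 0) := by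
  unfold alMF; rw [dif_neg h0, dif_pos h1]

lemma alMF_nn (e : G.E) (h0 : (e, false) ∉ alS G W) (h1 : (e, true) ∉ alS G W)
    (u u' : alEFS G n W e) : alMF G n W e u u' = 1 := by
  unfold alMF; rw [dif_neg h0, dif_neg h1]



private lemma alPair3 {m : ℕ} (a b : Fin m) (x y : ℂ) :
    (∑ t : Fin m, (if a = t then x else 0) * (if t = b then y else 0)) = if a = b then x * y else 0 := by
  simp only [ite_mul, zero_mul, mul_ite, mul_zero]
  rw [Finset.sum_ite_eq']
  simp

-- evaluation lemmas for the edge-fiber equivs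
lemma alEdgeEquiv2_symm_ptF (P : G.Half → Prop) (e : G.E) (h0 : P (e, false)) (h1 : P (e, true))
    (u : Fin (n e) × Fin (n e)) (hb : P (e, false)) :
    (alEdgeEquiv2 G n P e h0 h1).symm u ⟨⟨(e, false), hb⟩, rfl⟩ = u.1 := rfl

lemma alEdgeEquiv2_symm_ptT (P : G.Half → Prop) (e : G.E) (h0 : P (e, false)) (h1 : P (e, true))
    (u : Fin (n e) × Fin (n e)) (hb : P (e, true)) :
    (alEdgeEquiv2 G n P e h0 h1).symm u ⟨⟨(e, true), hb⟩, rfl⟩ = u.2 := rfl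

lemma alEdgeEquivF_symm_pt (P : G.Half → Prop) (e : G.E) (h0 : P (e, false)) (h1 : ¬P (e, true))
    (u : Fin (n e)) (hb : P (e, false)) :
    (alEdgeEquivF G n P e h0 h1).symm u ⟨⟨(e, false), hb⟩, rfl⟩ = u := rfl

lemma alEdgeEquivT_symm_pt (P : G.Half → Prop) (e : G.E) (h0 : ¬P (e, false)) (h1 : P (e, true))
    (u : Fin (n e)) (hb : P (e, true)) :
    (alEdgeEquivT G n P e h0 h1).symm u ⟨⟨(e, true), hb⟩, rfl⟩ = u := rfl

lemma alEdgeEquiv2_symm_epF (P : G.Half → Prop) (e : G.E) (h0 : P (e, false)) (h1 : P (e, true))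
    (u : Fin (n e) × Fin (n e)) (hb : P (e, false)) :
    (alEdgeEquiv2 G n P e h0 h1).symm u (alEp G P e false hb) = u.1 := rfl

lemma alEdgeEquiv2_symm_epT (P : G.Half → Prop) (e : G.E) (h0 : P (e, false)) (h1 : P (e, true))
    (u : Fin (n e) × Fin (n e)) (hb : P (e, true)) :
    (alEdgeEquiv2 G n P e h0 h1).symm u (alEp G P e true hb) = u.2 := rfl

lemma alEdgeEquivF_symm_ep (P : G.Half → Prop) (e : G.E) (h0 : P (e, false)) (h1 : ¬P (e, true))
    (u : Fin (n e)) (hb : P (e, false)) :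
    (alEdgeEquivF G n P e h0 h1).symm u (alEp G P e false hb) = u := rfl

lemma alEdgeEquivT_symm_ep (P : G.Half → Prop) (e : G.E) (h0 : ¬P (e, false)) (h1 : P (e, true))
    (u : Fin (n e)) (hb : P (e, true)) :
    (alEdgeEquivT G n P e h0 h1).symm u (alEp G P e true hb) = u := rfl

lemma alRest_apply (c : alSIdx G n W) (e : G.E) (f) : alRest G n W c e f = c f.1 := rfl

lemma alBd_of (e : G.E) (h0 : (e, false) ∈ alS G W) (h1 : (e, true) ∉ alS G W) :
    alBd G W e :=
  Or.inl ⟨(mem_alS_false G W e).mp h0, fun hh => h1 ((mem_alS_true G W e).mpr hh)⟩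

lemma alBd_of' (e : G.E) (h0 : (e, false) ∉ alS G W) (h1 : (e, true) ∈ alS G W) :
    alBd G W e :=
  Or.inr ⟨fun hh => h0 ((mem_alS_false G W e).mpr hh), (mem_alS_true G W e).mp h1⟩

lemma alBd_not_bb (e : G.E) (h0 : (e, false) ∈ alS G W) (h1 : (e, true) ∈ alS G W) :
    ¬ alBd G W e := by
  rw [mem_alS_false] at h0; rw [mem_alS_true] at h1
  rintro (⟨-, hb⟩ | ⟨ha, -⟩) <;> [exact hb h1; exact ha h0]

lemma alBd_not_nn (e : G.E) (h0 : (e, false) ∉ alS G W) (h1 : (e, true) ∉ alS G W) :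
    ¬ alBd G W e := by
  rw [mem_alS_false] at h0; rw [mem_alS_true] at h1
  rintro (⟨ha, -⟩ | ⟨-, hb⟩) <;> [exact h0 ha; exact h1 hb]

lemma alEdgeSq (e : G.E) (hne : (n e : ℂ) ≠ 0) (u u' : alEFS G n W e) :
    ∑ z : alEFS G n W e, alMF G n W e u z * alMF G n W e z u' =
      (if alBd G W e then ((n e : ℂ))⁻¹ else 1) * alMF G n W e u u' := by
  by_cases h0 : (e, false) ∈ alS G W <;> by_cases h1 : (e, true) ∈ alS G W
  · -- both halves in S
    simp only [alMF_bb G n W e h0 h1]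
    rw [← Equiv.sum_comp (alEdgeEquiv2 G n (fun h => h ∈ alS G W) e h0 h1).symm, if_neg (alBd_not_bb G W e h0 h1), one_mul]
    simp only [alEdgeEquiv2_symm_epF, alEdgeEquiv2_symm_epT]
    have hs : ∀ p : Fin (n e) × Fin (n e),
        ((@ite _ (u (alEp G _ e false h0) = u (alEp G _ e true h1)) (instDecidableEqFin _ _ _) (alRe G n e) 0) *
            star (if p.1 = p.2 then alRe G n e else 0)) *
          ((if p.1 = p.2 then alRe G n e else 0) *
            star (@ite _ (u' (alEp G _ e false h0) = u' (alEp G _ e true h1)) (instDecidableEqFin _ _ _) (alRe G n e) 0)) =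
        if p.1 = p.2 then ((n e : ℂ))⁻¹ *
          ((@ite _ (u (alEp G _ e false h0) = u (alEp G _ e true h1)) (instDecidableEqFin _ _ _) (alRe G n e) 0) *
            star (@ite _ (u' (alEp G _ e false h0) = u' (alEp G _ e true h1)) (instDecidableEqFin _ _ _) (alRe G n e) 0)) else 0 := by
      intro p
      by_cases hp : p.1 = p.2
      · simp only [hp, eq_self_iff_true, if_true, alStarRe]
        rw [← alReSq G n e]; ring
      · simp [hp]
    refine (Finset.sum_congr rfl (fun p _ => hs p)).trans ?_
    rw [alDiag, ← mul_assoc, mul_inv_cancel₀ hne, one_mul]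
  · -- boundary, false half in S
    simp only [alMF_bt G n W e h0 h1]
    rw [← Equiv.sum_comp (alEdgeEquivF G n (fun h => h ∈ alS G W) e h0 h1).symm,
      if_pos (alBd_of G W e h0 h1)]
    simp only [alEdgeEquivF_symm_ep]
    refine (alPair3 (m := n e) _ _ _ _).trans ?_
    simp [mul_ite]
    rfl
  · -- boundary, true half in S
    simp only [alMF_tb G n W e h0 h1]
    rw [← Equiv.sum_comp (alEdgeEquivT G n (fun h => h ∈ alS G W) e h0 h1).symm,
      if_pos (alBd_of' G W e h0 h1)]
    simp only [alEdgeEquivT_symm_ep]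
    refine (alPair3 (m := n e) _ _ _ _).trans ?_
    simp [mul_ite]
    rfl
  · -- no half in S
    haveI := alEdgeEmpty G (fun h => h ∈ alS G W) e h0 h1
    rw [Fintype.sum_unique, if_neg (alBd_not_nn G W e h0 h1),
      alMF_nn G n W e h0 h1, alMF_nn G n W e h0 h1, alMF_nn G n W e h0 h1]

lemma alEdgeTr (e : G.E) (hne : (n e : ℂ) ≠ 0) :
    ∑ z : alEFS G n W e, alMF G n W e z z = 1 := by
  by_cases h0 : (e, false) ∈ alS G W <;> by_cases h1 : (e, true) ∈ alS G W
  · simp only [alMF_bb G n W e h0 h1]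
    rw [← Equiv.sum_comp (alEdgeEquiv2 G n (fun h => h ∈ alS G W) e h0 h1).symm]
    simp only [alEdgeEquiv2_symm_epF, alEdgeEquiv2_symm_epT]
    have hs : ∀ p : Fin (n e) × Fin (n e),
        (if p.1 = p.2 then alRe G n e else 0) * star (if p.1 = p.2 then alRe G n e else 0) =
          if p.1 = p.2 then ((n e : ℂ))⁻¹ else 0 := by
      intro p
      by_cases hp : p.1 = p.2
      · simp only [hp, eq_self_iff_true, if_true, alStarRe, alReSq]
      · simp [hp]
    refine (Finset.sum_congr rfl (fun p _ => hs p)).trans ?_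
    rw [alDiag, mul_inv_cancel₀ hne]
  · simp only [alMF_bt G n W e h0 h1]
    rw [← Equiv.sum_comp (alEdgeEquivF G n (fun h => h ∈ alS G W) e h0 h1).symm]
    simp [Finset.sum_const, mul_inv_cancel₀ hne]
  · simp only [alMF_tb G n W e h0 h1]
    rw [← Equiv.sum_comp (alEdgeEquivT G n (fun h => h ∈ alS G W) e h0 h1).symm]
    simp [Finset.sum_const, mul_inv_cancel₀ hne]
  · haveI := alEdgeEmpty G (fun h => h ∈ alS G W) e h0 h1
    rw [Fintype.sum_unique, alMF_nn G n W e h0 h1]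



private lemma alStarIf (P : Prop) [Decidable P] {x : ℂ} (hx : star x = x) :
    star (if P then x else 0) = if P then x else 0 := by split <;> simp [hx]

def alRR (c : alSIdx G n W) (e : G.E) (b : Bool) (w : alEFT G n W e) : Fin (n e) :=
  if hb : (e, b) ∈ alS G W then c ⟨(e, b), hb⟩ else w ⟨⟨(e, b), hb⟩, rfl⟩

lemma alRR_pos (c : alSIdx G n W) (e : G.E) (b : Bool) (hb : (e, b) ∈ alS G W)
    (w : alEFT G n W e) : alRR G n W c e b w = c ⟨(e, b), hb⟩ := dif_pos hb

lemma alRR_neg (c : alSIdx G n W) (e : G.E) (b : Bool) (hb : (e, b) ∉ alS G W)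
    (w : alEFT G n W e) : alRR G n W c e b w = w ⟨⟨(e, b), hb⟩, rfl⟩ := dif_neg hb

lemma alEdgePhi (e : G.E) (hne : (n e : ℂ) ≠ 0) (c c' : alSIdx G n W) :
    (∑ w : alEFT G n W e,
      (if alRR G n W c e false w = alRR G n W c e true w then alRe G n e else 0) *
        star (if alRR G n W c' e false w = alRR G n W c' e true w then alRe G n e else 0)) =
      alMF G n W e (alRest G n W c e) (alRest G n W c' e) := by
  by_cases h0 : (e, false) ∈ alS G W <;> by_cases h1 : (e, true) ∈ alS G W
  · simp only [alRR_pos G n W c e false h0, alRR_pos G n W c e true h1,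
      alRR_pos G n W c' e false h0, alRR_pos G n W c' e true h1]
    haveI := alEdgeEmpty G (fun h => h ∉ alS G W) e (not_not_intro h0) (not_not_intro h1)
    rw [Fintype.sum_unique, alMF_bb G n W e h0 h1]
    rfl
  · simp only [alRR_pos G n W c e false h0, alRR_pos G n W c' e false h0,
      alRR_neg G n W c e true h1, alRR_neg G n W c' e true h1]
    rw [← Equiv.sum_comp (alEdgeEquivT G n (fun h => h ∉ alS G W) e (not_not_intro h0) h1).symm]
    refine (Finset.sum_congr rfl fun i _ => ?_).trans ((alPair1 (m := n e) (c ⟨(e, false), h0⟩)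
      (c' ⟨(e, false), h0⟩) (alRe G n e) (alRe G n e)).trans ?_)
    · show (if c ⟨(e, false), h0⟩ = i then alRe G n e else 0) *
          star (if c' ⟨(e, false), h0⟩ = i then alRe G n e else 0) = _
      rw [alStarIf _ (alStarRe G n e)]
    rw [alReSq, alMF_bt G n W e h0 h1]
    rfl
  · simp only [alRR_neg G n W c e false h0, alRR_neg G n W c' e false h0,
      alRR_pos G n W c e true h1, alRR_pos G n W c' e true h1]
    rw [← Equiv.sum_comp (alEdgeEquivF G n (fun h => h ∉ alS G W) e h0 (not_not_intro h1)).symm]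
    refine (Finset.sum_congr rfl fun i _ => ?_).trans ((alPair2 (m := n e) (c ⟨(e, true), h1⟩)
      (c' ⟨(e, true), h1⟩) (alRe G n e) (alRe G n e)).trans ?_)
    · show (if i = c ⟨(e, true), h1⟩ then alRe G n e else 0) *
          star (if i = c' ⟨(e, true), h1⟩ then alRe G n e else 0) = _
      rw [alStarIf _ (alStarRe G n e)]
    rw [alReSq, alMF_tb G n W e h0 h1]
    rfl
  · simp only [alRR_neg G n W c e false h0, alRR_neg G n W c' e false h0,
      alRR_neg G n W c e true h1, alRR_neg G n W c' e true h1]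
    rw [← Equiv.sum_comp (alEdgeEquiv2 G n (fun h => h ∉ alS G W) e h0 h1).symm]
    simp only [alEdgeEquiv2_symm_ptF, alEdgeEquiv2_symm_ptT]
    have hs : ∀ p : Fin (n e) × Fin (n e),
        (if p.1 = p.2 then alRe G n e else 0) * star (if p.1 = p.2 then alRe G n e else 0) =
          if p.1 = p.2 then ((n e : ℂ))⁻¹ else 0 := by
      intro p
      by_cases hp : p.1 = p.2
      · simp only [hp, eq_self_iff_true, if_true, alStarRe, alReSq]
      · simp [hp]
    refine (Finset.sum_congr rfl (fun p _ => hs p)).trans ?_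
    rw [alDiag, mul_inv_cancel₀ hne,
      alMF_nn G n W e h0 h1]

noncomputable def alM : Matrix (alSIdx G n W) (alSIdx G n W) ℂ :=
  Matrix.of fun c c' => ∑ d : alTIdx G n W,
    alPhi G n (G.glue n (alS G W) c d) * star (alPhi G n (G.glue n (alS G W) c' d))

set_option maxHeartbeats 1000000 in
lemma alM_eq (hn : ∀ e, 1 ≤ n e) (c c' : alSIdx G n W) :
    alM G n W c c' = ∏ e : G.E, alMF G n W e (alRest G n W c e) (alRest G n W c' e) := by
  have step1 : alM G n W c c' = ∑ d : alTIdx G n W, ∏ e : G.E,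
      ((if alRR G n W c e false (fun f => d f.1) = alRR G n W c e true (fun f => d f.1)
          then alRe G n e else 0) *
        star (if alRR G n W c' e false (fun f => d f.1) = alRR G n W c' e true (fun f => d f.1)
          then alRe G n e else 0)) := by
    refine Finset.sum_congr rfl fun d _ => ?_
    show alPhi G n (G.glue n (alS G W) c d) * star (alPhi G n (G.glue n (alS G W) c' d)) = _
    rw [alPhi, alPhi, star_prod, ← Finset.prod_mul_distrib]
    rfl
  rw [step1]
  rw [show (∑ d : alTIdx G n W, ∏ e : G.E,
      ((if alRR G n W c e false (fun f => d f.1) = alRR G n W c e true (fun f => d f.1)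
          then alRe G n e else 0) *
        star (if alRR G n W c' e false (fun f => d f.1) = alRR G n W c' e true (fun f => d f.1)
          then alRe G n e else 0))) = ∏ e : G.E, ∑ w : alEFT G n W e,
      ((if alRR G n W c e false w = alRR G n W c e true w then alRe G n e else 0) *
        star (if alRR G n W c' e false w = alRR G n W c' e true w then alRe G n e else 0)) from
    alSumProdFiber (D := {h : G.Half // h ∉ alS G W}) (I := G.E) (β := fun d => Fin (n d.1.1)) (fun d => d.1.1)
      (fun e w =>
        (if alRR G n W c e false w = alRR G n W c e true w then alRe G n e else 0) *
          star (if alRR G n W c' e false w = alRR G n W c' e true w then alRe G n e else 0))]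
  refine Finset.prod_congr rfl fun e _ => alEdgePhi G n W e ?_ c c'
  exact_mod_cast Nat.cast_ne_zero.mpr (Nat.one_le_iff_ne_zero.mp (hn e))

set_option maxHeartbeats 1000000 in
lemma alMsq (hn : ∀ e, 1 ≤ n e) :
    alM G n W * alM G n W =
      (∏ e : G.E, if alBd G W e then ((n e : ℂ))⁻¹ else 1) • alM G n W := by
  have hne : ∀ e : G.E, (n e : ℂ) ≠ 0 := fun e =>
    Nat.cast_ne_zero.mpr (Nat.one_le_iff_ne_zero.mp (hn e))
  ext c c'
  rw [Matrix.mul_apply, Matrix.smul_apply, smul_eq_mul]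
  calc (∑ c'' : alSIdx G n W, alM G n W c c'' * alM G n W c'' c')
      = ∑ c'' : alSIdx G n W, ∏ e : G.E,
          (alMF G n W e (alRest G n W c e) (alRest G n W c'' e) *
            alMF G n W e (alRest G n W c'' e) (alRest G n W c' e)) := by
        refine Finset.sum_congr rfl fun c'' _ => ?_
        rw [alM_eq G n W hn, alM_eq G n W hn, ← Finset.prod_mul_distrib]
    _ = ∏ e : G.E, ∑ z : alEFS G n W e,
          (alMF G n W e (alRest G n W c e) z * alMF G n W e z (alRest G n W c' e)) :=
        alSumProdFiber (D := {h : G.Half // h ∈ alS G W}) (I := G.E) (β := fun d => Fin (n d.1.1)) (fun d => d.1.1) (fun e z =>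
          alMF G n W e (alRest G n W c e) z * alMF G n W e z (alRest G n W c' e))
    _ = ∏ e : G.E, ((if alBd G W e then ((n e : ℂ))⁻¹ else 1) *
          alMF G n W e (alRest G n W c e) (alRest G n W c' e)) :=
        Finset.prod_congr rfl fun e _ => alEdgeSq G n W e (hne e) _ _
    _ = (∏ e : G.E, if alBd G W e then ((n e : ℂ))⁻¹ else 1) *
          ∏ e : G.E, alMF G n W e (alRest G n W c e) (alRest G n W c' e) :=
        Finset.prod_mul_distrib
    _ = (∏ e : G.E, if alBd G W e then ((n e : ℂ))⁻¹ else 1) * alM G n W c c' := by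
        rw [← alM_eq G n W hn]

set_option maxHeartbeats 1000000 in
lemma alMtr (hn : ∀ e, 1 ≤ n e) : (alM G n W).trace = 1 := by
  have hne : ∀ e : G.E, (n e : ℂ) ≠ 0 := fun e =>
    Nat.cast_ne_zero.mpr (Nat.one_le_iff_ne_zero.mp (hn e))
  rw [Matrix.trace]
  calc (∑ c : alSIdx G n W, (alM G n W).diag c)
      = ∑ c : alSIdx G n W, ∏ e : G.E,
          alMF G n W e (alRest G n W c e) (alRest G n W c e) := by
        refine Finset.sum_congr rfl fun c _ => alM_eq G n W hn c c
    _ = ∏ e : G.E, ∑ z : alEFS G n W e, alMF G n W e z z :=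
        alSumProdFiber (D := {h : G.Half // h ∈ alS G W}) (I := G.E) (β := fun d => Fin (n d.1.1)) (fun d => d.1.1) (fun e z => alMF G n W e z z)
    _ = 1 := by
        rw [Finset.prod_eq_one]
        exact fun e _ => alEdgeTr G n W e (hne e)


def alRS (a : alSIdx G n W) (v : G.V) (hv : v ∈ W) : G.VIdx n v :=
  fun h => a ⟨h.1, (mem_alS G W).2 (by rw [h.2]; exact hv)⟩

noncomputable def alA (U : ∀ v : G.V, Matrix (G.VIdx n v) (G.VIdx n v) ℂ) :
    Matrix (alSIdx G n W) (alSIdx G n W) ℂ :=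
  Matrix.of fun a c =>
    ∏ v : G.V, if hv : v ∈ W then U v (alRS G n W a v hv) (alRS G n W c v hv) else 1

lemma alA_apply (U : ∀ v : G.V, Matrix (G.VIdx n v) (G.VIdx n v) ℂ) (a c : alSIdx G n W) :
    alA G n W U a c =
      ∏ v : G.V, if hv : v ∈ W then U v (alRS G n W a v hv) (alRS G n W c v hv) else 1 := rfl

lemma alM_apply (c c' : alSIdx G n W) :
    alM G n W c c' = ∑ d : alTIdx G n W,
      alPhi G n (G.glue n (alS G W) c d) * star (alPhi G n (G.glue n (alS G W) c' d)) := rfl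

def alHallT (v : G.V) (hv : v ∉ W) : ∀ h : G.Half, G.vertexOf h = v → h ∉ alS G W :=
  fun h hh hmem => hv (hh ▸ (mem_alS G W).1 hmem)

def alHallS (v : G.V) (hv : v ∈ W) : ∀ h : G.Half, G.vertexOf h = v → h ∈ alS G W :=
  fun h hh => (mem_alS G W).2 (hh ▸ hv)

abbrev alVFT (v : G.V) :=
  (f : {d : {h : G.Half // h ∉ alS G W} // G.vertexOf d.1 = v}) → Fin (n f.1.1.1)

def alMixT (a : alSIdx G n W) (v : G.V) (z : alVFT G n W v) : G.VIdx n v :=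
  fun h => if hh : h.1 ∈ alS G W then a ⟨h.1, hh⟩ else z ⟨⟨h.1, hh⟩, h.2⟩

lemma alMixT_mem (a : alSIdx G n W) (v : G.V) (hv : v ∈ W) (z : alVFT G n W v) :
    alMixT G n W a v z = alRS G n W a v hv := by
  funext h
  exact dif_pos (alHallS G W v hv h.1 h.2)

lemma alMixT_not (a : alSIdx G n W) (v : G.V) (hv : v ∉ W) (z : alVFT G n W v) :
    alMixT G n W a v z =
      alVertEquiv G n (fun h => h ∉ alS G W) v (alHallT G W v hv) z := by
  funext h
  exact dif_neg (alHallT G W v hv h.1 h.2)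

def alGlueV (c : alSIdx G n W) (d : alTIdx G n W) (v : G.V) : G.VIdx n v :=
  fun h => G.glue n (alS G W) c d h.1

lemma alGlueV_mem (c : alSIdx G n W) (d : alTIdx G n W) (v : G.V) (hv : v ∈ W) :
    alGlueV G n W c d v = alRS G n W c v hv := by
  funext h
  exact dif_pos (alHallS G W v hv h.1 h.2)

lemma alGlueV_indep (c c' : alSIdx G n W) (d : alTIdx G n W) (v : G.V) (hv : v ∉ W) :
    alGlueV G n W c d v = alGlueV G n W c' d v := by
  funext h
  rw [alGlueV, alGlueV, Multigraph.glue, Multigraph.glue,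
    dif_neg (alHallT G W v hv h.1 h.2), dif_neg (alHallT G W v hv h.1 h.2)]

set_option maxHeartbeats 1000000 in
lemma alKey1 (U : ∀ v : G.V, Matrix (G.VIdx n v) (G.VIdx n v) ℂ)
    (hU : ∀ v : G.V, U v ∈ Matrix.unitaryGroup (G.VIdx n v) ℂ)
    (a a' c c' : alSIdx G n W) (d d' : alTIdx G n W) :
    (∑ b : alTIdx G n W,
      (∏ v : G.V, U v (fun h => G.glue n (alS G W) a b h.1)
          (fun h => G.glue n (alS G W) c d h.1)) *
        star (∏ v : G.V, U v (fun h => G.glue n (alS G W) a' b h.1)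
          (fun h => G.glue n (alS G W) c' d' h.1))) =
      (alA G n W U a c * star (alA G n W U a' c')) * (if d = d' then 1 else 0) := by
  have hb : ∀ b : alTIdx G n W,
      (∏ v : G.V, U v (fun h => G.glue n (alS G W) a b h.1)
          (fun h => G.glue n (alS G W) c d h.1)) *
        star (∏ v : G.V, U v (fun h => G.glue n (alS G W) a' b h.1)
          (fun h => G.glue n (alS G W) c' d' h.1)) =
      ∏ v : G.V, (U v (alMixT G n W a v fun f => b f.1) (alGlueV G n W c d v) *
        star (U v (alMixT G n W a' v fun f => b f.1) (alGlueV G n W c' d' v))) := by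
    intro b
    rw [star_prod, ← Finset.prod_mul_distrib]
    rfl
  rw [Finset.sum_congr rfl fun b _ => hb b]
  rw [show (∑ b : alTIdx G n W,
      ∏ v : G.V, (U v (alMixT G n W a v fun f => b f.1) (alGlueV G n W c d v) *
        star (U v (alMixT G n W a' v fun f => b f.1) (alGlueV G n W c' d' v)))) =
      ∏ v : G.V, ∑ z : alVFT G n W v,
        (U v (alMixT G n W a v z) (alGlueV G n W c d v) *
          star (U v (alMixT G n W a' v z) (alGlueV G n W c' d' v))) from
    alSumProdFiber (D := {h : G.Half // h ∉ alS G W}) (I := G.V)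
      (β := fun d => Fin (n d.1.1)) (fun f => G.vertexOf f.1)
      (fun v z => U v (alMixT G n W a v z) (alGlueV G n W c d v) *
        star (U v (alMixT G n W a' v z) (alGlueV G n W c' d' v)))]
  have hv : ∀ v : G.V, (∑ z : alVFT G n W v,
      (U v (alMixT G n W a v z) (alGlueV G n W c d v) *
        star (U v (alMixT G n W a' v z) (alGlueV G n W c' d' v)))) =
      if hv : v ∈ W then
        U v (alRS G n W a v hv) (alRS G n W c v hv) *
          star (U v (alRS G n W a' v hv) (alRS G n W c' v hv))
      else (if alGlueV G n W c' d' v = alGlueV G n W c d v then 1 else 0) := by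
    intro v
    by_cases hvW : v ∈ W
    · rw [dif_pos hvW]
      haveI : IsEmpty {f : {h : G.Half // h ∉ alS G W} // G.vertexOf f.1 = v} :=
        alVertEmpty G (fun h => h ∉ alS G W) v
          (fun h hh hne => hne (alHallS G W v hvW h hh))
      rw [Fintype.sum_unique, alMixT_mem G n W a v hvW, alMixT_mem G n W a' v hvW,
        alGlueV_mem G n W c d v hvW, alGlueV_mem G n W c' d' v hvW]
    · rw [dif_neg hvW]
      have hz : ∀ z : alVFT G n W v,
          U v (alMixT G n W a v z) (alGlueV G n W c d v) *
            star (U v (alMixT G n W a' v z) (alGlueV G n W c' d' v)) =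
          U v (alVertEquiv G n (fun h => h ∉ alS G W) v (alHallT G W v hvW) z)
              (alGlueV G n W c d v) *
            star (U v (alVertEquiv G n (fun h => h ∉ alS G W) v (alHallT G W v hvW) z)
              (alGlueV G n W c' d' v)) := by
        intro z
        rw [alMixT_not G n W a v hvW, alMixT_not G n W a' v hvW]
      rw [Finset.sum_congr rfl fun z _ => hz z]
      exact (Equiv.sum_comp (alVertEquiv G n (fun h => h ∉ alS G W) v (alHallT G W v hvW))
        (fun u => U v u (alGlueV G n W c d v) * star (U v u (alGlueV G n W c' d' v)))).trans
        (alUniSum (U v) (hU v) _ _)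
  rw [Finset.prod_congr rfl fun v _ => hv v]
  have hsplit : ∀ v : G.V,
      (if hv : v ∈ W then
        U v (alRS G n W a v hv) (alRS G n W c v hv) *
          star (U v (alRS G n W a' v hv) (alRS G n W c' v hv))
      else (if alGlueV G n W c' d' v = alGlueV G n W c d v then 1 else 0)) =
      ((if hv : v ∈ W then U v (alRS G n W a v hv) (alRS G n W c v hv) else 1) *
        (if hv : v ∈ W then star (U v (alRS G n W a' v hv) (alRS G n W c' v hv)) else 1)) *
        (if _ : v ∈ W then 1
          else (if alGlueV G n W c' d' v = alGlueV G n W c d v then 1 else 0)) := by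
    intro v
    by_cases hvW : v ∈ W
    · rw [dif_pos hvW, dif_pos hvW, dif_pos hvW, dif_pos hvW, mul_one]
    · rw [dif_neg hvW, dif_neg hvW, dif_neg hvW, dif_neg hvW, one_mul, one_mul]
  rw [Finset.prod_congr rfl fun v _ => hsplit v, Finset.prod_mul_distrib,
    Finset.prod_mul_distrib]
  have h1 : (∏ v : G.V, if hv : v ∈ W then U v (alRS G n W a v hv) (alRS G n W c v hv) else 1)
      = alA G n W U a c := rfl
  have h2 : (∏ v : G.V,
      if hv : v ∈ W then star (U v (alRS G n W a' v hv) (alRS G n W c' v hv)) else 1)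
      = star (alA G n W U a' c') := by
    rw [alA_apply, star_prod]
    refine Finset.prod_congr rfl fun v _ => ?_
    by_cases hvW : v ∈ W
    · rw [dif_pos hvW, dif_pos hvW]
    · rw [dif_neg hvW, dif_neg hvW, star_one]
  have h3 : (∏ v : G.V, if _ : v ∈ W then (1 : ℂ)
      else (if alGlueV G n W c' d' v = alGlueV G n W c d v then 1 else 0)) =
      if d = d' then 1 else 0 := by
    by_cases hdd : d = d'
    · subst hdd
      rw [if_pos rfl]
      refine Finset.prod_eq_one fun v _ => ?_
      by_cases hvW : v ∈ W
      · rw [dif_pos hvW]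
      · rw [dif_neg hvW, if_pos (alGlueV_indep G n W c' c d v hvW)]
    · rw [if_neg hdd]
      obtain ⟨h₀, hne⟩ := Function.ne_iff.mp hdd
      have hv₀ : G.vertexOf h₀.1 ∉ W := fun hW => h₀.2 ((mem_alS G W).2 hW)
      refine Finset.prod_eq_zero (Finset.mem_univ (G.vertexOf h₀.1)) ?_
      rw [dif_neg hv₀, if_neg]
      intro heq
      have := congrFun heq ⟨h₀.1, rfl⟩
      rw [alGlueV, alGlueV] at this
      simp only [Multigraph.glue, dif_neg h₀.2] at this
      exact hne this.symm
  rw [h1, h2, h3]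


abbrev alVFS (v : G.V) :=
  (f : {d : {h : G.Half // h ∈ alS G W} // G.vertexOf d.1 = v}) → Fin (n f.1.1.1)

set_option maxHeartbeats 1000000 in
lemma alAuni (U : ∀ v : G.V, Matrix (G.VIdx n v) (G.VIdx n v) ℂ)
    (hU : ∀ v : G.V, U v ∈ Matrix.unitaryGroup (G.VIdx n v) ℂ) :
    (alA G n W U)ᴴ * alA G n W U = 1 := by
  ext c c'
  rw [Matrix.mul_apply]
  simp only [Matrix.conjTranspose_apply]
  have hterm : ∀ a : alSIdx G n W, star (alA G n W U a c) * alA G n W U a c' =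
      ∏ v : G.V, (if hv : v ∈ W then
        star (U v (alVertEquiv G n (fun h => h ∈ alS G W) v (alHallS G W v hv) fun f => a f.1)
            (alRS G n W c v hv)) *
          U v (alVertEquiv G n (fun h => h ∈ alS G W) v (alHallS G W v hv) fun f => a f.1)
            (alRS G n W c' v hv)
        else 1) := by
    intro a
    rw [alA_apply, alA_apply, star_prod, ← Finset.prod_mul_distrib]
    refine Finset.prod_congr rfl fun v _ => ?_
    by_cases hvW : v ∈ W
    · rw [dif_pos hvW, dif_pos hvW, dif_pos hvW]
      rfl
    · rw [dif_neg hvW, dif_neg hvW, dif_neg hvW, star_one, one_mul]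
  rw [Finset.sum_congr rfl fun a _ => hterm a]
  rw [show (∑ a : alSIdx G n W, ∏ v : G.V, (if hv : v ∈ W then
      star (U v (alVertEquiv G n (fun h => h ∈ alS G W) v (alHallS G W v hv) fun f => a f.1)
          (alRS G n W c v hv)) *
        U v (alVertEquiv G n (fun h => h ∈ alS G W) v (alHallS G W v hv) fun f => a f.1)
          (alRS G n W c' v hv)
      else 1)) =
      ∏ v : G.V, ∑ z : alVFS G n W v, (if hv : v ∈ W then
      star (U v (alVertEquiv G n (fun h => h ∈ alS G W) v (alHallS G W v hv) z)
          (alRS G n W c v hv)) *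
        U v (alVertEquiv G n (fun h => h ∈ alS G W) v (alHallS G W v hv) z)
          (alRS G n W c' v hv)
      else 1) from
    alSumProdFiber (D := {h : G.Half // h ∈ alS G W}) (I := G.V)
      (β := fun d => Fin (n d.1.1)) (fun f => G.vertexOf f.1)
      (fun v z => if hv : v ∈ W then
        star (U v (alVertEquiv G n (fun h => h ∈ alS G W) v (alHallS G W v hv) z)
            (alRS G n W c v hv)) *
          U v (alVertEquiv G n (fun h => h ∈ alS G W) v (alHallS G W v hv) z)
            (alRS G n W c' v hv)
        else 1)]
  have hv : ∀ v : G.V, (∑ z : alVFS G n W v, (if hv : v ∈ W then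
      star (U v (alVertEquiv G n (fun h => h ∈ alS G W) v (alHallS G W v hv) z)
          (alRS G n W c v hv)) *
        U v (alVertEquiv G n (fun h => h ∈ alS G W) v (alHallS G W v hv) z)
          (alRS G n W c' v hv)
      else 1)) =
      if hv : v ∈ W then (if alRS G n W c v hv = alRS G n W c' v hv then 1 else 0) else 1 := by
    intro v
    by_cases hvW : v ∈ W
    · rw [dif_pos hvW]
      have hz : ∀ z : alVFS G n W v, (if hv : v ∈ W then
          star (U v (alVertEquiv G n (fun h => h ∈ alS G W) v (alHallS G W v hv) z)
              (alRS G n W c v hv)) *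
            U v (alVertEquiv G n (fun h => h ∈ alS G W) v (alHallS G W v hv) z)
              (alRS G n W c' v hv)
          else 1) =
          star (U v (alVertEquiv G n (fun h => h ∈ alS G W) v (alHallS G W v hvW) z)
              (alRS G n W c v hvW)) *
            U v (alVertEquiv G n (fun h => h ∈ alS G W) v (alHallS G W v hvW) z)
              (alRS G n W c' v hvW) := fun z => dif_pos hvW
      rw [Finset.sum_congr rfl fun z _ => hz z]
      exact (Equiv.sum_comp (alVertEquiv G n (fun h => h ∈ alS G W) v (alHallS G W v hvW))
        (fun u => star (U v u (alRS G n W c v hvW)) * U v u (alRS G n W c' v hvW))).trans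
        (alUniSum' (U v) (hU v) _ _)
    · rw [dif_neg hvW]
      haveI : IsEmpty {f : {h : G.Half // h ∈ alS G W} // G.vertexOf f.1 = v} :=
        alVertEmpty G (fun h => h ∈ alS G W) v
          (fun h hh hmem => hvW (hh ▸ (mem_alS G W).1 hmem))
      rw [Fintype.sum_unique, dif_neg hvW]
  rw [Finset.prod_congr rfl fun v _ => hv v]
  by_cases hcc : c = c'
  · subst hcc
    rw [Matrix.one_apply_eq]
    refine Finset.prod_eq_one fun v _ => ?_
    by_cases hvW : v ∈ W
    · rw [dif_pos hvW, if_pos rfl]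
    · rw [dif_neg hvW]
  · rw [Matrix.one_apply_ne hcc]
    obtain ⟨h₀, hne⟩ := Function.ne_iff.mp hcc
    have hv₀ : G.vertexOf h₀.1 ∈ W := (mem_alS G W).1 h₀.2
    refine Finset.prod_eq_zero (Finset.mem_univ (G.vertexOf h₀.1)) ?_
    rw [dif_pos hv₀, if_neg]
    intro heq
    have := congrFun heq ⟨h₀.1, rfl⟩
    rw [alRS, alRS] at this
    exact hne this

lemma alHerm (S : Finset G.Half) (U : ∀ v : G.V, Matrix (G.VIdx n v) (G.VIdx n v) ℂ) :
    (G.gmarg n S U).IsHermitian := by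
  refine Matrix.ext fun a a' => ?_
  rw [Matrix.conjTranspose_apply]
  show star (G.gmarg n S U a' a) = G.gmarg n S U a a'
  rw [Multigraph.gmarg, Matrix.of_apply, Matrix.of_apply, star_sum]
  refine Finset.sum_congr rfl fun b _ => ?_
  rw [star_mul', star_star, mul_comm]


set_option maxHeartbeats 1000000 in
lemma alGmargEq (U : ∀ v : G.V, Matrix (G.VIdx n v) (G.VIdx n v) ℂ)
    (hU : ∀ v : G.V, U v ∈ Matrix.unitaryGroup (G.VIdx n v) ℂ) :
    G.gmarg n (alS G W) U = alA G n W U * alM G n W * (alA G n W U)ᴴ := by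
  ext a a'
  have hgv : ∀ x : G.HIdx n, G.gvec n U x =
      ∑ p : alSIdx G n W × alTIdx G n W,
        (∏ v : G.V, U v (fun h => x h.1) (fun h => G.glue n (alS G W) p.1 p.2 h.1)) *
          alPhi G n (G.glue n (alS G W) p.1 p.2) := by
    intro x
    exact (Equiv.sum_comp (alSplit G n W) (fun y : G.HIdx n =>
      (∏ v : G.V, U v (fun h => x h.1) (fun h => y h.1)) * alPhi G n y)).symm
  show (∑ b : alTIdx G n W, G.gvec n U (G.glue n (alS G W) a b) *
      star (G.gvec n U (G.glue n (alS G W) a' b))) = _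
  calc (∑ b : alTIdx G n W, G.gvec n U (G.glue n (alS G W) a b) *
      star (G.gvec n U (G.glue n (alS G W) a' b)))
      = ∑ b : alTIdx G n W, ∑ p : alSIdx G n W × alTIdx G n W,
          ∑ q : alSIdx G n W × alTIdx G n W,
          (((∏ v : G.V, U v (fun h => G.glue n (alS G W) a b h.1)
              (fun h => G.glue n (alS G W) p.1 p.2 h.1)) *
            alPhi G n (G.glue n (alS G W) p.1 p.2)) *
          star ((∏ v : G.V, U v (fun h => G.glue n (alS G W) a' b h.1)
              (fun h => G.glue n (alS G W) q.1 q.2 h.1)) *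
            alPhi G n (G.glue n (alS G W) q.1 q.2))) := by
        refine Finset.sum_congr rfl fun b _ => ?_
        rw [hgv, hgv, star_sum, Finset.sum_mul_sum]
    _ = ∑ p : alSIdx G n W × alTIdx G n W, ∑ q : alSIdx G n W × alTIdx G n W,
          ∑ b : alTIdx G n W,
          (((∏ v : G.V, U v (fun h => G.glue n (alS G W) a b h.1)
              (fun h => G.glue n (alS G W) p.1 p.2 h.1)) *
            alPhi G n (G.glue n (alS G W) p.1 p.2)) *
          star ((∏ v : G.V, U v (fun h => G.glue n (alS G W) a' b h.1)
              (fun h => G.glue n (alS G W) q.1 q.2 h.1)) *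
            alPhi G n (G.glue n (alS G W) q.1 q.2))) := by
        rw [Finset.sum_comm]
        exact Finset.sum_congr rfl fun p _ => Finset.sum_comm
    _ = ∑ p : alSIdx G n W × alTIdx G n W, ∑ q : alSIdx G n W × alTIdx G n W,
          ((alPhi G n (G.glue n (alS G W) p.1 p.2) *
            star (alPhi G n (G.glue n (alS G W) q.1 q.2))) *
          ((alA G n W U a p.1 * star (alA G n W U a' q.1)) *
            (if p.2 = q.2 then 1 else 0))) := by
        refine Finset.sum_congr rfl fun p _ => Finset.sum_congr rfl fun q _ => ?_
        have h1 : ∀ b : alTIdx G n W,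
            (((∏ v : G.V, U v (fun h => G.glue n (alS G W) a b h.1)
                (fun h => G.glue n (alS G W) p.1 p.2 h.1)) *
              alPhi G n (G.glue n (alS G W) p.1 p.2)) *
            star ((∏ v : G.V, U v (fun h => G.glue n (alS G W) a' b h.1)
                (fun h => G.glue n (alS G W) q.1 q.2 h.1)) *
              alPhi G n (G.glue n (alS G W) q.1 q.2))) =
            (alPhi G n (G.glue n (alS G W) p.1 p.2) *
              star (alPhi G n (G.glue n (alS G W) q.1 q.2))) *
            ((∏ v : G.V, U v (fun h => G.glue n (alS G W) a b h.1)
                (fun h => G.glue n (alS G W) p.1 p.2 h.1)) *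
              star (∏ v : G.V, U v (fun h => G.glue n (alS G W) a' b h.1)
                (fun h => G.glue n (alS G W) q.1 q.2 h.1))) := by
          intro b
          rw [star_mul']
          ring
        rw [Finset.sum_congr rfl fun b _ => h1 b, ← Finset.mul_sum,
          alKey1 G n W U hU a a' p.1 q.1 p.2 q.2]
    _ = ∑ p : alSIdx G n W × alTIdx G n W, ∑ cq : alSIdx G n W,
          ((alPhi G n (G.glue n (alS G W) p.1 p.2) *
            star (alPhi G n (G.glue n (alS G W) cq p.2))) *
          (alA G n W U a p.1 * star (alA G n W U a' cq))) := by
        refine Finset.sum_congr rfl fun p _ => ?_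
        rw [Fintype.sum_prod_type]
        refine Finset.sum_congr rfl fun cq _ => ?_
        have h2 : ∀ dq : alTIdx G n W,
            ((alPhi G n (G.glue n (alS G W) p.1 p.2) *
              star (alPhi G n (G.glue n (alS G W) cq dq))) *
            ((alA G n W U a p.1 * star (alA G n W U a' cq)) *
              (if p.2 = dq then 1 else 0))) =
            if p.2 = dq then
              ((alPhi G n (G.glue n (alS G W) p.1 p.2) *
                star (alPhi G n (G.glue n (alS G W) cq dq))) *
              (alA G n W U a p.1 * star (alA G n W U a' cq))) else 0 := by
          intro dq
          by_cases hd : p.2 = dq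
          · rw [if_pos hd, if_pos hd, mul_one]
          · rw [if_neg hd, if_neg hd, mul_zero, mul_zero]
        rw [Finset.sum_congr rfl fun dq _ => h2 dq, Finset.sum_ite_eq,
          if_pos (Finset.mem_univ p.2)]
    _ = ∑ cq : alSIdx G n W, ∑ cp : alSIdx G n W, ∑ dp : alTIdx G n W,
          ((alPhi G n (G.glue n (alS G W) cp dp) *
            star (alPhi G n (G.glue n (alS G W) cq dp))) *
          (alA G n W U a cp * star (alA G n W U a' cq))) := by
        rw [Fintype.sum_prod_type]
        rw [Finset.sum_congr rfl fun cp (_ : cp ∈ Finset.univ) => Finset.sum_comm]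
        rw [Finset.sum_comm]
    _ = (alA G n W U * alM G n W * (alA G n W U)ᴴ) a a' := by
        rw [Matrix.mul_apply]
        refine (Finset.sum_congr rfl fun cq _ => ?_).symm
        rw [Matrix.conjTranspose_apply, Matrix.mul_apply, Finset.sum_mul]
        refine (Finset.sum_congr rfl fun cp _ => ?_)
        rw [alM_apply, Finset.mul_sum, Finset.sum_mul]
        refine Finset.sum_congr rfl fun dp _ => ?_
        ring


set_option maxHeartbeats 1000000 in
private lemma alEntropy {ι : Type} [Fintype ι] [DecidableEq ι] (ρ : Matrix ι ι ℂ)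
    (hherm : ρ.IsHermitian) (p : ℝ) (hp : 0 < p)
    (hsq : ρ * ρ = (p : ℂ) • ρ) (htr : ρ.trace = 1) :
    vnEntropy ρ = - Real.log p := by
  classical
  have hD' : star (hherm.eigenvectorUnitary : Matrix ι ι ℂ) * ρ *
      (hherm.eigenvectorUnitary : Matrix ι ι ℂ) =
      Matrix.diagonal (RCLike.ofReal ∘ hherm.eigenvalues) := by
    rw [← hherm.conjStarAlgAut_star_eigenvectorUnitary]; simp
  have hsu : star (Matrix.IsHermitian.eigenvectorUnitary hherm : Matrix ι ι ℂ) *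
      (Matrix.IsHermitian.eigenvectorUnitary hherm : Matrix ι ι ℂ) = 1 := by
    exact_mod_cast Unitary.coe_star_mul_self (Matrix.IsHermitian.eigenvectorUnitary hherm)
  have hus : (Matrix.IsHermitian.eigenvectorUnitary hherm : Matrix ι ι ℂ) *
      star (Matrix.IsHermitian.eigenvectorUnitary hherm : Matrix ι ι ℂ) = 1 := by
    exact_mod_cast Unitary.coe_mul_star_self (Matrix.IsHermitian.eigenvectorUnitary hherm)
  set u : Matrix ι ι ℂ := (Matrix.IsHermitian.eigenvectorUnitary hherm : Matrix ι ι ℂ)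
  set D : Matrix ι ι ℂ := Matrix.diagonal (RCLike.ofReal ∘ hherm.eigenvalues)
  have hDD : D * D = (p : ℂ) • D := by
    calc D * D = (star u * ρ * u) * (star u * ρ * u) := by rw [hD']
      _ = star u * (ρ * ((u * star u) * (ρ * u))) := by simp only [Matrix.mul_assoc]
      _ = star u * ((ρ * ρ) * u) := by
          rw [hus, Matrix.one_mul]
          simp only [Matrix.mul_assoc]
      _ = star u * (((p : ℂ) • ρ) * u) := by rw [hsq]
      _ = (p : ℂ) • (star u * ρ * u) := by
          rw [Matrix.smul_mul, Matrix.mul_smul, Matrix.mul_assoc]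
      _ = (p : ℂ) • D := by rw [hD']
  have heig : ∀ i, hherm.eigenvalues i = 0 ∨ hherm.eigenvalues i = p := by
    intro i
    have h2 := congrFun (congrFun hDD i) i
    simp only [D, Matrix.diagonal_mul_diagonal, Matrix.diagonal_apply_eq, Matrix.smul_apply,
      smul_eq_mul, Function.comp_apply] at h2
    have h3 : hherm.eigenvalues i * hherm.eigenvalues i = p * hherm.eigenvalues i := by
      have h2' : (RCLike.ofReal (hherm.eigenvalues i * hherm.eigenvalues i) : ℂ) =
          RCLike.ofReal (p * hherm.eigenvalues i) := by push_cast; exact h2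
      exact RCLike.ofReal_injective h2'
    by_cases hz : hherm.eigenvalues i = 0
    · exact Or.inl hz
    · exact Or.inr (mul_right_cancel₀ hz h3)
  have htrace : ∑ i, hherm.eigenvalues i = 1 := by
    have h4 : ρ.trace = ∑ i, (hherm.eigenvalues i : ℂ) := by
      exact hherm.trace_eq_sum_eigenvalues
    rw [htr] at h4
    exact_mod_cast h4.symm
  rw [vnEntropy, dif_pos hherm]
  have hterm : ∀ i, hherm.eigenvalues i * Real.log (hherm.eigenvalues i)
      = hherm.eigenvalues i * Real.log p := by
    intro i
    rcases heig i with h | h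
    · rw [h]; simp
    · rw [h]
  rw [Finset.sum_congr rfl fun i _ => hterm i, ← Finset.sum_mul, htrace, one_mul]


private lemma alConj {ι : Type*} [Fintype ι] [DecidableEq ι] (A M : Matrix ι ι ℂ) (q : ℂ)
    (hA : Aᴴ * A = 1) (hM : M * M = q • M) :
    (A * M * Aᴴ) * (A * M * Aᴴ) = q • (A * M * Aᴴ) := by
  calc (A * M * Aᴴ) * (A * M * Aᴴ) = A * (M * ((Aᴴ * A) * (M * Aᴴ))) := by
        simp only [Matrix.mul_assoc]
    _ = A * ((M * M) * Aᴴ) := by rw [hA, Matrix.one_mul]; simp only [Matrix.mul_assoc]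
    _ = A * ((q • M) * Aᴴ) := by rw [hM]
    _ = q • (A * M * Aᴴ) := by
        rw [Matrix.smul_mul, Matrix.mul_smul]
        simp only [Matrix.mul_assoc]

private lemma alConjTr {ι : Type*} [Fintype ι] [DecidableEq ι] (A M : Matrix ι ι ℂ)
    (hA : Aᴴ * A = 1) : (A * M * Aᴴ).trace = M.trace := by
  rw [Matrix.trace_mul_comm, ← Matrix.mul_assoc, hA, Matrix.one_mul]

theorem exact_area_law_adapted' (G : Multigraph) (n : G.E → ℕ) (hn : ∀ e, 1 ≤ n e)
    (W : Finset G.V)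
    (U : ∀ v : G.V, Matrix (G.VIdx n v) (G.VIdx n v) ℂ)
    (hU : ∀ v : G.V, U v ∈ Matrix.unitaryGroup (G.VIdx n v) ℂ) :
    (vnEntropy (G.gmarg n (Finset.univ.filter fun h : G.Half => G.vertexOf h ∈ W) U) =
        ∑ e ∈ Finset.univ.filter (fun e : G.E =>
            ((G.ends e).1 ∈ W ∧ (G.ends e).2 ∉ W) ∨
              ((G.ends e).1 ∉ W ∧ (G.ends e).2 ∈ W)),
          Real.log (n e)) ∧
      ∀ N : ℕ, (∀ e : G.E, n e = N) →
        vnEntropy (G.gmarg n (Finset.univ.filter fun h : G.Half => G.vertexOf h ∈ W) U) =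
          ((Finset.univ.filter fun e : G.E =>
            ((G.ends e).1 ∈ W ∧ (G.ends e).2 ∉ W) ∨
              ((G.ends e).1 ∉ W ∧ (G.ends e).2 ∈ W)).card : ℝ) * Real.log N := by
  classical
  have hfilter : (Finset.univ.filter fun e : G.E =>
      ((G.ends e).1 ∈ W ∧ (G.ends e).2 ∉ W) ∨ ((G.ends e).1 ∉ W ∧ (G.ends e).2 ∈ W)) =
      Finset.univ.filter (alBd G W) := by
    exact Finset.filter_congr fun e _ => Iff.rfl
  have hfact := alGmargEq G n W U hU
  have hAu := alAuni G n W U hU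
  have hherm := alHerm G n (alS G W) U
  have hpRpos : (0:ℝ) < ∏ e : G.E, if alBd G W e then ((n e : ℝ))⁻¹ else 1 := by
    refine Finset.prod_pos fun e _ => ?_
    split
    · refine inv_pos.mpr ?_
      exact_mod_cast Nat.lt_of_lt_of_le Nat.zero_lt_one (hn e)
    · exact one_pos
  have hcast : (∏ e : G.E, if alBd G W e then ((n e : ℂ))⁻¹ else 1) =
      (((∏ e : G.E, if alBd G W e then ((n e : ℝ))⁻¹ else 1 : ℝ)) : ℂ) := by
    rw [Complex.ofReal_prod]
    refine Finset.prod_congr rfl fun e _ => ?_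
    split <;> simp
  have hsq : (G.gmarg n (alS G W) U) * (G.gmarg n (alS G W) U) =
      (((∏ e : G.E, if alBd G W e then ((n e : ℝ))⁻¹ else 1 : ℝ)) : ℂ) •
        (G.gmarg n (alS G W) U) := by
    rw [hfact, ← hcast, alConj (alA G n W U) (alM G n W) _ hAu (alMsq G n W hn)]
  have htr : (G.gmarg n (alS G W) U).trace = 1 := by
    rw [hfact, alConjTr _ _ hAu, alMtr G n W hn]
  have hent := alEntropy (G.gmarg n (alS G W) U) hherm _ hpRpos hsq htr
  have hlog : Real.log (∏ e : G.E, if alBd G W e then ((n e : ℝ))⁻¹ else 1) =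
      - ∑ e ∈ Finset.univ.filter (alBd G W), Real.log (n e) := by
    rw [Real.log_prod (fun e _ => by
      split
      · refine inv_ne_zero ?_
        have : (0:ℝ) < (n e : ℝ) := by exact_mod_cast Nat.lt_of_lt_of_le Nat.zero_lt_one (hn e)
        exact ne_of_gt this
      · exact one_ne_zero)]
    rw [show (∑ e : G.E, Real.log (if alBd G W e then ((n e : ℝ))⁻¹ else 1)) =
        ∑ e : G.E, (if alBd G W e then - Real.log (n e) else 0) from
      Finset.sum_congr rfl fun e _ => by
        split
        · rw [Real.log_inv]
        · rw [Real.log_one]]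
    rw [← Finset.sum_filter, ← Finset.sum_neg_distrib]
  have hmain : vnEntropy (G.gmarg n (alS G W) U) =
      ∑ e ∈ Finset.univ.filter (fun e : G.E =>
        ((G.ends e).1 ∈ W ∧ (G.ends e).2 ∉ W) ∨ ((G.ends e).1 ∉ W ∧ (G.ends e).2 ∈ W)),
        Real.log (n e) := by
    rw [hent, hlog, neg_neg, hfilter]
  refine ⟨hmain, fun N hN => ?_⟩
  rw [hmain]
  have : ∀ e ∈ Finset.univ.filter (fun e : G.E =>
      ((G.ends e).1 ∈ W ∧ (G.ends e).2 ∉ W) ∨ ((G.ends e).1 ∉ W ∧ (G.ends e).2 ∈ W)),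
      Real.log (n e) = Real.log N := fun e _ => by rw [hN e]
  rw [Finset.sum_congr rfl this, Finset.sum_const, nsmul_eq_mul]

end AreaLawAux

/-- For an adapted partition (the surviving half-edges `S` are
exactly those attached to the vertices of `W`), the marginal of the graph state
satisfies the exact area law `H(ρ_S) = ∑_{e ∈ ∂} ln (n e)`, where `∂` is the set of
edges with one endpoint in `W` and the other outside `W`; in particular if all
edge dimensions equal `N` then `H(ρ_S) = |∂| ln N`. -/
theorem exact_area_law_adapted (G : Multigraph) (n : G.E → ℕ) (hn : ∀ e, 1 ≤ n e)
    (W : Finset G.V)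
    (U : ∀ v : G.V, Matrix (G.VIdx n v) (G.VIdx n v) ℂ)
    (hU : ∀ v : G.V, U v ∈ Matrix.unitaryGroup (G.VIdx n v) ℂ) :
    (vnEntropy (G.gmarg n (Finset.univ.filter fun h : G.Half => G.vertexOf h ∈ W) U) =
        ∑ e ∈ Finset.univ.filter (fun e : G.E =>
            ((G.ends e).1 ∈ W ∧ (G.ends e).2 ∉ W) ∨
              ((G.ends e).1 ∉ W ∧ (G.ends e).2 ∈ W)),
          Real.log (n e)) ∧
      ∀ N : ℕ, (∀ e : G.E, n e = N) →
        vnEntropy (G.gmarg n (Finset.univ.filter fun h : G.Half => G.vertexOf h ∈ W) U) =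
          ((Finset.univ.filter fun e : G.E =>
            ((G.ends e).1 ∈ W ∧ (G.ends e).2 ∉ W) ∨
              ((G.ends e).1 ∉ W ∧ (G.ends e).2 ∈ W)).card : ℝ) * Real.log N := by
  exact exact_area_law_adapted' G n hn W U hU
end

section
/- Let Γ be a finite multigraph and S a subset of its half-edges with complement T; let s(v) be the number of half-edges of S at the vertex v and let X = |∂S| be the area of the pair (Γ, s). For every N ≥ 1 there exist permutation matrices U_v at the vertices such that the marginal ρ_S = Tr_T |Ψ⟩⟨Ψ| of the graph state equals N^{−X}·P for some orthogonal projection P of rank N^X; consequently, for this choice of unitaries, H(ρ_S) = X·ln N and more generally every Rényi entropy H_q(ρ_S) = (1/(1−q))·ln Tr(ρ_S^q) equals X·ln N. -/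
open MeasureTheory

namespace Multigraph
variable (G : Multigraph)

lemma area_attained (S : Finset G.Half) :
    ∃ M : Finset G.Half, G.Compatible (G.countOf S) M ∧ G.cr M = G.area (G.countOf S) := by
  have h1 : G.cr S ∈ {k : ℕ | ∃ M : Finset G.Half, G.Compatible (G.countOf S) M ∧ G.cr M = k} :=
    ⟨S, fun v => rfl, rfl⟩
  have hbdd : BddAbove {k : ℕ | ∃ M : Finset G.Half, G.Compatible (G.countOf S) M ∧ G.cr M = k} := by
    refine ⟨Fintype.card G.E, fun k hk => ?_⟩
    obtain ⟨M, _, hM⟩ := hk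
    rw [← hM, cr]
    exact le_trans (Finset.card_filter_le _ _) (le_of_eq Finset.card_univ)
  exact Nat.sSup_mem ⟨_, h1⟩ hbdd

lemma exists_good_perm (S M : Finset G.Half)
    (hcomp : G.Compatible (G.countOf S) M) :
    ∃ p : Equiv.Perm G.Half,
      (∀ h, G.vertexOf (p h) = G.vertexOf h) ∧ (∀ h, p h ∈ S ↔ h ∈ M) := by
  have hfilt : ∀ (A : Finset G.Half) (v : G.V),
      (Finset.univ.filter fun x : {h : G.Half // G.vertexOf h = v} => x.1 ∈ A).card
        = (A.filter fun h => G.vertexOf h = v).card := by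
    intro A v
    rw [← Fintype.card_subtype]
    rw [Fintype.card_congr (Equiv.subtypeSubtypeEquivSubtypeInter _ _)]
    rw [Fintype.card_subtype]
    congr 1
    ext h
    simp [and_comm]
  have hc1 : ∀ v : G.V,
      Fintype.card {x : {h : G.Half // G.vertexOf h = v} // x.1 ∈ M}
        = Fintype.card {x : {h : G.Half // G.vertexOf h = v} // x.1 ∈ S} := by
    intro v
    rw [Fintype.card_subtype, Fintype.card_subtype, hfilt, hfilt, hcomp v]
    rfl
  have hc2 : ∀ v : G.V,
      Fintype.card {x : {h : G.Half // G.vertexOf h = v} // ¬ x.1 ∈ M}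
        = Fintype.card {x : {h : G.Half // G.vertexOf h = v} // ¬ x.1 ∈ S} := by
    intro v
    rw [Fintype.card_subtype_compl, Fintype.card_subtype_compl, hc1]
  let φ : ∀ v : G.V, {h : G.Half // G.vertexOf h = v} ≃ {h : G.Half // G.vertexOf h = v} :=
    fun v => (Equiv.sumCompl fun x : {h : G.Half // G.vertexOf h = v} => x.1 ∈ M).symm.trans
      ((Equiv.sumCongr (Fintype.equivOfCardEq (hc1 v)) (Fintype.equivOfCardEq (hc2 v))).trans
        (Equiv.sumCompl fun x : {h : G.Half // G.vertexOf h = v} => x.1 ∈ S))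
  have hφ : ∀ (v) (x : {h : G.Half // G.vertexOf h = v}), ((φ v) x).1 ∈ S ↔ x.1 ∈ M := by
    intro v x
    by_cases hm : x.1 ∈ M
    · have e1 : (Equiv.sumCompl fun x : {h : G.Half // G.vertexOf h = v} => x.1 ∈ M).symm x
          = Sum.inl ⟨x, hm⟩ := Equiv.sumCompl_symm_apply_of_pos (p := fun x : {h : G.Half // G.vertexOf h = v} => x.1 ∈ M) (a := x) hm
      simp only [φ, Equiv.trans_apply, e1, Equiv.sumCongr_apply, Sum.map_inl,
        Equiv.sumCompl_apply_inl]
      exact iff_of_true (Fintype.equivOfCardEq (hc1 v) ⟨x, hm⟩).2 hm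
    · have e1 : (Equiv.sumCompl fun x : {h : G.Half // G.vertexOf h = v} => x.1 ∈ M).symm x
          = Sum.inr ⟨x, hm⟩ := Equiv.sumCompl_symm_apply_of_neg (p := fun x : {h : G.Half // G.vertexOf h = v} => x.1 ∈ M) (a := x) hm
      simp only [φ, Equiv.trans_apply, e1, Equiv.sumCongr_apply, Sum.map_inr,
        Equiv.sumCompl_apply_inr]
      exact iff_of_false (Fintype.equivOfCardEq (hc2 v) ⟨x, hm⟩).2 hm
  let qf : G.Half → G.Half := fun h => (φ (G.vertexOf h) ⟨h, rfl⟩).1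
  let qr : G.Half → G.Half := fun h => ((φ (G.vertexOf h)).symm ⟨h, rfl⟩).1
  have keyf : ∀ (v) (h : G.Half) (hh : G.vertexOf h = v), (φ v ⟨h, hh⟩).1 = qf h := by
    intro v h hh; subst hh; rfl
  have keyr : ∀ (v) (h : G.Half) (hh : G.vertexOf h = v), ((φ v).symm ⟨h, hh⟩).1 = qr h := by
    intro v h hh; subst hh; rfl
  have hqfv : ∀ h, G.vertexOf (qf h) = G.vertexOf h := fun h => (φ _ ⟨h, rfl⟩).2
  have hqrv : ∀ h, G.vertexOf (qr h) = G.vertexOf h := fun h => ((φ _).symm ⟨h, rfl⟩).2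
  have hinv1 : ∀ h, qf (qr h) = h := by
    intro h
    rw [← keyf (G.vertexOf h) (qr h) (hqrv h)]
    have : (⟨qr h, hqrv h⟩ : {x : G.Half // G.vertexOf x = G.vertexOf h})
        = (φ (G.vertexOf h)).symm ⟨h, rfl⟩ := Subtype.ext rfl
    rw [this, Equiv.apply_symm_apply]
  have hinv2 : ∀ h, qr (qf h) = h := by
    intro h
    rw [← keyr (G.vertexOf h) (qf h) (hqfv h)]
    have : (⟨qf h, hqfv h⟩ : {x : G.Half // G.vertexOf x = G.vertexOf h})
        = (φ (G.vertexOf h)) ⟨h, rfl⟩ := Subtype.ext rfl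
    rw [this, Equiv.symm_apply_apply]
  refine ⟨⟨qf, qr, hinv2, hinv1⟩, hqfv, fun h => ?_⟩
  show qf h ∈ S ↔ h ∈ M
  rw [← keyf (G.vertexOf h) h rfl]
  exact hφ (G.vertexOf h) ⟨h, rfl⟩

end Multigraph

section Core
variable {E : Type} [Fintype E] [DecidableEq E] {N : ℕ}

/-- Splitting a pi-type over half-edges into a pi over edges. -/
def splitEquiv (P : E × Bool → Prop) [DecidablePred P] :
    ((h : {h : E × Bool // P h}) → Fin N) ≃ ((e : E) → ({β : Bool // P (e, β)} → Fin N)) where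
  toFun c e β := c ⟨(e, β.1), β.2⟩
  invFun d h := d h.1.1 ⟨h.1.2, h.2⟩
  left_inv c := rfl
  right_inv d := rfl

lemma core_factor (P : E × Bool → Prop) [DecidablePred P]
    (f : (e : E) → ({β : Bool // P (e, β)} → Fin N) → ℂ) :
    (∑ c : ((h : {h : E × Bool // P h}) → Fin N), ∏ e, f e (fun β => c ⟨(e, β.1), β.2⟩))
      = ∏ e, ∑ y : {β : Bool // P (e, β)} → Fin N, f e y := by
  rw [Fintype.prod_sum]
  exact Equiv.sum_comp (splitEquiv P) (fun d => ∏ e, f e (d e))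

lemma core_factor_mem (M : Finset (E × Bool))
    (f : (e : E) → ({β : Bool // (e, β) ∈ M} → Fin N) → ℂ) :
    (∑ c : ((h : {h : E × Bool // h ∈ M}) → Fin N), ∏ e, f e (fun β => c ⟨(e, β.1), β.2⟩))
      = ∏ e, ∑ y : {β : Bool // (e, β) ∈ M} → Fin N, f e y := by
  rw [Fintype.prod_sum]
  exact Equiv.sum_comp (splitEquiv (fun h => h ∈ M)) (fun d => ∏ e, f e (d e))

lemma sum_fun_both (P : E × Bool → Prop) [DecidablePred P] {e : E}
    (h0 : P (e, false)) (h1 : P (e, true)) (g : Fin N → Fin N → ℂ) :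
    ∑ y : {β : Bool // P (e, β)} → Fin N, g (y ⟨false, h0⟩) (y ⟨true, h1⟩)
      = ∑ p : Fin N × Fin N, g p.1 p.2 := by
  exact Equiv.sum_comp (⟨fun y => (y ⟨false, h0⟩, y ⟨true, h1⟩),
    fun p β => if β.1 = true then p.2 else p.1,
    fun y => by funext β; rcases β with ⟨b, hb⟩; cases b <;> rfl,
    fun p => rfl⟩ :
    ({β : Bool // P (e, β)} → Fin N) ≃ (Fin N × Fin N)) (fun p => g p.1 p.2)

lemma sum_fun_one (P : E × Bool → Prop) [DecidablePred P] {e : E} {b : Bool}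
    (hb : P (e, b)) (hnb : ¬ P (e, !b)) (g : Fin N → ℂ) :
    ∑ y : {β : Bool // P (e, β)} → Fin N, g (y ⟨b, hb⟩) = ∑ v : Fin N, g v := by
  exact Equiv.sum_comp (⟨fun y => y ⟨b, hb⟩, fun v _ => v,
    fun y => by
      funext β
      rcases β with ⟨b', hb'⟩
      have hbb : b' = b := by
        by_contra hne
        have : b' = !b := by cases b <;> cases b' <;> simp_all
        exact hnb (this ▸ hb')
      subst hbb
      rfl,
    fun v => rfl⟩ :
    ({β : Bool // P (e, β)} → Fin N) ≃ Fin N) g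

lemma sum_fun_none (P : E × Bool → Prop) [DecidablePred P] {e : E}
    (h0 : ¬ P (e, false)) (h1 : ¬ P (e, true)) (g : ({β : Bool // P (e, β)} → Fin N) → ℂ) :
    ∑ y : {β : Bool // P (e, β)} → Fin N, g y = g (fun β => (absurd β.2 (by cases β with
      | mk b hb => cases b; exact h0; exact h1))) := by
  haveI : IsEmpty {β : Bool // P (e, β)} := ⟨fun β => by
    rcases β with ⟨b, hb⟩; cases b; exact h0 hb; exact h1 hb⟩
  haveI : Unique ({β : Bool // P (e, β)} → Fin N) := Pi.uniqueOfIsEmpty _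
  rw [Fintype.sum_unique]
  congr 1
  funext β
  exact absurd β.2 (by rcases β with ⟨b, hb⟩; cases b; exact h0; exact h1)

end Core

lemma permMatrix_unitary {κ : Type} [Fintype κ] [DecidableEq κ] (σ : Equiv.Perm κ) :
    (Matrix.of fun i j => if i = σ j then (1 : ℂ) else 0) ∈ Matrix.unitaryGroup κ ℂ := by
  rw [Matrix.mem_unitaryGroup_iff]
  ext i j
  simp only [Matrix.mul_apply, Matrix.star_apply, Matrix.of_apply, Matrix.one_apply,
    apply_ite (star : ℂ → ℂ), star_one, star_zero]
  rw [Equiv.sum_comp σ (fun t => (if i = t then (1 : ℂ) else 0) * (if j = t then 1 else 0))]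
  simp only [ite_mul, one_mul, zero_mul, Finset.sum_ite_eq, Finset.mem_univ, if_true]
  simp [eq_comm]

namespace Multigraph
variable (G : Multigraph) (S M : Finset G.Half) (N : ℕ) (p : Equiv.Perm G.Half)

/-- The permutation of the fiber over `v` induced by a vertex-preserving permutation. -/
def fperm (hpv : ∀ h, G.vertexOf (p h) = G.vertexOf h) (v : G.V) :
    {h : G.Half // G.vertexOf h = v} ≃ {h : G.Half // G.vertexOf h = v} where
  toFun x := ⟨p x.1, (hpv x.1).trans x.2⟩
  invFun x := ⟨p.symm x.1, by rw [← hpv (p.symm x.1), Equiv.apply_symm_apply]; exact x.2⟩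
  left_inv x := Subtype.ext (p.symm_apply_apply x.1)
  right_inv x := Subtype.ext (p.apply_symm_apply x.1)

/-- The permutation of the vertex index space induced by `fperm`. -/
def sigmaV (hpv : ∀ h, G.vertexOf (p h) = G.vertexOf h) (v : G.V) :
    Equiv.Perm (G.VIdx (fun _ => N) v) where
  toFun g h := g ((G.fperm p hpv v).symm h)
  invFun g h := g (G.fperm p hpv v h)
  left_inv g := funext fun h => congrArg g (Equiv.symm_apply_apply _ _)
  right_inv g := funext fun h => congrArg g (Equiv.apply_symm_apply _ _)

/-- The permutation matrices at the vertices. -/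
noncomputable def permU (hpv : ∀ h, G.vertexOf (p h) = G.vertexOf h) :
    ∀ v : G.V, Matrix (G.VIdx (fun _ => N) v) (G.VIdx (fun _ => N) v) ℂ :=
  fun v => Matrix.of fun i j => if i = G.sigmaV N p hpv v j then 1 else 0

lemma gvec_collapse (hpv : ∀ h, G.vertexOf (p h) = G.vertexOf h)
    (x : G.HIdx (fun _ => N)) :
    G.gvec (fun _ => N) (G.permU N p hpv) x
      = ∏ e : G.E, (if x (p (e, false)) = x (p (e, true))
          then (((Real.sqrt N : ℝ) : ℂ))⁻¹ else 0) := by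
  rw [gvec]
  have h1 : ∀ y : G.HIdx (fun _ => N),
      (∏ v : G.V, G.permU N p hpv v (fun h => x h.1) (fun h => y h.1))
        = if (fun h => x (p h)) = y then 1 else 0 := by
    intro y
    show (∏ v : G.V, if (fun h => x h.1) = G.sigmaV N p hpv v (fun h => y h.1)
        then (1 : ℂ) else 0) = _
    rw [Finset.prod_boole]
    congr 1
    simp only [eq_iff_iff]
    constructor
    · intro hall
      funext h
      have h2 := congrFun (hall (G.vertexOf (p h)) (Finset.mem_univ _)) ⟨p h, rfl⟩
      have h4 : x (p h) = y (p.symm (p h)) := h2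
      rw [Equiv.symm_apply_apply] at h4
      exact h4
    · intro hy v _
      subst hy
      funext hh
      show x hh.1 = x (p ((G.fperm p hpv v).symm hh).1)
      have : p ((G.fperm p hpv v).symm hh).1 = hh.1 := p.apply_symm_apply hh.1
      rw [this]
  rw [Finset.sum_congr rfl (fun y _ => by rw [h1 y])]
  simp only [boole_mul]
  rw [Finset.sum_ite_eq _ (fun h => x (p h)) _]
  simp only [Finset.mem_univ, if_true]


/-- Index of the `S`-half corresponding to a marked half-edge. -/
def sidx (hpS : ∀ h, p h ∈ S ↔ h ∈ M) (e : G.E) (β : Bool) (hm : (e, β) ∈ M) :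
    {h : G.Half // h ∈ S} := ⟨p (e, β), (hpS _).mpr hm⟩

/-- The per-edge factor of the marginal. -/
noncomputable def TvalG (e : G.E) (A A' : (β : Bool) → ((e, β) ∈ M) → Fin N) : ℂ :=
  if m0 : (e, false) ∈ M then
    if m1 : (e, true) ∈ M then
      (N : ℂ)⁻¹ * ((if A false m0 = A true m1 then 1 else 0) *
        (if A' false m0 = A' true m1 then 1 else 0))
    else (N : ℂ)⁻¹ * (if A false m0 = A' false m0 then 1 else 0)
  else
    if m1 : (e, true) ∈ M then (N : ℂ)⁻¹ * (if A true m1 = A' true m1 then 1 else 0)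
    else 1

/-- Reindexing of assignments on the complement of `S` by the permutation. -/
def bEquiv (hpS : ∀ h, p h ∈ S ↔ h ∈ M) :
    ((h : {h : G.Half // h ∉ M}) → Fin N) ≃ ((h : {h : G.Half // h ∉ S}) → Fin N) where
  toFun c hs := c ⟨p.symm hs.1, fun hm => hs.2 (by
    rw [← p.apply_symm_apply hs.1]; exact (hpS _).mpr hm)⟩
  invFun b hm := b ⟨p hm.1, fun hsmem => hm.2 ((hpS _).mp hsmem)⟩
  left_inv c := funext fun hm => congrArg c (Subtype.ext (p.symm_apply_apply _))
  right_inv b := funext fun hs => congrArg b (Subtype.ext (p.apply_symm_apply _))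

/-- Reindexing of assignments on `S` by the permutation. -/
def aEquiv (hpS : ∀ h, p h ∈ S ↔ h ∈ M) :
    ((h : {h : G.Half // h ∈ M}) → Fin N) ≃ ((h : {h : G.Half // h ∈ S}) → Fin N) where
  toFun u hs := u ⟨p.symm hs.1, by
    rw [← hpS (p.symm hs.1), p.apply_symm_apply]; exact hs.2⟩
  invFun a hm := a ⟨p hm.1, (hpS _).mpr hm.2⟩
  left_inv u := funext fun hm => congrArg u (Subtype.ext (p.symm_apply_apply _))
  right_inv a := funext fun hs => congrArg a (Subtype.ext (p.apply_symm_apply _))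

lemma aEquiv_sidx (hpS : ∀ h, p h ∈ S ↔ h ∈ M) (u : (h : {h : G.Half // h ∈ M}) → Fin N)
    (e : G.E) (β : Bool) (hm : (e, β) ∈ M) :
    G.aEquiv S M N p hpS u (G.sidx S M p hpS e β hm) = u ⟨(e, β), hm⟩ :=
  congrArg u (Subtype.ext (p.symm_apply_apply _))

lemma glue_perm (hpS : ∀ h, p h ∈ S ↔ h ∈ M)
    (a : (h : {h : G.Half // h ∈ S}) → Fin N)
    (c : (h : {h : G.Half // h ∉ M}) → Fin N) (e : G.E) (β : Bool) :
    G.glue (fun _ => N) S a (G.bEquiv S M N p hpS c) (p (e, β))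
      = if hm : (e, β) ∈ M then a (G.sidx S M p hpS e β hm) else c ⟨(e, β), hm⟩ := by
  by_cases hm : (e, β) ∈ M
  · rw [dif_pos hm, glue, dif_pos ((hpS _).mpr hm)]
    rfl
  · rw [dif_neg hm, glue, dif_neg (fun hs => hm ((hpS _).mp hs))]
    exact congrArg c (Subtype.ext (p.symm_apply_apply _))

end Multigraph

section SmallSums
variable {N : ℕ}

lemma ite_mul_ite_self (c : Prop) [Decidable c] (κ : ℂ) :
    (if c then κ else 0) * (if c then κ else 0) = if c then κ * κ else 0 := by
  split <;> simp

lemma sum_ite_pair (x x' : Fin N) (κ : ℂ) :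
    ∑ v : Fin N, (if x = v then κ else 0) * (if x' = v then κ else 0)
      = if x = x' then κ * κ else 0 := by
  simp only [ite_mul, zero_mul]
  rw [Finset.sum_ite_eq]
  simp only [Finset.mem_univ, if_true]
  by_cases h : x = x'
  · rw [if_pos h, if_pos h.symm]
  · rw [if_neg h, if_neg (fun h' => h h'.symm), mul_zero]

lemma sum_ite_diag (κ : ℂ) :
    ∑ q : Fin N × Fin N, (if q.1 = q.2 then κ else 0) * (if q.1 = q.2 then κ else 0)
      = (N : ℂ) * (κ * κ) := by
  rw [Fintype.sum_prod_type]
  have h1 : ∀ z : Fin N, ∑ w : Fin N, (if z = w then κ else 0) * (if z = w then κ else 0)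
      = κ * κ := by
    intro z
    rw [Finset.sum_congr rfl (fun w _ => ite_mul_ite_self _ κ), Finset.sum_ite_eq]
    simp
  rw [Finset.sum_congr rfl (fun z _ => h1 z), Finset.sum_const, Finset.card_univ,
    Fintype.card_fin, nsmul_eq_mul]

end SmallSums

namespace Multigraph
variable (G : Multigraph) (S M : Finset G.Half) (N : ℕ) (p : Equiv.Perm G.Half)

/-- The summand in the closed form of the marginal. -/
def dval (e : G.E) (A : (β : Bool) → ((e, β) ∈ M) → Fin N)
    (y : {β : Bool // ¬ ((e, β) ∈ M)} → Fin N) (β : Bool) : Fin N :=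
  if hm : (e, β) ∈ M then A β hm else y ⟨β, hm⟩

lemma edge_cf (hN : 1 ≤ N) (e : G.E) (A A' : (β : Bool) → ((e, β) ∈ M) → Fin N) :
    (∑ y : {β : Bool // ¬ ((e, β) ∈ M)} → Fin N,
      (if G.dval M N e A y false = G.dval M N e A y true
        then (((Real.sqrt N : ℝ)) : ℂ)⁻¹ else 0) *
      (if G.dval M N e A' y false = G.dval M N e A' y true
        then (((Real.sqrt N : ℝ)) : ℂ)⁻¹ else 0))
      = G.TvalG M N e A A' := by
  have hκ2 : ((((Real.sqrt N : ℝ)) : ℂ))⁻¹ * ((((Real.sqrt N : ℝ)) : ℂ))⁻¹ = ((N : ℂ))⁻¹ := by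
    rw [← mul_inv, ← Complex.ofReal_mul, Real.mul_self_sqrt (Nat.cast_nonneg N),
      Complex.ofReal_natCast]
  have hNne : ((N : ℂ)) ≠ 0 := by
    exact_mod_cast Nat.cast_ne_zero.mpr (by omega)
  by_cases m0 : (e, false) ∈ M <;> by_cases m1 : (e, true) ∈ M
  · -- both marked: empty domain
    rw [sum_fun_none (fun h : G.Half => ¬ (h ∈ M)) (not_not_intro m0) (not_not_intro m1)]
    simp only [dval, dif_pos m0, dif_pos m1, TvalG]
    by_cases h1 : A false m0 = A true m1 <;> by_cases h2 : A' false m0 = A' true m1 <;>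
      simp [h1, h2, hκ2]
  · -- false marked, true unmarked
    have hstep : ∀ y : {β : Bool // ¬ ((e, β) ∈ M)} → Fin N,
        (if G.dval M N e A y false = G.dval M N e A y true
          then (((Real.sqrt N : ℝ)) : ℂ)⁻¹ else 0) *
        (if G.dval M N e A' y false = G.dval M N e A' y true
          then (((Real.sqrt N : ℝ)) : ℂ)⁻¹ else 0)
        = (fun v => (if A false m0 = v then (((Real.sqrt N : ℝ)) : ℂ)⁻¹ else 0) *
            (if A' false m0 = v then (((Real.sqrt N : ℝ)) : ℂ)⁻¹ else 0)) (y ⟨true, m1⟩) := by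
      intro y
      simp only [dval, dif_pos m0, dif_neg m1]
    refine Eq.trans (Finset.sum_congr rfl (fun y _ => hstep y)) ?_
    refine Eq.trans (sum_fun_one (fun h : G.Half => ¬ (h ∈ M)) m1 (not_not_intro m0)
      (fun v => (if A false m0 = v then (((Real.sqrt N : ℝ)) : ℂ)⁻¹ else 0) *
        (if A' false m0 = v then (((Real.sqrt N : ℝ)) : ℂ)⁻¹ else 0))) ?_
    rw [sum_ite_pair, TvalG, dif_pos m0, dif_neg m1]
    by_cases h1 : A false m0 = A' false m0 <;> simp [h1, hκ2]
  · -- false unmarked, true marked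
    have hstep : ∀ y : {β : Bool // ¬ ((e, β) ∈ M)} → Fin N,
        (if G.dval M N e A y false = G.dval M N e A y true
          then (((Real.sqrt N : ℝ)) : ℂ)⁻¹ else 0) *
        (if G.dval M N e A' y false = G.dval M N e A' y true
          then (((Real.sqrt N : ℝ)) : ℂ)⁻¹ else 0)
        = (fun v => (if A true m1 = v then (((Real.sqrt N : ℝ)) : ℂ)⁻¹ else 0) *
            (if A' true m1 = v then (((Real.sqrt N : ℝ)) : ℂ)⁻¹ else 0)) (y ⟨false, m0⟩) := by
      intro y
      simp only [dval, dif_pos m1, dif_neg m0]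
      exact congrArg₂ (· * ·) (if_congr eq_comm rfl rfl) (if_congr eq_comm rfl rfl)
    refine Eq.trans (Finset.sum_congr rfl (fun y _ => hstep y)) ?_
    refine Eq.trans (sum_fun_one (fun h : G.Half => ¬ (h ∈ M)) m0 (not_not_intro m1)
      (fun v => (if A true m1 = v then (((Real.sqrt N : ℝ)) : ℂ)⁻¹ else 0) *
        (if A' true m1 = v then (((Real.sqrt N : ℝ)) : ℂ)⁻¹ else 0))) ?_
    rw [sum_ite_pair, TvalG, dif_neg m0, dif_pos m1]
    by_cases h1 : A true m1 = A' true m1 <;> simp [h1, hκ2]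
  · -- both unmarked
    have hstep : ∀ y : {β : Bool // ¬ ((e, β) ∈ M)} → Fin N,
        (if G.dval M N e A y false = G.dval M N e A y true
          then (((Real.sqrt N : ℝ)) : ℂ)⁻¹ else 0) *
        (if G.dval M N e A' y false = G.dval M N e A' y true
          then (((Real.sqrt N : ℝ)) : ℂ)⁻¹ else 0)
        = (fun z w => (if z = w then (((Real.sqrt N : ℝ)) : ℂ)⁻¹ else 0) *
            (if z = w then (((Real.sqrt N : ℝ)) : ℂ)⁻¹ else 0)) (y ⟨false, m0⟩) (y ⟨true, m1⟩) := by
      intro y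
      simp only [dval, dif_neg m0, dif_neg m1]
    refine Eq.trans (Finset.sum_congr rfl (fun y _ => hstep y)) ?_
    refine Eq.trans (sum_fun_both (fun h : G.Half => ¬ (h ∈ M)) m0 m1
      (fun z w => (if z = w then (((Real.sqrt N : ℝ)) : ℂ)⁻¹ else 0) *
        (if z = w then (((Real.sqrt N : ℝ)) : ℂ)⁻¹ else 0))) ?_
    rw [show (∑ q : Fin N × Fin N,
        (fun z w => (if z = w then (((Real.sqrt N : ℝ)) : ℂ)⁻¹ else 0) *
          (if z = w then (((Real.sqrt N : ℝ)) : ℂ)⁻¹ else 0)) q.1 q.2)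
      = (N : ℂ) * ((((Real.sqrt N : ℝ)) : ℂ)⁻¹ * (((Real.sqrt N : ℝ)) : ℂ)⁻¹)
      from sum_ite_diag _, hκ2, mul_inv_cancel₀ hNne, TvalG, dif_neg m0, dif_neg m1]


lemma gmarg_herm (n : G.E → ℕ) (SS : Finset G.Half)
    (U : ∀ v : G.V, Matrix (G.VIdx n v) (G.VIdx n v) ℂ) :
    (G.gmarg n SS U).IsHermitian := by
  refine Matrix.IsHermitian.ext fun a a' => ?_
  show star (G.gmarg n SS U a' a) = G.gmarg n SS U a a'
  rw [gmarg, Matrix.of_apply, Matrix.of_apply, star_sum]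
  exact Finset.sum_congr rfl fun b _ => by rw [star_mul, star_star]

lemma gmarg_closed (hN : 1 ≤ N) (hpv : ∀ h, G.vertexOf (p h) = G.vertexOf h)
    (hpS : ∀ h, p h ∈ S ↔ h ∈ M)
    (a a' : (h : {h : G.Half // h ∈ S}) → Fin N) :
    G.gmarg (fun _ => N) S (G.permU N p hpv) a a'
      = ∏ e : G.E, G.TvalG M N e (fun β hm => a (G.sidx S M p hpS e β hm))
          (fun β hm => a' (G.sidx S M p hpS e β hm)) := by
  have hκstar : star ((((Real.sqrt N : ℝ)) : ℂ))⁻¹ = (((Real.sqrt N : ℝ)) : ℂ)⁻¹ := by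
    rw [star_inv₀]
    congr 1
    exact Complex.conj_ofReal _
  have expand : ∀ b : (h : {h : G.Half // h ∉ S}) → Fin N,
      G.gvec (fun _ => N) (G.permU N p hpv) (G.glue (fun _ => N) S a b)
        * star (G.gvec (fun _ => N) (G.permU N p hpv) (G.glue (fun _ => N) S a' b))
      = ∏ e : G.E,
          ((if G.glue (fun _ => N) S a b (p (e, false)) = G.glue (fun _ => N) S a b (p (e, true))
              then (((Real.sqrt N : ℝ)) : ℂ)⁻¹ else 0)
           * (if G.glue (fun _ => N) S a' b (p (e, false)) = G.glue (fun _ => N) S a' b (p (e, true))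
              then (((Real.sqrt N : ℝ)) : ℂ)⁻¹ else 0)) := by
    intro b
    rw [gvec_collapse G N p hpv, gvec_collapse G N p hpv, star_prod, ← Finset.prod_mul_distrib]
    refine Finset.prod_congr rfl fun e _ => ?_
    rw [apply_ite (star : ℂ → ℂ), star_zero, hκstar]
  rw [gmarg, Matrix.of_apply]
  rw [Finset.sum_congr rfl fun b _ => expand b]
  rw [← Equiv.sum_comp (G.bEquiv S M N p hpS) (fun b => ∏ e : G.E,
      ((if G.glue (fun _ => N) S a b (p (e, false)) = G.glue (fun _ => N) S a b (p (e, true))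
          then (((Real.sqrt N : ℝ)) : ℂ)⁻¹ else 0)
       * (if G.glue (fun _ => N) S a' b (p (e, false)) = G.glue (fun _ => N) S a' b (p (e, true))
          then (((Real.sqrt N : ℝ)) : ℂ)⁻¹ else 0)))]
  have hstep : ∀ c : (h : {h : G.Half // h ∉ M}) → Fin N,
      (∏ e : G.E,
        ((if G.glue (fun _ => N) S a (G.bEquiv S M N p hpS c) (p (e, false))
            = G.glue (fun _ => N) S a (G.bEquiv S M N p hpS c) (p (e, true))
            then (((Real.sqrt N : ℝ)) : ℂ)⁻¹ else 0)
         * (if G.glue (fun _ => N) S a' (G.bEquiv S M N p hpS c) (p (e, false))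
            = G.glue (fun _ => N) S a' (G.bEquiv S M N p hpS c) (p (e, true))
            then (((Real.sqrt N : ℝ)) : ℂ)⁻¹ else 0)))
      = ∏ e : G.E,
        ((if G.dval M N e (fun β hm => a (G.sidx S M p hpS e β hm))
              (fun β => c ⟨(e, β.1), β.2⟩) false
            = G.dval M N e (fun β hm => a (G.sidx S M p hpS e β hm))
              (fun β => c ⟨(e, β.1), β.2⟩) true
            then (((Real.sqrt N : ℝ)) : ℂ)⁻¹ else 0)
         * (if G.dval M N e (fun β hm => a' (G.sidx S M p hpS e β hm))
              (fun β => c ⟨(e, β.1), β.2⟩) false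
            = G.dval M N e (fun β hm => a' (G.sidx S M p hpS e β hm))
              (fun β => c ⟨(e, β.1), β.2⟩) true
            then (((Real.sqrt N : ℝ)) : ℂ)⁻¹ else 0)) := by
    intro c
    refine Finset.prod_congr rfl fun e _ => ?_
    rw [glue_perm G S M N p hpS a c e false, glue_perm G S M N p hpS a c e true,
      glue_perm G S M N p hpS a' c e false, glue_perm G S M N p hpS a' c e true]
    rfl
  rw [Finset.sum_congr rfl fun c _ => hstep c]
  exact Eq.trans (core_factor (fun h : G.Half => ¬ (h ∈ M))
    (fun e y =>
      (if G.dval M N e (fun β hm => a (G.sidx S M p hpS e β hm)) y false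
          = G.dval M N e (fun β hm => a (G.sidx S M p hpS e β hm)) y true
          then (((Real.sqrt N : ℝ)) : ℂ)⁻¹ else 0)
       * (if G.dval M N e (fun β hm => a' (G.sidx S M p hpS e β hm)) y false
          = G.dval M N e (fun β hm => a' (G.sidx S M p hpS e β hm)) y true
          then (((Real.sqrt N : ℝ)) : ℂ)⁻¹ else 0)))
    (Finset.prod_congr rfl fun e _ => G.edge_cf M N hN e _ _)

lemma edge_tr (hN : 1 ≤ N) (e : G.E) :
    (∑ z : {β : Bool // (e, β) ∈ M} → Fin N,
      G.TvalG M N e (fun β hm => z ⟨β, hm⟩) (fun β hm => z ⟨β, hm⟩)) = 1 := by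
  have hNne : ((N : ℂ)) ≠ 0 := by exact_mod_cast Nat.cast_ne_zero.mpr (by omega)
  by_cases m0 : (e, false) ∈ M <;> by_cases m1 : (e, true) ∈ M
  · have hstep : ∀ z : {β : Bool // (e, β) ∈ M} → Fin N,
        G.TvalG M N e (fun β hm => z ⟨β, hm⟩) (fun β hm => z ⟨β, hm⟩)
        = (fun zv w => (N : ℂ)⁻¹ * ((if zv = w then (1:ℂ) else 0) * (if zv = w then (1:ℂ) else 0)))
            (z ⟨false, m0⟩) (z ⟨true, m1⟩) := by
      intro z
      rw [TvalG, dif_pos m0, dif_pos m1]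
    rw [Finset.sum_congr rfl fun z _ => hstep z]
    rw [sum_fun_both (fun h : G.Half => h ∈ M) m0 m1
      (fun zv w => (N : ℂ)⁻¹ * ((if zv = w then (1:ℂ) else 0) * (if zv = w then (1:ℂ) else 0)))]
    rw [← Finset.mul_sum, sum_ite_diag (1 : ℂ)]
    field_simp
  · have hstep : ∀ z : {β : Bool // (e, β) ∈ M} → Fin N,
        G.TvalG M N e (fun β hm => z ⟨β, hm⟩) (fun β hm => z ⟨β, hm⟩)
        = (fun _ : Fin N => (N : ℂ)⁻¹) (z ⟨false, m0⟩) := by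
      intro z
      rw [TvalG, dif_pos m0, dif_neg m1, if_pos rfl, mul_one]
    rw [Finset.sum_congr rfl fun z _ => hstep z]
    rw [sum_fun_one (fun h : G.Half => h ∈ M) m0 (by simpa using m1) (fun _ : Fin N => (N : ℂ)⁻¹)]
    rw [Finset.sum_const, Finset.card_univ, Fintype.card_fin, nsmul_eq_mul,
      mul_inv_cancel₀ hNne]
  · have hstep : ∀ z : {β : Bool // (e, β) ∈ M} → Fin N,
        G.TvalG M N e (fun β hm => z ⟨β, hm⟩) (fun β hm => z ⟨β, hm⟩)
        = (fun _ : Fin N => (N : ℂ)⁻¹) (z ⟨true, m1⟩) := by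
      intro z
      rw [TvalG, dif_neg m0, dif_pos m1, if_pos rfl, mul_one]
    rw [Finset.sum_congr rfl fun z _ => hstep z]
    rw [sum_fun_one (fun h : G.Half => h ∈ M) m1 (by simpa using m0) (fun _ : Fin N => (N : ℂ)⁻¹)]
    rw [Finset.sum_const, Finset.card_univ, Fintype.card_fin, nsmul_eq_mul,
      mul_inv_cancel₀ hNne]
  · rw [sum_fun_none (fun h : G.Half => h ∈ M) m0 m1]
    rw [TvalG, dif_neg m0, dif_neg m1]

lemma edge_sq (hN : 1 ≤ N) (e : G.E) (A A' : (β : Bool) → ((e, β) ∈ M) → Fin N) :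
    (∑ z : {β : Bool // (e, β) ∈ M} → Fin N,
      G.TvalG M N e A (fun β hm => z ⟨β, hm⟩) * G.TvalG M N e (fun β hm => z ⟨β, hm⟩) A')
      = (if ((e, false) ∈ M ∧ (e, true) ∉ M) ∨ ((e, false) ∉ M ∧ (e, true) ∈ M)
          then (N : ℂ)⁻¹ else 1) * G.TvalG M N e A A' := by
  have hNne : ((N : ℂ)) ≠ 0 := by exact_mod_cast Nat.cast_ne_zero.mpr (by omega)
  by_cases m0 : (e, false) ∈ M <;> by_cases m1 : (e, true) ∈ M
  · -- both marked
    have hcp : ¬ (((e, false) ∈ M ∧ (e, true) ∉ M) ∨ ((e, false) ∉ M ∧ (e, true) ∈ M)) := by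
      simp [m0, m1]
    have hstep : ∀ z : {β : Bool // (e, β) ∈ M} → Fin N,
        G.TvalG M N e A (fun β hm => z ⟨β, hm⟩) * G.TvalG M N e (fun β hm => z ⟨β, hm⟩) A'
        = (fun zv w =>
            ((N : ℂ)⁻¹ * ((N : ℂ)⁻¹ * ((if A false m0 = A true m1 then (1:ℂ) else 0) *
              (if A' false m0 = A' true m1 then (1:ℂ) else 0)))) *
            ((if zv = w then (1:ℂ) else 0) * (if zv = w then (1:ℂ) else 0)))
            (z ⟨false, m0⟩) (z ⟨true, m1⟩) := by
      intro z
      rw [TvalG, dif_pos m0, dif_pos m1, TvalG, dif_pos m0, dif_pos m1]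
      ring
    rw [Finset.sum_congr rfl fun z _ => hstep z]
    rw [sum_fun_both (fun h : G.Half => h ∈ M) m0 m1
      (fun zv w =>
        ((N : ℂ)⁻¹ * ((N : ℂ)⁻¹ * ((if A false m0 = A true m1 then (1:ℂ) else 0) *
          (if A' false m0 = A' true m1 then (1:ℂ) else 0)))) *
        ((if zv = w then (1:ℂ) else 0) * (if zv = w then (1:ℂ) else 0)))]
    rw [← Finset.mul_sum, sum_ite_diag (1 : ℂ), if_neg hcp, TvalG, dif_pos m0, dif_pos m1]
    field_simp
  · -- cross, false marked
    have hcp : ((e, false) ∈ M ∧ (e, true) ∉ M) ∨ ((e, false) ∉ M ∧ (e, true) ∈ M) :=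
      Or.inl ⟨m0, m1⟩
    have hstep : ∀ z : {β : Bool // (e, β) ∈ M} → Fin N,
        G.TvalG M N e A (fun β hm => z ⟨β, hm⟩) * G.TvalG M N e (fun β hm => z ⟨β, hm⟩) A'
        = (fun v => ((N : ℂ)⁻¹ * (N : ℂ)⁻¹) *
            ((if A false m0 = v then (1:ℂ) else 0) * (if A' false m0 = v then (1:ℂ) else 0)))
            (z ⟨false, m0⟩) := by
      intro z
      rw [TvalG, dif_pos m0, dif_neg m1, TvalG, dif_pos m0, dif_neg m1]
      rw [if_congr (eq_comm : (z ⟨false, m0⟩ = A' false m0) ↔ (A' false m0 = z ⟨false, m0⟩)) rfl rfl]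
      ring
    rw [Finset.sum_congr rfl fun z _ => hstep z]
    rw [sum_fun_one (fun h : G.Half => h ∈ M) m0 (by simpa using m1)
      (fun v => ((N : ℂ)⁻¹ * (N : ℂ)⁻¹) *
        ((if A false m0 = v then (1:ℂ) else 0) * (if A' false m0 = v then (1:ℂ) else 0)))]
    rw [← Finset.mul_sum, sum_ite_pair, if_pos hcp, TvalG, dif_pos m0, dif_neg m1]
    by_cases h1 : A false m0 = A' false m0 <;> simp [h1] <;> try ring
  · -- cross, true marked
    have hcp : ((e, false) ∈ M ∧ (e, true) ∉ M) ∨ ((e, false) ∉ M ∧ (e, true) ∈ M) :=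
      Or.inr ⟨m0, m1⟩
    have hstep : ∀ z : {β : Bool // (e, β) ∈ M} → Fin N,
        G.TvalG M N e A (fun β hm => z ⟨β, hm⟩) * G.TvalG M N e (fun β hm => z ⟨β, hm⟩) A'
        = (fun v => ((N : ℂ)⁻¹ * (N : ℂ)⁻¹) *
            ((if A true m1 = v then (1:ℂ) else 0) * (if A' true m1 = v then (1:ℂ) else 0)))
            (z ⟨true, m1⟩) := by
      intro z
      rw [TvalG, dif_neg m0, dif_pos m1, TvalG, dif_neg m0, dif_pos m1]
      rw [if_congr (eq_comm : (z ⟨true, m1⟩ = A' true m1) ↔ (A' true m1 = z ⟨true, m1⟩)) rfl rfl]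
      ring
    rw [Finset.sum_congr rfl fun z _ => hstep z]
    rw [sum_fun_one (fun h : G.Half => h ∈ M) m1 (by simpa using m0)
      (fun v => ((N : ℂ)⁻¹ * (N : ℂ)⁻¹) *
        ((if A true m1 = v then (1:ℂ) else 0) * (if A' true m1 = v then (1:ℂ) else 0)))]
    rw [← Finset.mul_sum, sum_ite_pair, if_pos hcp, TvalG, dif_neg m0, dif_pos m1]
    by_cases h1 : A true m1 = A' true m1 <;> simp [h1] <;> try ring
  · -- both unmarked
    have hcp : ¬ (((e, false) ∈ M ∧ (e, true) ∉ M) ∨ ((e, false) ∉ M ∧ (e, true) ∈ M)) := by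
      simp [m0, m1]
    rw [sum_fun_none (fun h : G.Half => h ∈ M) m0 m1]
    rw [TvalG, dif_neg m0, dif_neg m1, TvalG, dif_neg m0, dif_neg m1,
      TvalG, dif_neg m0, dif_neg m1, if_neg hcp]


lemma gmarg_trace (hN : 1 ≤ N) (hpv : ∀ h, G.vertexOf (p h) = G.vertexOf h)
    (hpS : ∀ h, p h ∈ S ↔ h ∈ M) :
    (G.gmarg (fun _ => N) S (G.permU N p hpv)).trace = 1 := by
  rw [Matrix.trace]
  have h1 : ∀ a : (h : {h : G.Half // h ∈ S}) → Fin N,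
      (G.gmarg (fun _ => N) S (G.permU N p hpv)).diag a
        = ∏ e : G.E, G.TvalG M N e (fun β hm => a (G.sidx S M p hpS e β hm))
            (fun β hm => a (G.sidx S M p hpS e β hm)) :=
    fun a => G.gmarg_closed S M N p hN hpv hpS a a
  rw [Finset.sum_congr rfl fun a _ => h1 a]
  rw [← Equiv.sum_comp (G.aEquiv S M N p hpS) (fun a =>
    ∏ e : G.E, G.TvalG M N e (fun β hm => a (G.sidx S M p hpS e β hm))
      (fun β hm => a (G.sidx S M p hpS e β hm)))]
  have h2 : ∀ u : (h : {h : G.Half // h ∈ M}) → Fin N,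
      (∏ e : G.E, G.TvalG M N e
          (fun β hm => G.aEquiv S M N p hpS u (G.sidx S M p hpS e β hm))
          (fun β hm => G.aEquiv S M N p hpS u (G.sidx S M p hpS e β hm)))
        = ∏ e : G.E, G.TvalG M N e (fun β hm => u ⟨(e, β), hm⟩) (fun β hm => u ⟨(e, β), hm⟩) := by
    intro u
    refine Finset.prod_congr rfl fun e _ => ?_
    have harg : (fun β (hm : (e, β) ∈ M) => G.aEquiv S M N p hpS u (G.sidx S M p hpS e β hm))
        = fun β (hm : (e, β) ∈ M) => u ⟨(e, β), hm⟩ :=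
      funext fun β => funext fun hm => G.aEquiv_sidx S M N p hpS u e β hm
    rw [harg]
  rw [Finset.sum_congr rfl fun u _ => h2 u]
  exact Eq.trans (core_factor_mem M
    (fun e z => G.TvalG M N e (fun β hm => z ⟨β, hm⟩) (fun β hm => z ⟨β, hm⟩)))
    (by rw [Finset.prod_congr rfl fun e _ => G.edge_tr M N hN e, Finset.prod_const_one])

lemma gmarg_sq (hN : 1 ≤ N) (hpv : ∀ h, G.vertexOf (p h) = G.vertexOf h)
    (hpS : ∀ h, p h ∈ S ↔ h ∈ M) :
    G.gmarg (fun _ => N) S (G.permU N p hpv) * G.gmarg (fun _ => N) S (G.permU N p hpv)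
      = (((N : ℂ)) ^ (G.cr M))⁻¹ • G.gmarg (fun _ => N) S (G.permU N p hpv) := by
  ext a a'
  rw [Matrix.mul_apply, Matrix.smul_apply]
  have hcl := G.gmarg_closed S M N p hN hpv hpS
  rw [Finset.sum_congr rfl fun a'' _ => by rw [hcl a a'', hcl a'' a', ← Finset.prod_mul_distrib]]
  rw [← Equiv.sum_comp (G.aEquiv S M N p hpS) (fun a'' =>
    ∏ e : G.E, G.TvalG M N e (fun β hm => a (G.sidx S M p hpS e β hm))
        (fun β hm => a'' (G.sidx S M p hpS e β hm))
      * G.TvalG M N e (fun β hm => a'' (G.sidx S M p hpS e β hm))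
        (fun β hm => a' (G.sidx S M p hpS e β hm)))]
  have h2 : ∀ u : (h : {h : G.Half // h ∈ M}) → Fin N,
      (∏ e : G.E, G.TvalG M N e (fun β hm => a (G.sidx S M p hpS e β hm))
          (fun β hm => G.aEquiv S M N p hpS u (G.sidx S M p hpS e β hm))
        * G.TvalG M N e (fun β hm => G.aEquiv S M N p hpS u (G.sidx S M p hpS e β hm))
          (fun β hm => a' (G.sidx S M p hpS e β hm)))
      = ∏ e : G.E, G.TvalG M N e (fun β hm => a (G.sidx S M p hpS e β hm))
          (fun β hm => u ⟨(e, β), hm⟩)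
        * G.TvalG M N e (fun β hm => u ⟨(e, β), hm⟩)
          (fun β hm => a' (G.sidx S M p hpS e β hm)) := by
    intro u
    refine Finset.prod_congr rfl fun e _ => ?_
    have harg : (fun β (hm : (e, β) ∈ M) => G.aEquiv S M N p hpS u (G.sidx S M p hpS e β hm))
        = fun β (hm : (e, β) ∈ M) => u ⟨(e, β), hm⟩ :=
      funext fun β => funext fun hm => G.aEquiv_sidx S M N p hpS u e β hm
    rw [harg]
  rw [Finset.sum_congr rfl fun u _ => h2 u]
  refine Eq.trans (core_factor_mem M
    (fun e z => G.TvalG M N e (fun β hm => a (G.sidx S M p hpS e β hm))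
        (fun β hm => z ⟨β, hm⟩)
      * G.TvalG M N e (fun β hm => z ⟨β, hm⟩)
        (fun β hm => a' (G.sidx S M p hpS e β hm)))) ?_
  rw [Finset.prod_congr rfl fun e _ => G.edge_sq M N hN e _ _]
  rw [Finset.prod_mul_distrib, hcl a a']
  congr 1
  have hcount : (Finset.univ.filter fun e : G.E =>
      ((e, false) ∈ M ∧ (e, true) ∉ M) ∨ ((e, false) ∉ M ∧ (e, true) ∈ M)).card = G.cr M := rfl
  rw [Finset.prod_ite (fun _ => ((N : ℂ))⁻¹) (fun _ => (1 : ℂ)), Finset.prod_const,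
    Finset.prod_const_one, mul_one, inv_pow, hcount]

end Multigraph

section Abs
open Matrix
variable {ι : Type} [Fintype ι] [DecidableEq ι]

lemma trace_eq_sum_eig (A : Matrix ι ι ℂ) (hA : A.IsHermitian) :
    A.trace = ∑ i, (hA.eigenvalues i : ℂ) := by
  conv_lhs => rw [hA.spectral_theorem, Unitary.conjStarAlgAut_apply]
  rw [Matrix.trace_mul_cycle]
  have h1 : (star (hA.eigenvectorUnitary : Matrix ι ι ℂ)) * (hA.eigenvectorUnitary : Matrix ι ι ℂ) = 1 :=
    Matrix.mem_unitaryGroup_iff'.mp (hA.eigenvectorUnitary).2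
  rw [h1, Matrix.one_mul, Matrix.trace_diagonal]
  rfl

lemma eig_dichotomy (A : Matrix ι ι ℂ) (hA : A.IsHermitian) (c : ℝ)
    (h : A * A = (c : ℂ) • A) (i : ι) :
    hA.eigenvalues i = 0 ∨ hA.eigenvalues i = c := by
  have hnz : (⇑(hA.eigenvectorBasis i) : ι → ℂ) ≠ 0 :=
    fun h => hA.eigenvectorBasis.orthonormal.ne_zero i (by simpa using h)
  have hv : A *ᵥ ⇑(hA.eigenvectorBasis i)
      = ((hA.eigenvalues i : ℂ)) • ⇑(hA.eigenvectorBasis i) := by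
    rw [hA.mulVec_eigenvectorBasis]
    exact RCLike.real_smul_eq_coe_smul (K := ℂ) _ _
  have h2 : (A * A) *ᵥ ⇑(hA.eigenvectorBasis i)
      = ((hA.eigenvalues i : ℂ) * (hA.eigenvalues i : ℂ)) • ⇑(hA.eigenvectorBasis i) := by
    rw [← Matrix.mulVec_mulVec, hv, Matrix.mulVec_smul, hv, smul_smul]
  have h3 : (A * A) *ᵥ ⇑(hA.eigenvectorBasis i)
      = ((c : ℂ) * (hA.eigenvalues i : ℂ)) • ⇑(hA.eigenvectorBasis i) := by
    rw [h, Matrix.smul_mulVec, hv, smul_smul]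
  rw [h2] at h3
  have h4 : (((hA.eigenvalues i : ℂ) * (hA.eigenvalues i : ℂ)) - ((c : ℂ) * (hA.eigenvalues i : ℂ))) •
      (⇑(hA.eigenvectorBasis i) : ι → ℂ) = 0 := by
    rw [sub_smul, h3, sub_self]
  rcases smul_eq_zero.mp h4 with h5 | h5
  · have h6 : (hA.eigenvalues i : ℂ) * ((hA.eigenvalues i : ℂ) - (c : ℂ)) = 0 := by
      rw [sub_eq_zero] at h5; ring_nf; ring_nf at h5; rw [h5]; ring
    rcases mul_eq_zero.mp h6 with h7 | h7
    · exact Or.inl (by exact_mod_cast h7)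
    · exact Or.inr (by have := sub_eq_zero.mp h7; exact_mod_cast this)
  · exact absurd h5 hnz

end Abs

section Abs2
open Matrix
variable {ι : Type} [Fintype ι] [DecidableEq ι]

lemma abs_main (ρ : Matrix ι ι ℂ) (X N : ℕ) (hN : 1 ≤ N) (hherm : ρ.IsHermitian)
    (hsq : ρ * ρ = (((N : ℂ)) ^ X)⁻¹ • ρ) (htr : ρ.trace = 1) :
    ∃ P : Matrix ι ι ℂ, P.IsHermitian ∧ P * P = P ∧ P.rank = N ^ X ∧
      ρ = (((N : ℂ)) ^ X)⁻¹ • P ∧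
      vnEntropy ρ = (X : ℝ) * Real.log N ∧
      ∀ q : ℝ, 0 ≤ q → q ≠ 1 → renyiEntropy q ρ = (X : ℝ) * Real.log N := by
  have hN0 : (0 : ℝ) < (N : ℝ) := by exact_mod_cast hN
  have hNX : (0 : ℝ) < ((N : ℝ) ^ X) := pow_pos hN0 X
  set cr : ℝ := ((N : ℝ) ^ X)⁻¹ with hcr
  have hcrpos : 0 < cr := inv_pos.mpr hNX
  have hcC : ((cr : ℂ)) = (((N : ℂ)) ^ X)⁻¹ := by push_cast [hcr]; ring
  -- dichotomy for ρ
  have hdich : ∀ i, hherm.eigenvalues i = 0 ∨ hherm.eigenvalues i = cr := by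
    intro i
    exact eig_dichotomy ρ hherm cr (by rw [hcC]; exact hsq) i
  -- sum of eigenvalues is 1
  have hsum : ∑ i, hherm.eigenvalues i = 1 := by
    have := trace_eq_sum_eig ρ hherm
    rw [htr] at this
    have h2 : ((∑ i, hherm.eigenvalues i : ℝ) : ℂ) = 1 := by push_cast; rw [← this]
    exact_mod_cast h2
  -- counting nonzero eigenvalues
  set F : Finset ι := Finset.univ.filter (fun i => hherm.eigenvalues i ≠ 0) with hF
  have hmemF : ∀ i ∈ F, hherm.eigenvalues i = cr := by
    intro i hi
    rcases hdich i with h | h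
    · exact absurd h (by simpa [hF] using hi)
    · exact h
  have hsumF : ∑ i, hherm.eigenvalues i = (F.card : ℝ) * cr := by
    rw [← Finset.sum_filter_of_ne (fun i _ hne => by simpa [hF] using hne), ← hF]
    rw [Finset.sum_congr rfl hmemF, Finset.sum_const, nsmul_eq_mul]
  have hKcr : (F.card : ℝ) * cr = 1 := by rw [← hsumF, hsum]
  have hKval : (F.card : ℝ) = (N : ℝ) ^ X := by
    rw [hcr, ← div_eq_mul_inv, div_eq_one_iff_eq hNX.ne'] at hKcr
    exact hKcr
  have hK : F.card = N ^ X := by exact_mod_cast hKval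
  have hNXne : ((N : ℂ)) ^ X ≠ 0 := by
    apply pow_ne_zero
    exact_mod_cast hN0.ne'
  -- the projection
  refine ⟨(((N : ℂ)) ^ X) • ρ, ?_, ?_, ?_, ?_, ?_, ?_⟩
  · unfold Matrix.IsHermitian
    rw [Matrix.conjTranspose_smul, hherm.eq]
    congr 1
    simp
  · rw [Matrix.smul_mul, Matrix.mul_smul, hsq, smul_smul, smul_smul,
      mul_inv_cancel_right₀ hNXne]
  · -- rank
    have hPherm : ((((N : ℂ)) ^ X) • ρ).IsHermitian := by
      unfold Matrix.IsHermitian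
      rw [Matrix.conjTranspose_smul, hherm.eq]
      congr 1
      simp
    have hPsq : ((((N : ℂ)) ^ X) • ρ) * ((((N : ℂ)) ^ X) • ρ) = ((1 : ℝ) : ℂ) • ((((N : ℂ)) ^ X) • ρ) := by
      rw [Matrix.smul_mul, Matrix.mul_smul, hsq, smul_smul, smul_smul,
        mul_inv_cancel_right₀ hNXne]
      norm_num
    have hPdich := fun i => eig_dichotomy _ hPherm 1 hPsq i
    have hPtr : ((((N : ℂ)) ^ X) • ρ).trace = ((N : ℂ)) ^ X := by
      rw [Matrix.trace_smul, htr, smul_eq_mul, mul_one]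
    have hPsum : ∑ i, hPherm.eigenvalues i = (N : ℝ) ^ X := by
      have := trace_eq_sum_eig _ hPherm
      rw [hPtr] at this
      have h2 : ((∑ i, hPherm.eigenvalues i : ℝ) : ℂ) = (((N : ℝ) ^ X : ℝ) : ℂ) := by
        push_cast
        rw [← this]
      exact_mod_cast h2
    set FP : Finset ι := Finset.univ.filter (fun i => hPherm.eigenvalues i ≠ 0) with hFP
    have hPsumF : ∑ i, hPherm.eigenvalues i = (FP.card : ℝ) := by
      rw [← Finset.sum_filter_of_ne (fun i _ hne => by simpa [hFP] using hne), ← hFP]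
      rw [Finset.sum_congr rfl (fun i hi => by
        rcases hPdich i with h | h
        · exact absurd h (by simpa [hFP] using hi)
        · exact h), Finset.sum_const, nsmul_eq_mul, mul_one]
    have hFPcard : (FP.card : ℝ) = (N : ℝ) ^ X := by rw [← hPsumF, hPsum]
    rw [hPherm.rank_eq_card_non_zero_eigs]
    have : Fintype.card {i // hPherm.eigenvalues i ≠ 0} = FP.card := by
      rw [Fintype.card_subtype, hFP]
    rw [this]
    exact_mod_cast hFPcard
  · rw [inv_smul_smul₀ hNXne]
  · -- von Neumann entropy
    rw [vnEntropy, dif_pos hherm]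
    have h1 : ∑ i, hherm.eigenvalues i * Real.log (hherm.eigenvalues i)
        = ∑ i ∈ F, hherm.eigenvalues i * Real.log (hherm.eigenvalues i) := by
      rw [Finset.sum_filter_of_ne]
      intro i _ hne h0
      rw [h0] at hne
      simp at hne
    have hlogcr : Real.log cr = -((X : ℝ) * Real.log N) := by
      rw [hcr, Real.log_inv, Real.log_pow]
    rw [h1, Finset.sum_congr rfl (fun i hi => by rw [hmemF i hi]), Finset.sum_const,
      nsmul_eq_mul, hlogcr]
    have : (F.card : ℝ) * (cr * -((X : ℝ) * Real.log N))
        = -(((F.card : ℝ) * cr) * ((X : ℝ) * Real.log N)) := by ring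
    rw [this, hKcr, one_mul, neg_neg]
  · -- Rényi entropy
    intro q _ hq1
    rw [renyiEntropy, dif_pos hherm]
    have h1 : ∑ i, (if hherm.eigenvalues i = 0 then (0 : ℝ) else hherm.eigenvalues i ^ q)
        = ∑ i ∈ F, (if hherm.eigenvalues i = 0 then (0 : ℝ) else hherm.eigenvalues i ^ q) := by
      rw [Finset.sum_filter_of_ne]
      intro i _ hne h0
      rw [if_pos h0] at hne
      exact hne rfl
    have h2 : ∑ i ∈ F, (if hherm.eigenvalues i = 0 then (0 : ℝ) else hherm.eigenvalues i ^ q)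
        = (F.card : ℝ) * cr ^ q := by
      rw [Finset.sum_congr rfl (fun i hi => by
        rw [hmemF i hi, if_neg hcrpos.ne']), Finset.sum_const, nsmul_eq_mul]
    rw [h1, h2]
    have hFpos : (0 : ℝ) < (F.card : ℝ) := by rw [hKval]; exact hNX
    have hcrq : (0 : ℝ) < cr ^ q := Real.rpow_pos_of_pos hcrpos q
    rw [Real.log_mul hFpos.ne' hcrq.ne', Real.log_rpow hcrpos]
    have hlogcr : Real.log cr = -((X : ℝ) * Real.log N) := by
      rw [hcr, Real.log_inv, Real.log_pow]
    have hlogK : Real.log (F.card : ℝ) = (X : ℝ) * Real.log N := by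
      rw [hKval, Real.log_pow]
    rw [hlogK, hlogcr]
    have hq1' : (1 : ℝ) - q ≠ 0 := sub_ne_zero.mpr (Ne.symm hq1)
    field_simp
    ring

end Abs2


/-- With every half-edge carrying `ℂ^N`, there are permutation
matrices `U_v` at the vertices such that the graph state marginal is
`ρ_S = N^{-X} P` for an orthogonal projection `P` of rank `N^X`, where `X = |∂S|`;
consequently `H(ρ_S) = X ln N` and every Rényi entropy
`H_q(ρ_S) = (1-q)⁻¹ ln Tr(ρ_S^q)` (for `q ≥ 0`, `q ≠ 1`) also equals `X ln N`. -/
theorem permutation_unitaries_projection (G : Multigraph) (S : Finset G.Half)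
    (N : ℕ) (hN : 1 ≤ N) :
    ∃ U : ∀ v : G.V, Matrix (G.VIdx (fun _ => N) v) (G.VIdx (fun _ => N) v) ℂ,
      (∀ v : G.V, ∃ σ : Equiv.Perm (G.VIdx (fun _ => N) v),
        U v = Matrix.of fun i j => if i = σ j then 1 else 0) ∧
      (∀ v : G.V, U v ∈ Matrix.unitaryGroup (G.VIdx (fun _ => N) v) ℂ) ∧
      ∃ P : Matrix ((h : {h : G.Half // h ∈ S}) → Fin N)
          ((h : {h : G.Half // h ∈ S}) → Fin N) ℂ,
        P.IsHermitian ∧ P * P = P ∧ P.rank = N ^ G.area (G.countOf S) ∧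
        G.gmarg (fun _ => N) S U = (((N : ℂ)) ^ G.area (G.countOf S))⁻¹ • P ∧
        vnEntropy (G.gmarg (fun _ => N) S U) =
          (G.area (G.countOf S) : ℝ) * Real.log N ∧
        ∀ q : ℝ, 0 ≤ q → q ≠ 1 →
          renyiEntropy q (G.gmarg (fun _ => N) S U) =
            (G.area (G.countOf S) : ℝ) * Real.log N := by
  obtain ⟨M, hcomp, hcrM⟩ := G.area_attained S
  obtain ⟨p, hpv, hpS⟩ := G.exists_good_perm S M hcomp
  refine ⟨G.permU N p hpv, fun v => ⟨G.sigmaV N p hpv v, rfl⟩,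
    fun v => permMatrix_unitary _, ?_⟩
  have hherm := G.gmarg_herm (fun _ => N) S (G.permU N p hpv)
  have htr := G.gmarg_trace S M N p hN hpv hpS
  have hsq := G.gmarg_sq S M N p hN hpv hpS
  rw [← hcrM]
  obtain ⟨P, h1, h2, h3, h4, h5, h6⟩ :=
    abs_main (G.gmarg (fun _ => N) S (G.permU N p hpv)) (G.cr M) N hN hherm hsq htr
  exact ⟨P, h1, h2, h3, h4, h5, h6⟩
end
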